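/- arXiv:2102.11226 — 8 statements merged into one kernel-verified Lean document; each statement's English description precedes it below -/
import Mathlib

section
/- Let X be a normed plane (two-dimensional real normed space) with unit sphere S_X, let x ∈ S_X, and let γ_x : ℝ → S_X be the arc-length (natural) parameterization of S_X with γ_x(0) = x. If y is a one-sided derivative of γ_x at 0 (i.e., y = lim_{t→0+} (γ_x(t) − x)/t or the corresponding left limit), then x is Birkhoff orthogonal to y, that is, ‖x + λy‖ ≥ ‖x‖ for every λ ∈ ℝ. -/
open Filter

private lemma aux_norm_bound {X : Type*} [NormedAddCommGroup X] [NormedSpace ℝ X]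
    (x z : X) (hx : ‖x‖ = 1) (hz : ‖z‖ = 1) (s : ℝ) (hs : 1 < |s|) :
    1 ≤ ‖x + s • (z - x)‖ := by
  have h1 : x + s • (z - x) = s • z - (s - 1) • x := by
    rw [smul_sub, sub_smul, one_smul]; abel
  rw [h1]
  have h2 : |‖s • z‖ - ‖(s - 1) • x‖| ≤ ‖s • z - (s - 1) • x‖ := abs_norm_sub_norm_le _ _
  have h3 : ‖s • z‖ = |s| := by rw [norm_smul, hz, Real.norm_eq_abs, mul_one]
  have h4 : ‖(s - 1) • x‖ = |s - 1| := by rw [norm_smul, hx, Real.norm_eq_abs, mul_one]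
  rw [h3, h4] at h2
  refine le_trans ?_ h2
  rcases le_or_gt 0 s with h | h
  · have hs1 : 1 < s := by rwa [abs_of_nonneg h] at hs
    rw [abs_of_pos (by linarith : (0:ℝ) < s - 1)]
    simp [abs_of_pos (by linarith : (0:ℝ) < s)]
  · have hs1 : s < -1 := by rw [abs_of_neg h] at hs; linarith
    rw [abs_of_neg (by linarith : s - 1 < 0), abs_of_neg h]
    rw [show -s - -(s - 1) = (-1 : ℝ) by ring]
    simp

private lemma aux_main {X : Type*} [NormedAddCommGroup X] [NormedSpace ℝ X]
    (x y : X) (hx : ‖x‖ = 1) (γ : ℝ → X) (hγsph : ∀ t, ‖γ t‖ = 1)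
    (F : Filter ℝ) [F.NeBot] (hF : F ≤ nhdsWithin 0 {(0:ℝ)}ᶜ)
    (hy : Tendsto (fun t : ℝ => t⁻¹ • (γ t - x)) F (nhds y)) :
    ∀ l : ℝ, 1 ≤ ‖x + l • y‖ := by
  intro l
  rcases eq_or_ne l 0 with rfl | hl
  · simp [hx]
  have htend : Tendsto (fun t : ℝ => ‖x + l • (t⁻¹ • (γ t - x))‖) F (nhds ‖x + l • y‖) :=
    ((hy.const_smul l).const_add x).norm
  refine ge_of_tendsto htend ?_
  have h1 : ∀ᶠ t : ℝ in F, t ≠ 0 := hF self_mem_nhdsWithin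
  have h2 : ∀ᶠ t : ℝ in F, |t| < |l| := by
    apply hF.trans nhdsWithin_le_nhds
    have : {t : ℝ | |t| < |l|} ∈ nhds (0:ℝ) := by
      apply (isOpen_lt (continuous_abs) continuous_const).mem_nhds
      simp [abs_pos.mpr hl]
    exact this
  filter_upwards [h1, h2] with t ht hlt
  have ht' : (0:ℝ) < |t| := abs_pos.mpr ht
  rw [smul_smul]
  apply aux_norm_bound x (γ t) hx (hγsph t)
  rw [abs_mul, abs_inv]
  rw [← div_eq_mul_inv]
  exact (one_lt_div ht').mpr hlt

/-- Lemma of J. Alonso. Let `X` be a two-dimensional real normed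
space, `x` a point of its unit sphere, and `γ` the natural (arc-length) parameterization
of the unit sphere with `γ 0 = x`. If `y` is a one-sided derivative of `γ` at `0`
(a right or a left limit of the difference quotients), then `x` is Birkhoff orthogonal
to `y`, i.e. `‖x + λ • y‖ ≥ ‖x‖` for every `λ : ℝ`. -/
theorem stmt0 {X : Type*} [NormedAddCommGroup X] [NormedSpace ℝ X]
    (hdim : Module.finrank ℝ X = 2)
    (x y : X) (hx : ‖x‖ = 1)
    (γ : ℝ → X) (hγsph : ∀ t, ‖γ t‖ = 1) (hγ0 : γ 0 = x)
    (hy : Filter.Tendsto (fun t : ℝ => t⁻¹ • (γ t - x)) (nhdsWithin 0 (Set.Ioi 0)) (nhds y) ∨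
          Filter.Tendsto (fun t : ℝ => t⁻¹ • (γ t - x)) (nhdsWithin 0 (Set.Iio 0)) (nhds y)) :
    ∀ l : ℝ, ‖x + l • y‖ ≥ ‖x‖ := by
  intro l
  rw [hx]
  rcases hy with hy | hy
  · exact aux_main x y hx γ hγsph (nhdsWithin 0 (Set.Ioi 0))
      (nhdsWithin_mono _ (fun t ht => ne_of_gt ht)) hy l
  · exact aux_main x y hx γ hγsph (nhdsWithin 0 (Set.Iio 0))
      (nhdsWithin_mono _ (fun t ht => ne_of_lt ht)) hy l
end

section
/- Let X be a finite-dimensional normed space and x ∈ S_X. The norm ‖·‖ fails to be (Gâteaux) differentiable at x if and only if there exist δ, ε₀ > 0 such that for every ε with 0 < ε < ε₀ there exist u, v ∈ S_X \ {x, −x} satisfying max{‖u − x‖, ‖v + x‖} ≤ ε and ‖u − v‖ ≤ 2 − δε. -/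
open Set Filter Topology

namespace Stmt1Aux

variable {X : Type*} [NormedAddCommGroup X] [NormedSpace ℝ X]

/-- difference quotient of the norm at `x` in direction `y`. -/
noncomputable def q (x y : X) (t : ℝ) : ℝ := (‖x + t • y‖ - 1) / t

lemma q_mono (x : X) (hx : ‖x‖ = 1) (y : X) : MonotoneOn (q x y) (Ioi (0:ℝ)) := by
  rintro s (hs : (0:ℝ) < s) t (ht : (0:ℝ) < t) hst
  have h1 : x + s • y = (s/t) • (x + t • y) + (1 - s/t) • x := by
    match_scalars <;> field_simp <;> ring
  have h2 : ‖x + s • y‖ ≤ (s/t) * ‖x + t • y‖ + (1 - s/t) := by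
    calc ‖x + s • y‖ ≤ ‖(s/t) • (x + t • y)‖ + ‖(1 - s/t) • x‖ := by rw [h1]; exact norm_add_le _ _
    _ = (s/t) * ‖x + t • y‖ + (1 - s/t) := by
        rw [norm_smul, norm_smul, hx, Real.norm_eq_abs, Real.norm_eq_abs,
          abs_of_nonneg (by positivity), abs_of_nonneg (by
            rw [sub_nonneg]; exact (div_le_one ht).2 hst), mul_one]
  have h3 : t * ‖x + s • y‖ ≤ s * ‖x + t • y‖ + (t - s) := by
    have h4 := mul_le_mul_of_nonneg_right h2 ht.le
    field_simp at h4
    linarith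
  rw [q, q, div_le_div_iff₀ hs ht]
  nlinarith

lemma q_le (x : X) (hx : ‖x‖ = 1) (y : X) {t : ℝ} (ht : 0 < t) : q x y t ≤ ‖y‖ := by
  rw [q, div_le_iff₀ ht]
  have := norm_add_le x (t • y)
  rw [hx, norm_smul, Real.norm_eq_abs, abs_of_pos ht] at this
  nlinarith

lemma le_q (x : X) (hx : ‖x‖ = 1) (y : X) {t : ℝ} (ht : 0 < t) : -‖y‖ ≤ q x y t := by
  rw [q, le_div_iff₀ ht]
  have h5 := norm_add_le (x + t • y) (-(t • y))
  simp only [add_neg_cancel_right, hx, norm_neg, norm_smul, Real.norm_eq_abs, abs_of_pos ht] at h5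
  nlinarith

/-- one-sided directional derivative of the norm at `x`. -/
noncomputable def phi (x y : X) : ℝ := sInf (q x y '' Ioi 0)

lemma phi_bddBelow (x : X) (hx : ‖x‖ = 1) (y : X) : BddBelow (q x y '' Ioi 0) := by
  refine ⟨-‖y‖, ?_⟩
  rintro z ⟨t, ht, rfl⟩
  exact le_q x hx y ht

lemma phi_le_q (x : X) (hx : ‖x‖ = 1) (y : X) {t : ℝ} (ht : 0 < t) : phi x y ≤ q x y t :=
  csInf_le (phi_bddBelow x hx y) ⟨t, ht, rfl⟩

lemma neg_norm_le_phi (x : X) (hx : ‖x‖ = 1) (y : X) : -‖y‖ ≤ phi x y :=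
  le_csInf ⟨q x y 1, ⟨1, by norm_num, rfl⟩⟩ (by rintro z ⟨t, ht, rfl⟩; exact le_q x hx y ht)

lemma phi_le_norm (x : X) (hx : ‖x‖ = 1) (y : X) : phi x y ≤ ‖y‖ :=
  (phi_le_q x hx y one_pos).trans (q_le x hx y one_pos)

lemma phi_tendsto (x : X) (hx : ‖x‖ = 1) (y : X) :
    Tendsto (q x y) (𝓝[>] 0) (𝓝 (phi x y)) :=
  (q_mono x hx y).tendsto_nhdsGT (phi_bddBelow x hx y)


lemma tendsto_mul_pos {c : ℝ} (hc : 0 < c) :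
    Tendsto (fun t : ℝ => c * t) (𝓝[>] 0) (𝓝[>] 0) := by
  refine tendsto_nhdsWithin_of_tendsto_nhds_of_eventually_within _ ?_ ?_
  · have h : Tendsto (fun t : ℝ => c * t) (𝓝 0) (𝓝 (c * 0)) :=
      (continuous_const.mul continuous_id).tendsto 0
    rw [mul_zero] at h
    exact h.mono_left nhdsWithin_le_nhds
  · filter_upwards [self_mem_nhdsWithin] with t ht
    exact mul_pos hc ht

lemma q_smul (x y : X) {c : ℝ} (hc : 0 < c) {t : ℝ} (ht : 0 < t) :
    q x (c • y) t = c * q x y (c * t) := by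
  rw [q, q, smul_smul, mul_comm t c]
  field_simp

lemma phi_smul (x : X) (hx : ‖x‖ = 1) (y : X) {c : ℝ} (hc : 0 < c) :
    phi x (c • y) = c * phi x y := by
  have h1 : Tendsto (fun t => c * q x y (c * t)) (𝓝[>] 0) (𝓝 (c * phi x y)) :=
    ((phi_tendsto x hx y).comp (tendsto_mul_pos hc)).const_mul c
  have h2 : Tendsto (q x (c • y)) (𝓝[>] 0) (𝓝 (c * phi x y)) := by
    refine h1.congr' ?_
    filter_upwards [self_mem_nhdsWithin] with t ht
    exact (q_smul x y hc ht).symm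
  exact tendsto_nhds_unique (phi_tendsto x hx (c • y)) h2

lemma phi_zero (x : X) (hx : ‖x‖ = 1) : phi x 0 = 0 := by
  have h1 : Tendsto (q x 0) (𝓝[>] (0:ℝ)) (𝓝 0) := by
    have h2 : q x (0:X) = fun _ => (0:ℝ) := by
      funext t; simp [q, hx]
    rw [h2]; exact tendsto_const_nhds
  exact tendsto_nhds_unique (phi_tendsto x hx 0) h1

lemma phi_add_le (x : X) (hx : ‖x‖ = 1) (y z : X) :
    phi x (y + z) ≤ phi x y + phi x z := by
  have key : ∀ t : ℝ, 0 < t → phi x (y + z) ≤ q x y (2*t) + q x z (2*t) := by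
    intro t ht
    have h2t : (0:ℝ) < 2*t := by linarith
    have h1 : x + t • (y + z)
        = (1/2 : ℝ) • (x + (2*t) • y) + (1/2 : ℝ) • (x + (2*t) • z) := by
      match_scalars <;> ring
    have h2 : ‖x + t • (y+z)‖ ≤ (‖x + (2*t) • y‖ + ‖x + (2*t) • z‖)/2 := by
      rw [h1]
      refine (norm_add_le _ _).trans ?_
      rw [norm_smul, norm_smul]
      simp [Real.norm_eq_abs, abs_of_pos]
      ring_nf
      nlinarith [norm_nonneg (x + (2*t) • y), norm_nonneg (x + (2*t) • z)]
    have h3 : q x (y+z) t ≤ q x y (2*t) + q x z (2*t) := by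
      rw [q, q, q, ← add_div, div_le_div_iff₀ ht h2t]
      nlinarith
    exact (phi_le_q x hx (y+z) ht).trans h3
  have h4 : Tendsto (fun t => q x y (2*t) + q x z (2*t)) (𝓝[>] 0)
      (𝓝 (phi x y + phi x z)) :=
    ((phi_tendsto x hx y).comp (tendsto_mul_pos two_pos)).add
      ((phi_tendsto x hx z).comp (tendsto_mul_pos two_pos))
  exact ge_of_tendsto h4 (by filter_upwards [self_mem_nhdsWithin] with t ht
                             exact key t ht)

lemma phi_smul_self (x : X) (hx : ‖x‖ = 1) (lam : ℝ) : phi x (lam • x) = lam := by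
  have hpos : (0:ℝ) < 1/(|lam|+1) := by positivity
  have h1 : ∀ᶠ t in 𝓝[>] (0:ℝ), (fun _ => lam) t = q x (lam • x) t := by
    filter_upwards [Ioo_mem_nhdsGT_of_mem ⟨le_refl (0:ℝ), hpos⟩] with t ht
    obtain ⟨ht0, ht1⟩ := ht
    have habs : t * |lam| < 1 := by
      have := (lt_div_iff₀ (by positivity : (0:ℝ) < |lam|+1)).1 ht1
      nlinarith [abs_nonneg lam]
    have hpos1 : 0 < 1 + t * lam := by
      rcases abs_cases lam with ⟨h,_⟩|⟨h,_⟩ <;> nlinarith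
    have h2 : x + t • (lam • x) = (1 + t*lam) • x := by
      match_scalars; ring
    rw [q, h2, norm_smul, hx, mul_one, Real.norm_eq_abs, abs_of_pos hpos1]
    field_simp; ring
  exact tendsto_nhds_unique (phi_tendsto x hx _) (tendsto_const_nhds.congr' h1)

lemma e_nonneg (x : X) (hx : ‖x‖ = 1) (h : X) : 0 ≤ ‖x + h‖ - 1 - phi x h := by
  have h1 := phi_le_q x hx h one_pos
  rw [q] at h1
  simp only [one_smul, div_one] at h1
  linarith


section Sym
variable (x : X) (hx : ‖x‖ = 1)
include hx

lemma phi_neg (H : ∀ y : X, phi x y + phi x (-y) ≤ 0) (y : X) :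
    phi x (-y) = - phi x y := by
  have h1 := phi_add_le x hx y (-y)
  rw [add_neg_cancel, phi_zero x hx] at h1
  linarith [H y]

lemma phi_additive (H : ∀ y : X, phi x y + phi x (-y) ≤ 0) (y z : X) :
    phi x (y + z) = phi x y + phi x z := by
  refine le_antisymm (phi_add_le x hx y z) ?_
  have h1 := phi_add_le x hx (y + z) (-z)
  rw [phi_neg x hx H z, add_neg_cancel_right] at h1
  linarith

lemma phi_isLinear (H : ∀ y : X, phi x y + phi x (-y) ≤ 0) :
    IsLinearMap ℝ (phi x) := by
  constructor
  · exact phi_additive x hx H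
  · intro c y
    rw [smul_eq_mul]
    rcases lt_trichotomy c 0 with hc|rfl|hc
    · have h2 : c • y = -((-c) • y) := by module
      rw [h2, phi_neg x hx H, phi_smul x hx y (by linarith : (0:ℝ) < -c)]
      ring
    · simpa [phi_zero x hx] using (phi_zero x hx)
    · exact phi_smul x hx y hc

lemma dir_small (y : X) {c : ℝ} (hc : 0 < c) :
    ∃ δ > 0, ∀ t : ℝ, 0 ≤ t → t < δ →
      ‖x + t • y‖ - 1 - t * phi x y ≤ c * t := by
  have h1 : ∀ᶠ t in 𝓝[>] (0:ℝ), q x y t < phi x y + c :=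
    (phi_tendsto x hx y).eventually_lt_const (by linarith)
  rw [eventually_iff, mem_nhdsGT_iff_exists_Ioo_subset] at h1
  obtain ⟨u, hu, hsub⟩ := h1
  refine ⟨u, hu, fun t ht0 htu => ?_⟩
  rcases eq_or_lt_of_le ht0 with rfl|ht0
  · simp [hx]
  · have h2 := hsub ⟨ht0, htu⟩
    rw [mem_setOf_eq, q, div_lt_iff₀ ht0] at h2
    nlinarith

omit hx in
lemma e_convex (hlin : IsLinearMap ℝ (phi x)) :
    ConvexOn ℝ univ (fun h : X => ‖x + h‖ - 1 - phi x h) := by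
  refine ⟨convex_univ, fun y _ z _ a b ha hb hab => ?_⟩
  have h1 : x + (a • y + b • z) = a • (x + y) + b • (x + z) := by
    match_scalars <;> linarith
  have h2 : ‖x + (a • y + b • z)‖ ≤ a * ‖x + y‖ + b * ‖x + z‖ := by
    rw [h1]
    refine (norm_add_le _ _).trans ?_
    rw [norm_smul, norm_smul, Real.norm_eq_abs, Real.norm_eq_abs,
      abs_of_nonneg ha, abs_of_nonneg hb]
  have h3 : phi x (a • y + b • z) = a * phi x y + b * phi x z := by
    rw [hlin.map_add, hlin.map_smul, hlin.map_smul, smul_eq_mul, smul_eq_mul]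
  simp only [smul_eq_mul]
  nlinarith

set_option maxHeartbeats 1000000 in
lemma differentiable_of_sym [FiniteDimensional ℝ X]
    (H : ∀ y : X, phi x y + phi x (-y) ≤ 0) :
    DifferentiableAt ℝ (fun z : X => ‖z‖) x := by
  have hlin : IsLinearMap ℝ (phi x) := phi_isLinear x hx H
  set F : X →L[ℝ] ℝ := LinearMap.toContinuousLinearMap (IsLinearMap.mk' (phi x) hlin)
    with hF
  have hFapp : ∀ h : X, F h = phi x h := fun h => by
    rw [hF, LinearMap.coe_toContinuousLinearMap']; rfl
  have hx0 : x ≠ 0 := fun h => by rw [h, norm_zero] at hx; norm_num at hx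
  have hnt : Nontrivial X := ⟨⟨x, 0, hx0⟩⟩
  set d := Module.finrank ℝ X with hd
  have hd0 : 0 < d := Module.finrank_pos
  have hdR : (0:ℝ) < (d:ℝ) := by exact_mod_cast hd0
  have hne : Nonempty (Fin d) := Fin.pos_iff_nonempty.1 hd0
  set b := Module.finBasis ℝ X with hb
  set C : ℝ := 1 + ∑ i, ‖LinearMap.toContinuousLinearMap (b.coord i)‖ with hC
  have hsum0 : (0:ℝ) ≤ ∑ i, ‖LinearMap.toContinuousLinearMap (b.coord i)‖ :=
    Finset.sum_nonneg fun i _ => norm_nonneg _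
  have hC1 : (1:ℝ) ≤ C := by rw [hC]; linarith
  have hC0 : (0:ℝ) < C := by linarith
  have hcoord : ∀ (h : X) i, |b.repr h i| ≤ C * ‖h‖ := by
    intro h i
    have h1 : |b.repr h i| = ‖(LinearMap.toContinuousLinearMap (b.coord i)) h‖ := by
      rw [LinearMap.coe_toContinuousLinearMap', Module.Basis.coord_apply, Real.norm_eq_abs]
    rw [h1]
    refine (ContinuousLinearMap.le_opNorm _ _).trans ?_
    refine mul_le_mul_of_nonneg_right ?_ (norm_nonneg h)
    rw [hC]
    have h2 := Finset.single_le_sum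
      (f := fun i => ‖LinearMap.toContinuousLinearMap (b.coord i)‖)
      (fun i _ => norm_nonneg _) (Finset.mem_univ i)
    linarith
  have key : HasFDerivAt (fun z : X => ‖z‖) F x := by
    rw [hasFDerivAt_iff_isLittleO_nhds_zero, Asymptotics.isLittleO_iff]
    intro c hc
    set ε' := c / (d * C) with hε'
    have hε'0 : 0 < ε' := by positivity
    choose δp hδp hp using fun i : Fin d => dir_small x hx (b i) hε'0
    choose δm hδm hm using fun i : Fin d => dir_small x hx (-(b i)) hε'0
    set δ : ℝ := Finset.univ.inf' Finset.univ_nonempty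
      (fun i => min (δp i) (δm i)) with hδdef
    have hδ0 : 0 < δ := by
      rw [hδdef, Finset.lt_inf'_iff]
      exact fun i _ => lt_min (hδp i) (hδm i)
    have hr : (0:ℝ) < δ / (d * C) := by positivity
    filter_upwards [Metric.ball_mem_nhds (0:X) hr] with h hball
    rw [Metric.mem_ball, dist_zero_right] at hball
    set cf : Fin d → ℝ := fun i => b.repr h i with hcf
    have hsmall : ∀ i, (d:ℝ) * |cf i| < δ := by
      intro i
      have h1 : |cf i| ≤ C * ‖h‖ := hcoord h i
      have h2 : ‖h‖ < δ / (d * C) := hball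
      calc (d:ℝ) * |cf i| ≤ (d:ℝ) * (C * ‖h‖) :=
            mul_le_mul_of_nonneg_left h1 hdR.le
        _ < (d:ℝ) * (C * (δ / (d * C))) := by
            refine mul_lt_mul_of_pos_left (mul_lt_mul_of_pos_left h2 hC0) hdR
        _ = δ := by field_simp
    have hδle_p : ∀ i, δ ≤ δp i := fun i =>
      (Finset.inf'_le _ (Finset.mem_univ i)).trans (min_le_left _ _)
    have hδle_m : ∀ i, δ ≤ δm i := fun i =>
      (Finset.inf'_le _ (Finset.mem_univ i)).trans (min_le_right _ _)
    have hterm : ∀ i, ‖x + (((d:ℝ) * cf i) • b i)‖ - 1 - phi x (((d:ℝ) * cf i) • b i)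
        ≤ ε' * ((d:ℝ) * |cf i|) := by
      intro i
      rcases le_or_gt 0 (cf i) with hci|hci
      · have habs : |cf i| = cf i := abs_of_nonneg hci
        have h4 : (d:ℝ) * cf i < δp i := by
          have h5 := hsmall i; rw [habs] at h5; linarith [hδle_p i]
        have := hp i ((d:ℝ) * cf i) (by positivity) h4
        calc ‖x + (((d:ℝ) * cf i) • b i)‖ - 1 - phi x (((d:ℝ) * cf i) • b i)
            = ‖x + (((d:ℝ) * cf i) • b i)‖ - 1 - ((d:ℝ) * cf i) * phi x (b i) := by
              rw [hlin.map_smul, smul_eq_mul]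
          _ ≤ ε' * ((d:ℝ) * cf i) := this
          _ = ε' * ((d:ℝ) * |cf i|) := by rw [habs]
      · have habs : |cf i| = -cf i := abs_of_neg hci
        have heq : ((d:ℝ) * cf i) • b i = (-((d:ℝ) * cf i)) • (-(b i)) := by
          rw [neg_smul, smul_neg, neg_neg]
        have hts : (0:ℝ) ≤ -((d:ℝ) * cf i) := by nlinarith
        have htδ : -((d:ℝ) * cf i) < δm i := by
          have h5 := hsmall i; rw [habs] at h5; linarith [hδle_m i]
        have h5 := hm i (-((d:ℝ) * cf i)) hts htδ
        calc ‖x + (((d:ℝ) * cf i) • b i)‖ - 1 - phi x (((d:ℝ) * cf i) • b i)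
            = ‖x + (-((d:ℝ) * cf i)) • (-(b i))‖ - 1
              - (-((d:ℝ) * cf i)) * phi x (-(b i)) := by
              rw [← heq]
              congr 1
              rw [heq, hlin.map_smul, smul_eq_mul]
          _ ≤ ε' * (-((d:ℝ) * cf i)) := h5
          _ = ε' * ((d:ℝ) * |cf i|) := by rw [habs]; ring
    have hrep : h = ∑ i, ((1:ℝ)/(d:ℝ)) • (((d:ℝ) * cf i) • b i) := by
      conv_lhs => rw [← b.sum_repr h]
      refine Finset.sum_congr rfl fun i _ => ?_
      rw [smul_smul]
      congr 1
      field_simp; rfl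
    have hjensen := (e_convex x hlin).2
    have hmain : ‖x + h‖ - 1 - phi x h ≤
        ∑ i, ((1:ℝ)/(d:ℝ)) * (‖x + (((d:ℝ) * cf i) • b i)‖ - 1
          - phi x (((d:ℝ) * cf i) • b i)) := by
      have hsum1 : ∑ _i : Fin d, ((1:ℝ)/(d:ℝ)) = 1 := by
        rw [Finset.sum_const, Finset.card_univ, Fintype.card_fin, nsmul_eq_mul]
        field_simp
      have := (e_convex x hlin).map_sum_le (t := Finset.univ)
        (w := fun _ : Fin d => (1:ℝ)/(d:ℝ))
        (p := fun i => ((d:ℝ) * cf i) • b i)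
        (fun i _ => by positivity) hsum1 (fun i _ => mem_univ _)
      rw [← hrep] at this
      simpa using this
    have hfinal : ‖x + h‖ - 1 - phi x h ≤ c * ‖h‖ := by
      have h6 : ∑ i, ((1:ℝ)/(d:ℝ)) * (‖x + (((d:ℝ) * cf i) • b i)‖ - 1
          - phi x (((d:ℝ) * cf i) • b i)) ≤ ∑ i, ε' * |cf i| := by
        refine Finset.sum_le_sum fun i _ => ?_
        have h7 := hterm i
        have h8 : ((1:ℝ)/(d:ℝ)) * (‖x + (((d:ℝ) * cf i) • b i)‖ - 1
            - phi x (((d:ℝ) * cf i) • b i)) ≤ ((1:ℝ)/(d:ℝ)) * (ε' * ((d:ℝ) * |cf i|)) :=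
          mul_le_mul_of_nonneg_left h7 (by positivity)
        calc ((1:ℝ)/(d:ℝ)) * (‖x + (((d:ℝ) * cf i) • b i)‖ - 1
            - phi x (((d:ℝ) * cf i) • b i)) ≤ ((1:ℝ)/(d:ℝ)) * (ε' * ((d:ℝ) * |cf i|)) := h8
          _ = ε' * |cf i| := by field_simp
      have h9 : ∑ i, ε' * |cf i| ≤ ε' * ((d:ℝ) * (C * ‖h‖)) := by
        rw [← Finset.mul_sum]
        refine mul_le_mul_of_nonneg_left ?_ hε'0.le
        calc ∑ i, |cf i| ≤ ∑ _i : Fin d, C * ‖h‖ :=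
              Finset.sum_le_sum fun i _ => hcoord h i
          _ = (d:ℝ) * (C * ‖h‖) := by
              rw [Finset.sum_const, Finset.card_univ, Fintype.card_fin, nsmul_eq_mul]
      have h10 : ε' * ((d:ℝ) * (C * ‖h‖)) = c * ‖h‖ := by
        rw [hε']; field_simp
      linarith [hmain, h6, h9]
    have hnn := e_nonneg x hx h
    rw [hx, hFapp]
    rw [Real.norm_eq_abs, abs_of_nonneg hnn]
    exact hfinal
  exact key.differentiableAt

end Sym


lemma key_ineq {u s T2 : ℝ} (hu0 : 0 ≤ u) (hu1 : u ≤ 1) (hs0 : 0 ≤ s)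
    (hl : -s ≤ T2) (hu' : T2 ≤ s) (hsct : s ≤ u/32) (hc2 : u*u ≤ 4*s) :
    2 + u ≤ (2 - u/2) * (1 + u + T2) := by
  nlinarith [mul_le_mul_of_nonneg_left hl hu0, mul_le_mul_of_nonneg_left hu' hu0,
    mul_le_mul_of_nonneg_right hu1 hs0]

set_option maxHeartbeats 1000000 in
lemma construction (x : X) (hx : ‖x‖ = 1) {y : X}
    (hcy : 0 < phi x y + phi x (-y)) :
    ∃ δ > (0:ℝ), ∃ ε₀ > (0:ℝ), ∀ ε : ℝ, 0 < ε → ε < ε₀ →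
      ∃ u v : X, ‖u‖ = 1 ∧ ‖v‖ = 1 ∧ u ≠ x ∧ u ≠ -x ∧ v ≠ x ∧ v ≠ -x ∧
        max ‖u - x‖ ‖v + x‖ ≤ ε ∧ ‖u - v‖ ≤ 2 - δ * ε := by
  set c : ℝ := phi x y + phi x (-y) with hcdef
  set ny : ℝ := ‖y‖ with hnydef
  have hy0 : 0 < ny := by
    rcases eq_or_lt_of_le (norm_nonneg y) with h|h
    · exfalso
      have hy : y = 0 := norm_eq_zero.1 h.symm
      rw [hcdef, hy, neg_zero, phi_zero x hx] at hcy
      norm_num at hcy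
    · exact h
  have hφ1l := neg_norm_le_phi x hx y
  have hφ1u := phi_le_norm x hx y
  have hφ2l := neg_norm_le_phi x hx (-y)
  have hφ2u := phi_le_norm x hx (-y)
  rw [norm_neg] at hφ2l hφ2u
  have hcny : c ≤ 2*ny := by rw [hcdef]; linarith
  refine ⟨c/(16*ny), by positivity, min 2 (c/(8*ny)), by positivity, ?_⟩
  intro ε hε0 hεε₀
  have hε2 : ε < 2 := lt_of_lt_of_le hεε₀ (min_le_left _ _)
  have hεc : ε < c/(8*ny) := lt_of_lt_of_le hεε₀ (min_le_right _ _)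
  set t : ℝ := ε/(4*ny) with htdef
  have ht0 : 0 < t := by positivity
  have hta : t*ny = ε/4 := by rw [htdef]; field_simp
  set a : ℝ := ‖x + t • y‖ with hadef
  set w : X := x + t • (-y) with hwdef
  set bb : ℝ := ‖w‖ with hbbdef
  have hA := abs_norm_sub_norm_le (x + t • y) x
  rw [add_sub_cancel_left, norm_smul, Real.norm_eq_abs, abs_of_pos ht0, hx, ← hadef,
    ← hnydef] at hA
  have hB := abs_norm_sub_norm_le (x + t • (-y)) x
  rw [add_sub_cancel_left, norm_smul, Real.norm_eq_abs, abs_of_pos ht0, hx, norm_neg,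
    ← hnydef] at hB
  rw [← hwdef, ← hbbdef] at hB
  have hA' := abs_le.1 hA
  have hB' := abs_le.1 hB
  have htny2 : t*ny < 1/2 := by rw [hta]; linarith
  have hapos : (0:ℝ) < a := by linarith [hA'.1]
  have hbpos : (0:ℝ) < bb := by linarith [hB'.1]
  have ha2 : (1:ℝ)/2 < a := by linarith [hA'.1]
  have hb2 : (1:ℝ)/2 < bb := by linarith [hB'.1]
  have ha0 : a ≠ 0 := hapos.ne'
  have hb0 : bb ≠ 0 := hbpos.ne'
  have hainv : a⁻¹ ≤ 2 := by
    rw [inv_eq_one_div, div_le_iff₀ hapos]; linarith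
  have hbinv : bb⁻¹ ≤ 2 := by
    rw [inv_eq_one_div, div_le_iff₀ hbpos]; linarith
  have haA : 1 + t * phi x y ≤ a := by
    have h1 := phi_le_q x hx y ht0
    rw [q, le_div_iff₀ ht0, ← hadef] at h1
    linarith
  have hbB : 1 + t * phi x (-y) ≤ bb := by
    have h1 := phi_le_q x hx (-y) ht0
    rw [q, le_div_iff₀ ht0] at h1
    rw [← hwdef, ← hbbdef] at h1
    linarith
  set u : X := a⁻¹ • (x + t • y) with hu
  set v : X := -(bb⁻¹ • w) with hv
  have hnu : ‖u‖ = 1 := by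
    rw [hu, norm_smul, Real.norm_eq_abs, abs_of_pos (inv_pos.2 hapos), ← hadef,
      inv_mul_cancel₀ ha0]
  have hnv : ‖v‖ = 1 := by
    rw [hv, norm_neg, norm_smul, Real.norm_eq_abs, abs_of_pos (inv_pos.2 hbpos), ← hbbdef,
      inv_mul_cancel₀ hb0]
  -- distance to x
  have hux : ‖u - x‖ ≤ ε := by
    have heq : u - x = a⁻¹ • (t • y + (1 - a) • x) := by
      rw [hu]; match_scalars <;> field_simp
    have habs1 : |1 - a| ≤ t*ny := by rw [abs_sub_comm]; exact hA
    calc ‖u - x‖ = a⁻¹ * ‖t • y + (1 - a) • x‖ := by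
          rw [heq, norm_smul, Real.norm_eq_abs, abs_of_pos (inv_pos.2 hapos)]
      _ ≤ a⁻¹ * (t*ny + |1 - a|) := by
          refine mul_le_mul_of_nonneg_left ?_ (inv_pos.2 hapos).le
          refine (norm_add_le _ _).trans ?_
          rw [norm_smul, norm_smul, Real.norm_eq_abs, Real.norm_eq_abs,
            abs_of_pos ht0, hx, mul_one, ← hnydef]
      _ ≤ 2 * (t*ny + t*ny) := by
          refine mul_le_mul hainv (by linarith) (by positivity) (by norm_num)
      _ = ε := by rw [hta]; ring
  have hvx : ‖v + x‖ ≤ ε := by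
    have heq : v + x = bb⁻¹ • (t • y + (bb - 1) • x) := by
      rw [hv, hwdef]; match_scalars <;> field_simp <;> ring
    calc ‖v + x‖ = bb⁻¹ * ‖t • y + (bb - 1) • x‖ := by
          rw [heq, norm_smul, Real.norm_eq_abs, abs_of_pos (inv_pos.2 hbpos)]
      _ ≤ bb⁻¹ * (t*ny + |bb - 1|) := by
          refine mul_le_mul_of_nonneg_left ?_ (inv_pos.2 hbpos).le
          refine (norm_add_le _ _).trans ?_
          rw [norm_smul, norm_smul, Real.norm_eq_abs, Real.norm_eq_abs,
            abs_of_pos ht0, hx, mul_one, ← hnydef]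
      _ ≤ 2 * (t*ny + t*ny) := by
          refine mul_le_mul hbinv (by linarith) (by positivity) (by norm_num)
      _ = ε := by rw [hta]; ring
  -- u ≠ x
  have hunex : u ≠ x := by
    intro hequ
    have h1 : x + t • y = a • x := by
      have h2 := congrArg (fun z : X => a • z) hequ
      simp only [hu, smul_smul, mul_inv_cancel₀ ha0, one_smul] at h2
      exact h2
    have h3 : t • y = (a - 1) • x := by
      rw [sub_smul, one_smul, ← h1]; abel
    have h4 : y = ((a-1)/t) • x := by
      calc y = t⁻¹ • (t • y) := by rw [smul_smul, inv_mul_cancel₀ ht0.ne', one_smul]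
        _ = t⁻¹ • ((a-1) • x) := by rw [h3]
        _ = ((a-1)/t) • x := by rw [smul_smul, div_eq_inv_mul]
    rw [hcdef, h4, ← neg_smul, phi_smul_self x hx, phi_smul_self x hx] at hcy
    linarith
  have hvnex : v ≠ -x := by
    intro heqv
    have h1 : w = bb • x := by
      have h2 : bb⁻¹ • w = x := by
        have h3 := congrArg (fun z : X => -z) heqv
        simp only [hv, neg_neg] at h3
        exact h3
      have h4 := congrArg (fun z : X => bb • z) h2
      simp only [smul_smul, mul_inv_cancel₀ hb0, one_smul] at h4
      exact h4
    have h3 : t • (-y) = (bb - 1) • x := by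
      rw [sub_smul, one_smul, ← h1, hwdef]; abel
    have h4 : y = (-((bb-1)/t)) • x := by
      have h5 : -y = ((bb-1)/t) • x := by
        calc -y = t⁻¹ • (t • (-y)) := by rw [smul_smul, inv_mul_cancel₀ ht0.ne', one_smul]
          _ = t⁻¹ • ((bb-1) • x) := by rw [h3]
          _ = ((bb-1)/t) • x := by rw [smul_smul, div_eq_inv_mul]
      have h6 := congrArg (fun z : X => -z) h5
      simp only [neg_neg, ← neg_smul] at h6
      exact h6
    rw [hcdef, h4, ← neg_smul, phi_smul_self x hx, phi_smul_self x hx] at hcy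
    linarith
  have hunnx : u ≠ -x := by
    intro hequ
    rw [hequ] at hux
    have h1 : ‖(-x : X) - x‖ = 2 := by
      have h2 : (-x : X) - x = -((2:ℝ) • x) := by module
      rw [h2, norm_neg, norm_smul, hx, Real.norm_eq_abs]
      norm_num
    rw [h1] at hux
    linarith
  have hvnx : v ≠ x := by
    intro heqv
    rw [heqv] at hvx
    have h1 : ‖x + x‖ = 2 := by
      have h2 : x + x = (2:ℝ) • x := by module
      rw [h2, norm_smul, hx, Real.norm_eq_abs]
      norm_num
    rw [h1] at hvx
    linarith
  -- main estimate
  set A : ℝ := 1 + t * phi x y with hAdef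
  set B : ℝ := 1 + t * phi x (-y) with hBdef
  have htl1 : t*(-ny) ≤ t * phi x y := mul_le_mul_of_nonneg_left hφ1l ht0.le
  have htl2 : t*(-ny) ≤ t * phi x (-y) := mul_le_mul_of_nonneg_left hφ2l ht0.le
  have hA0 : (0:ℝ) < A := by rw [hAdef]; nlinarith [htl1, htny2]
  have hB0 : (0:ℝ) < B := by rw [hBdef]; nlinarith [htl2, htny2]
  have hct0 : 0 ≤ c*t := by positivity
  have hct1 : c*t ≤ 1 := by
    have h1 := mul_le_mul_of_nonneg_right hcny ht0.le
    nlinarith [htny2]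
  have htc32 : t*(ny*ny) ≤ c/32 := by
    rw [lt_div_iff₀ (by positivity : (0:ℝ) < 8*ny)] at hεc
    have h2 : t*(ny*ny) = (ε*ny)/4 := by rw [htdef]; field_simp
    linarith
  have hsct : (t*ny)*(t*ny) ≤ (c*t)/32 := by
    have h4 := mul_le_mul_of_nonneg_left htc32 ht0.le
    calc (t*ny)*(t*ny) = t*(t*(ny*ny)) := by ring
      _ ≤ t*(c/32) := h4
      _ = (c*t)/32 := by ring
  have hPPabs : |phi x y * phi x (-y)| ≤ ny * ny := by
    have h1 : |phi x y| ≤ ny := abs_le.2 ⟨hφ1l, hφ1u⟩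
    have h2 : |phi x (-y)| ≤ ny := abs_le.2 ⟨hφ2l, hφ2u⟩
    rw [abs_mul]
    exact mul_le_mul h1 h2 (abs_nonneg _) (le_trans (abs_nonneg _) h1)
  have hPP : -(ny*ny) ≤ phi x y * phi x (-y) := by
    linarith [neg_abs_le (phi x y * phi x (-y))]
  have hPPu : phi x y * phi x (-y) ≤ ny*ny := by
    linarith [le_abs_self (phi x y * phi x (-y))]
  have hkey : A + B ≤ (2 - c*t/2) * (A*B) := by
    have hAB : A*B = 1 + c*t + (t*t)*(phi x y * phi x (-y)) := by
      rw [hAdef, hBdef, hcdef]; ring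
    have hsum : A + B = 2 + c*t := by rw [hAdef, hBdef, hcdef]; ring
    have hl : -((t*ny)*(t*ny)) ≤ (t*t)*(phi x y * phi x (-y)) := by
      have h4 := mul_le_mul_of_nonneg_left hPP (mul_self_nonneg t)
      calc -((t*ny)*(t*ny)) = (t*t) * (-(ny*ny)) := by ring
        _ ≤ (t*t)*(phi x y * phi x (-y)) := h4
    have hu' : (t*t)*(phi x y * phi x (-y)) ≤ (t*ny)*(t*ny) := by
      have h4 := mul_le_mul_of_nonneg_left hPPu (mul_self_nonneg t)
      calc (t*t)*(phi x y * phi x (-y)) ≤ (t*t)*(ny*ny) := h4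
        _ = (t*ny)*(t*ny) := by ring
    have hc2 : (c*t)*(c*t) ≤ 4*((t*ny)*(t*ny)) := by
      have h4 : c*c ≤ (2*ny)*(2*ny) := mul_le_mul hcny hcny hcy.le (by positivity)
      have h5 := mul_le_mul_of_nonneg_left h4 (mul_self_nonneg t)
      calc (c*t)*(c*t) = (t*t)*(c*c) := by ring
        _ ≤ (t*t)*((2*ny)*(2*ny)) := h5
        _ = 4*((t*ny)*(t*ny)) := by ring
    rw [hAB, hsum]
    have h6 : (c*t)/32 ≤ (c*t)/32 := le_refl _
    have := key_ineq hct0 hct1 (by positivity : (0:ℝ) ≤ (t*ny)*(t*ny)) hl hu'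
      (by linarith : (t*ny)*(t*ny) ≤ (c*t)/32) hc2
    linarith [this]
  have hinva : a⁻¹ ≤ A⁻¹ := by
    rw [inv_le_inv₀ hapos hA0]
    exact haA
  have hinvb : bb⁻¹ ≤ B⁻¹ := by
    rw [inv_le_inv₀ hbpos hB0]
    exact hbB
  have hABsum : A⁻¹ + B⁻¹ ≤ 2 - c*t/2 := by
    rw [inv_add_inv hA0.ne' hB0.ne', div_le_iff₀ (by positivity)]
    linarith [hkey]
  have hcross : |t*(a⁻¹ - bb⁻¹)| * ny ≤ 8*((t*ny)*(t*ny)) := by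
    have h1 : a⁻¹ - bb⁻¹ = (bb - a)/(a*bb) := by field_simp
    have h2 : |bb - a| ≤ 2*(t*ny) := by
      rw [abs_le]
      constructor <;> linarith [hA'.1, hA'.2, hB'.1, hB'.2]
    have h3 : (1:ℝ)/4 ≤ a*bb := by
      have := mul_le_mul ha2.le hb2.le (by norm_num) (by linarith)
      linarith
    have habpos : (0:ℝ) < a*bb := by linarith
    have h4 : |a⁻¹ - bb⁻¹| ≤ 8*(t*ny) := by
      rw [h1, abs_div, abs_of_pos habpos, div_le_iff₀ habpos]
      have h5 : 8*(t*ny)*(1/4) ≤ 8*(t*ny)*(a*bb) :=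
        mul_le_mul_of_nonneg_left h3 (by positivity)
      linarith
    have h6 := mul_le_mul_of_nonneg_left h4 (by positivity : (0:ℝ) ≤ t*ny)
    calc |t*(a⁻¹ - bb⁻¹)| * ny = (t*ny) * |a⁻¹ - bb⁻¹| := by
          rw [abs_mul, abs_of_pos ht0]; ring
      _ ≤ (t*ny)*(8*(t*ny)) := h6
      _ = 8*((t*ny)*(t*ny)) := by ring
  have huv : ‖u - v‖ ≤ 2 - (c/(16*ny)) * ε := by
    have heq : u - v = (a⁻¹ + bb⁻¹) • x + (t*(a⁻¹ - bb⁻¹)) • y := by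
      rw [hu, hv, hwdef]; match_scalars <;> field_simp <;> ring
    have h1 : ‖u - v‖ ≤ (a⁻¹ + bb⁻¹) + |t*(a⁻¹ - bb⁻¹)| * ny := by
      rw [heq]
      refine (norm_add_le _ _).trans ?_
      rw [norm_smul, norm_smul, Real.norm_eq_abs, Real.norm_eq_abs, hx, mul_one, ← hnydef,
        abs_of_pos (by positivity : (0:ℝ) < a⁻¹ + bb⁻¹)]
    have h5 : 8*((t*ny)*(t*ny)) ≤ c*t/4 := by linarith
    have h7 : c*t/4 = (c/(16*ny))*ε := by
      rw [htdef]; field_simp; ring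
    linarith [h1, hABsum, hinva, hinvb, hcross]
  exact ⟨u, v, hnu, hnv, hunex, hunnx, hvnx, hvnex, max_le hux hvx, huv⟩


lemma reverse (x : X) (hx : ‖x‖ = 1)
    (hd : DifferentiableAt ℝ (fun z : X => ‖z‖) x)
    {δ ε₀ : ℝ} (hδ : 0 < δ) (hε₀ : 0 < ε₀)
    (hcond : ∀ ε : ℝ, 0 < ε → ε < ε₀ →
      ∃ u v : X, ‖u‖ = 1 ∧ ‖v‖ = 1 ∧ u ≠ x ∧ u ≠ -x ∧ v ≠ x ∧ v ≠ -x ∧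
        max ‖u - x‖ ‖v + x‖ ≤ ε ∧ ‖u - v‖ ≤ 2 - δ * ε) : False := by
  set f := fderiv ℝ (fun z : X => ‖z‖) x with hf
  have hder : HasFDerivAt (fun z : X => ‖z‖) f x := hd.hasFDerivAt
  have hfx : f x = 1 := by
    rw [hf]
    have := DifferentiableAt.fderiv_norm_self (x := x) hd
    rw [hx] at this
    exact this
  have hfnorm : ‖f‖ ≤ 1 := by
    rw [hf]
    exact NNReal.coe_one ▸ norm_fderiv_le_of_lipschitz ℝ lipschitzWith_one_norm
  have hneg : HasFDerivAt (fun z : X => ‖z‖) (-f) (-x) := by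
    have h1 := HasFDerivAt.hasFDerivAt_norm_smul_neg
      (t := (-1:ℝ)) (by norm_num) hder
    rw [neg_one_smul] at h1
    exact h1
  have ho1 := Asymptotics.isLittleO_iff.1
    (hasFDerivAt_iff_isLittleO_nhds_zero.1 hder) (show (0:ℝ) < δ/4 by linarith)
  have ho2 := Asymptotics.isLittleO_iff.1
    (hasFDerivAt_iff_isLittleO_nhds_zero.1 hneg) (show (0:ℝ) < δ/4 by linarith)
  rw [Metric.eventually_nhds_iff] at ho1 ho2
  obtain ⟨r₁, hr₁, h1⟩ := ho1
  obtain ⟨r₂, hr₂, h2⟩ := ho2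
  set ε : ℝ := min (ε₀/2) (min r₁ r₂ / 2) with hεdef
  have hεpos : 0 < ε := by positivity
  have hεlt : ε < ε₀ := lt_of_le_of_lt (min_le_left _ _) (by linarith)
  have hεr₁ : ε < r₁ := lt_of_le_of_lt (min_le_right _ _)
    (by rcases min_le_left r₁ r₂ with _; have := min_le_left r₁ r₂; linarith [min_le_left r₁ r₂])
  have hεr₂ : ε < r₂ := lt_of_le_of_lt (min_le_right _ _)
    (by linarith [min_le_right r₁ r₂])
  obtain ⟨u, v, hnu, hnv, _, _, _, _, hmax, huv⟩ := hcond ε hεpos hεlt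
  have hux : ‖u - x‖ ≤ ε := le_trans (le_max_left _ _) hmax
  have hvx : ‖v + x‖ ≤ ε := le_trans (le_max_right _ _) hmax
  have hu1 : ‖f (u - x)‖ ≤ δ/4 * ε := by
    have h3 := h1 (show dist (u - x) 0 < r₁ by rw [dist_zero_right]; exact lt_of_le_of_lt hux hεr₁)
    rw [add_sub_cancel, hnu, hx, sub_self, zero_sub, norm_neg] at h3
    calc ‖f (u - x)‖ ≤ δ/4 * ‖u - x‖ := h3
      _ ≤ δ/4 * ε := by
          refine mul_le_mul_of_nonneg_left hux (by linarith)
  have hv1 : ‖f (v + x)‖ ≤ δ/4 * ε := by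
    have h3 := h2 (show dist (v + x) 0 < r₂ by
      rw [dist_zero_right]; exact lt_of_le_of_lt hvx hεr₂)
    have h4 : -x + (v + x) = v := by abel
    rw [h4, hnv, norm_neg, hx, sub_self, zero_sub, ContinuousLinearMap.neg_apply,
      neg_neg] at h3
    calc ‖f (v + x)‖ ≤ δ/4 * ‖v + x‖ := h3
      _ ≤ δ/4 * ε := mul_le_mul_of_nonneg_left hvx (by linarith)
  have hsplit : u - v = (u - x) - (v + x) + (2:ℝ) • x := by module
  have hfuv : 2 - δ/2 * ε ≤ f (u - v) := by
    rw [hsplit]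
    rw [map_add, map_sub, map_smul, hfx]
    have h7 := neg_abs_le (f (u - x))
    have h8 := le_abs_self (f (v + x))
    rw [Real.norm_eq_abs] at hu1 hv1
    have := abs_le.1 hu1
    have := abs_le.1 hv1
    simp only [smul_eq_mul, mul_one]
    linarith [(abs_le.1 hu1).1, (abs_le.1 hv1).2]
  have hup : f (u - v) ≤ 2 - δ * ε := by
    calc f (u - v) ≤ ‖f (u - v)‖ := Real.le_norm_self _
      _ ≤ ‖f‖ * ‖u - v‖ := ContinuousLinearMap.le_opNorm _ _
      _ ≤ 1 * (2 - δ * ε) := by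
          refine mul_le_mul hfnorm huv (norm_nonneg _) (by norm_num)
      _ = 2 - δ * ε := one_mul _
  nlinarith [hfuv, hup, mul_pos hδ hεpos]

end Stmt1Aux


/-- Proposition: local metric characterization of non-differentiability.
Let `X` be a finite-dimensional real normed space and `x` a point of the unit sphere.
The norm fails to be differentiable at `x` iff there exist `δ, ε₀ > 0` such that for
every `ε` with `0 < ε < ε₀` there are `u, v` on the unit sphere, both different from
`x` and `-x`, with `max ‖u - x‖ ‖v + x‖ ≤ ε` and `‖u - v‖ ≤ 2 - δ * ε`. -/
theorem stmt1 {X : Type*} [NormedAddCommGroup X] [NormedSpace ℝ X]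
    [FiniteDimensional ℝ X] (x : X) (hx : ‖x‖ = 1) :
    ¬ DifferentiableAt ℝ (fun z : X => ‖z‖) x ↔
      ∃ δ > (0:ℝ), ∃ ε₀ > (0:ℝ), ∀ ε : ℝ, 0 < ε → ε < ε₀ →
        ∃ u v : X, ‖u‖ = 1 ∧ ‖v‖ = 1 ∧ u ≠ x ∧ u ≠ -x ∧ v ≠ x ∧ v ≠ -x ∧
          max ‖u - x‖ ‖v + x‖ ≤ ε ∧ ‖u - v‖ ≤ 2 - δ * ε := by
  constructor
  · intro hnd
    have h1 : ¬ ∀ y : X, Stmt1Aux.phi x y + Stmt1Aux.phi x (-y) ≤ 0 :=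
      fun H => hnd (Stmt1Aux.differentiable_of_sym x hx H)
    push_neg at h1
    obtain ⟨y, hy⟩ := h1
    exact Stmt1Aux.construction x hx hy
  · rintro ⟨δ, hδ, ε₀, hε₀, hcond⟩ hd
    exact Stmt1Aux.reverse x hx hd hδ hε₀ hcond
end

section
/- Let X and Y be finite-dimensional normed spaces and suppose there exists a surjective isometry τ : S_X → S_Y between their unit spheres. Then the norm of Y is differentiable (at every nonzero point) if and only if the norm of X is differentiable (at every nonzero point). -/
open Asymptotics Filter Topology

namespace Stmt2Aux

/-- A norming functional at a point of differentiability equals the derivative (pointwise). -/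
lemma support_eq_fderiv {E : Type*} [NormedAddCommGroup E] [NormedSpace ℝ E]
    {z : E} (hd : DifferentiableAt ℝ (fun x : E => ‖x‖) z)
    (χ : E →L[ℝ] ℝ) (hle : ∀ y, χ y ≤ ‖y‖) (hz : χ z = ‖z‖) (y : E) :
    χ y = (fderiv ℝ (fun x : E => ‖x‖) z) y := by
  set f := fderiv ℝ (fun x : E => ‖x‖) z with hf
  have hF : (fun h => ‖z + h‖ - ‖z‖ - f h) =o[𝓝 (0:E)] (fun h => h) :=
    hasFDerivAt_iff_isLittleO_nhds_zero.mp hd.hasFDerivAt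
  have main : ∀ v : E, χ v ≤ f v := by
    intro v
    refine le_of_forall_pos_le_add ?_
    intro ε hε
    have hc : (0:ℝ) < ε / (‖v‖ + 1) := by positivity
    have hev := isLittleO_iff.mp hF hc
    obtain ⟨δ, hδ, hδ'⟩ := Metric.eventually_nhds_iff.mp hev
    set t : ℝ := δ / (2 * (‖v‖ + 1)) with ht
    have htpos : 0 < t := by positivity
    have hnorm : ‖t • v‖ < δ := by
      rw [norm_smul, Real.norm_eq_abs, abs_of_pos htpos]
      calc t * ‖v‖ ≤ t * (‖v‖ + 1) := by nlinarith [norm_nonneg v]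
        _ = δ / 2 := by rw [ht]; field_simp
        _ < δ := by linarith
    have hb := hδ' (show dist (t • v) (0:E) < δ by rwa [dist_zero_right])
    -- hb : ‖‖z + t•v‖ - ‖z‖ - f (t•v)‖ ≤ ε/(‖v‖+1) * ‖t•v‖
    have h1 : ‖z + t • v‖ - ‖z‖ - f (t • v) ≤ ε / (‖v‖ + 1) * ‖t • v‖ :=
      le_trans (le_abs_self _) hb
    have h2 : χ (z + t • v) ≤ ‖z + t • v‖ := hle _
    have h3 : χ (z + t • v) = ‖z‖ + t * χ v := by
      rw [map_add, hz, map_smul]; rfl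
    have h4 : f (t • v) = t * f v := by rw [map_smul]; rfl
    have h5 : ‖t • v‖ = t * ‖v‖ := by
      rw [norm_smul, Real.norm_eq_abs, abs_of_pos htpos]
    have h6 : t * χ v ≤ t * f v + ε / (‖v‖ + 1) * (t * ‖v‖) := by
      rw [← h5, ← h4]; linarith [h3 ▸ h2]
    have h7 : χ v ≤ f v + ε / (‖v‖ + 1) * ‖v‖ := by
      have := (mul_le_mul_iff_right₀ htpos).mp (by linarith [h6] : t * χ v ≤ t * (f v + ε / (‖v‖ + 1) * ‖v‖))
      exact this
    have h8 : ε / (‖v‖ + 1) * ‖v‖ ≤ ε := by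
      rw [div_mul_eq_mul_div, div_le_iff₀ (by positivity)]
      nlinarith [norm_nonneg v]
    linarith
  have h₁ := main y
  have h₂ := main (-y)
  rw [map_neg, map_neg] at h₂
  linarith


lemma diff_norm_smul {E : Type*} [NormedAddCommGroup E] [NormedSpace ℝ E]
    {u : E} (hd : DifferentiableAt ℝ (fun x : E => ‖x‖) u) {c : ℝ} (hc : 0 < c) :
    DifferentiableAt ℝ (fun x : E => ‖x‖) (c • u) := by
  set f := fderiv ℝ (fun x : E => ‖x‖) u with hf
  have hF : (fun h => ‖u + h‖ - ‖u‖ - f h) =o[𝓝 (0:E)] (fun h => h) :=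
    hasFDerivAt_iff_isLittleO_nhds_zero.mp hd.hasFDerivAt
  have hten : Tendsto (fun h : E => c⁻¹ • h) (𝓝 0) (𝓝 0) := by
    have : Continuous (fun h : E => c⁻¹ • h) := continuous_const_smul _
    simpa using this.tendsto (0:E)
  have comp := hF.comp_tendsto hten
  -- comp : (fun h => ‖u + c⁻¹ • h‖ - ‖u‖ - f (c⁻¹ • h)) =o[𝓝 0] fun h => c⁻¹ • h
  have smc := comp.const_smul_left c
  have hbig : (fun h : E => c⁻¹ • h) =O[𝓝 (0:E)] (fun h => h) := by
    refine isBigO_of_le' (c := ‖c⁻¹‖) _ (fun x => ?_)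
    rw [norm_smul]
  have final := smc.trans_isBigO hbig
  have heq : (fun h : E => c • (‖u + c⁻¹ • h‖ - ‖u‖ - f (c⁻¹ • h)))
      = fun h : E => ‖c • u + h‖ - ‖c • u‖ - f h := by
    funext h
    have h1 : ‖c • u + h‖ = c * ‖u + c⁻¹ • h‖ := by
      rw [show c • u + h = c • (u + c⁻¹ • h) by rw [smul_add, smul_inv_smul₀ (ne_of_gt hc)],
        norm_smul, Real.norm_eq_abs, abs_of_pos hc]
    have h2 : ‖c • u‖ = c * ‖u‖ := by
      rw [norm_smul, Real.norm_eq_abs, abs_of_pos hc]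
    have h3 : f (c⁻¹ • h) = c⁻¹ * f h := by rw [map_smul]; rfl
    simp only [smul_eq_mul, h1, h2, h3]
    field_simp
  have final2 : (fun h : E => ‖c • u + h‖ - ‖c • u‖ - f h) =o[𝓝 (0:E)] (fun h => h) := by
    rw [← heq]
    exact final.congr_left (fun h => by simp [Pi.smul_apply, Function.comp])
  have : HasFDerivAt (fun x : E => ‖x‖) f (c • u) :=
    hasFDerivAt_iff_isLittleO_nhds_zero.mpr final2
  exact this.differentiableAt


/-- Clean-context arithmetic: the final quadratic estimate. -/
lemma sigma_le {σ t ε K : ℝ} (hσ0 : 0 ≤ σ) (hσ2t : σ ≤ 2 * t) (htpos : 0 < t)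
    (ht3 : t ≤ 1 / 8) (hεpos : 0 < ε) (hε1 : ε ≤ 1) (hKdef : K = 6 * (ε * t) + 4 * t ^ 2)
    (e2 : (2 - K) * ((2 + σ) ^ 2 - 4 * t ^ 2) ≤ 4 * (2 + σ)) :
    σ ≤ 48 * (ε * t) + 32 * t ^ 2 := by
  have hεt : 0 ≤ ε * t := by positivity
  have ht2 : 0 ≤ t ^ 2 := sq_nonneg t
  have hK0 : 0 ≤ K := by rw [hKdef]; positivity
  have hεt8 : ε * t ≤ 1 / 8 := by
    calc ε * t ≤ 1 * t := mul_le_mul_of_nonneg_right hε1 htpos.le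
      _ = t := one_mul t
      _ ≤ 1 / 8 := ht3
  have ht64 : t ^ 2 ≤ 1 / 64 := by nlinarith
  have hK2 : K ≤ 7 / 4 := by rw [hKdef]; nlinarith
  rcases le_or_gt (2 * σ) (K * (2 + σ)) with hcase | hcase
  · nlinarith
  · have e3 : (2 + σ) * (2 * σ - K * (2 + σ)) ≤ 8 * t ^ 2 := by nlinarith
    nlinarith

set_option maxHeartbeats 1000000 in
lemma key {X Y : Type*} [NormedAddCommGroup X] [NormedSpace ℝ X]
    [NormedAddCommGroup Y] [NormedSpace ℝ Y] (τ : X → Y)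
    (hsurj : ∀ w : Y, ‖w‖ = 1 → ∃ u : X, ‖u‖ = 1 ∧ τ u = w)
    (hiso : ∀ u v : X, ‖u‖ = 1 → ‖v‖ = 1 → ‖τ u - τ v‖ = ‖u - v‖)
    (hX : ∀ u : X, u ≠ 0 → DifferentiableAt ℝ (fun z : X => ‖z‖) u) :
    ∀ w : Y, w ≠ 0 → DifferentiableAt ℝ (fun z : Y => ‖z‖) w := by
  suffices main : ∀ w₀ : Y, ‖w₀‖ = 1 → DifferentiableAt ℝ (fun z : Y => ‖z‖) w₀ by
    intro w hw
    have hc : 0 < ‖w‖ := norm_pos_iff.mpr hw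
    have hw₀ : ‖(‖w‖⁻¹ • w)‖ = 1 := by
      rw [norm_smul, Real.norm_eq_abs, abs_of_pos (by positivity)]
      field_simp
    have := diff_norm_smul (main _ hw₀) hc
    rwa [smul_inv_smul₀ (ne_of_gt hc)] at this
  intro w₀ hw₀
  obtain ⟨x₀, hx₀, hτx₀⟩ := hsurj w₀ hw₀
  obtain ⟨x₁, hx₁, hτx₁⟩ := hsurj (-w₀) (by rw [norm_neg, hw₀])
  -- distance between the preimages is 2
  have hx01 : ‖x₀ - x₁‖ = 2 := by
    have h1 := hiso x₀ x₁ hx₀ hx₁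
    rw [hτx₀, hτx₁, sub_neg_eq_add, ← two_smul ℝ w₀, norm_smul] at h1
    rw [← h1, Real.norm_eq_abs, hw₀]
    norm_num
  -- the norming functional χ of x₀ - x₁
  obtain ⟨χ, hχn, hχv⟩ := exists_dual_vector ℝ (x₀ - x₁)
    (by intro hz; rw [hz] at hx01; norm_num at hx01)
  have hχv' : χ (x₀ - x₁) = 2 := by rw [← hx01]; exact_mod_cast hχv
  have hbχ : ∀ y, χ y ≤ ‖y‖ := fun y => by
    have := χ.le_opNorm y
    rw [hχn, one_mul, Real.norm_eq_abs] at this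
    exact le_trans (le_abs_self _) this
  have hχx₀ : χ x₀ = 1 := by
    have h2 : χ x₀ - χ x₁ = 2 := by rw [← map_sub, hχv']
    have h3 : χ x₀ ≤ 1 := by have := hbχ x₀; rwa [hx₀] at this
    have h4 : -χ x₁ ≤ 1 := by
      have := hbχ (-x₁); rwa [map_neg, norm_neg, hx₁] at this
    linarith
  have hχx₁ : χ x₁ = -1 := by
    have h2 : χ x₀ - χ x₁ = 2 := by rw [← map_sub, hχv']
    linarith
  -- differentiability of the X-norm at x₀ and -x₁, with derivative χ
  have hx₀ne : x₀ ≠ 0 := by intro hz; rw [hz, norm_zero] at hx₀; norm_num at hx₀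
  have hx₁ne : (-x₁ : X) ≠ 0 := by
    intro hz; rw [neg_eq_zero] at hz; rw [hz, norm_zero] at hx₁; norm_num at hx₁
  have hfd₀ : HasFDerivAt (fun x : X => ‖x‖) χ x₀ := by
    have he : χ = fderiv ℝ (fun x : X => ‖x‖) x₀ :=
      ContinuousLinearMap.ext (support_eq_fderiv (hX x₀ hx₀ne) χ hbχ (by rw [hx₀, hχx₀]))
    rw [he]; exact (hX x₀ hx₀ne).hasFDerivAt
  have hfd₁ : HasFDerivAt (fun x : X => ‖x‖) χ (-x₁) := by
    have he : χ = fderiv ℝ (fun x : X => ‖x‖) (-x₁) :=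
      ContinuousLinearMap.ext (support_eq_fderiv (hX (-x₁) hx₁ne) χ hbχ
        (by rw [norm_neg, hx₁, map_neg, hχx₁]; norm_num))
    rw [he]; exact (hX (-x₁) hx₁ne).hasFDerivAt
  -- the Y-side support functional at w₀
  obtain ⟨f, hfn, hfv⟩ := exists_dual_vector ℝ w₀
    (by intro hz; rw [hz] at hw₀; norm_num at hw₀)
  have hfv' : f w₀ = 1 := by rw [← hw₀]; exact_mod_cast hfv
  have hbf : ∀ y, f y ≤ ‖y‖ := fun y => by
    have := f.le_opNorm y
    rw [hfn, one_mul, Real.norm_eq_abs] at this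
    exact le_trans (le_abs_self _) this
  -- goal: HasFDerivAt at w₀ with derivative f
  have final : HasFDerivAt (fun z : Y => ‖z‖) f w₀ := by
    rw [hasFDerivAt_iff_isLittleO_nhds_zero, isLittleO_iff]
    intro C hC
    -- extract δ₁, δ₂ from the little-o at x₀, -x₁
    set ε : ℝ := min (C / 100) 1 with hε
    have hεpos : 0 < ε := by positivity
    have hε1 : ε ≤ 1 := min_le_right _ _
    have hεC : ε ≤ C / 100 := min_le_left _ _
    obtain ⟨δ₁, hδ₁pos, H₁⟩ := Metric.eventually_nhds_iff.mp
      (isLittleO_iff.mp (hasFDerivAt_iff_isLittleO_nhds_zero.mp hfd₀) hεpos)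
    obtain ⟨δ₂, hδ₂pos, H₂⟩ := Metric.eventually_nhds_iff.mp
      (isLittleO_iff.mp (hasFDerivAt_iff_isLittleO_nhds_zero.mp hfd₁) hεpos)
    rw [Metric.eventually_nhds_iff]
    refine ⟨min (min (δ₁ / 4) (δ₂ / 4)) (min (1 / 8) (C / 100)), by positivity, ?_⟩
    intro h hh
    rw [dist_zero_right] at hh
    rcases eq_or_ne h 0 with rfl | hne
    · simp
    set t : ℝ := ‖h‖ with htdef
    have htpos : 0 < t := norm_pos_iff.mpr hne
    have ht1 : t < δ₁ / 4 := lt_of_lt_of_le hh (le_trans (min_le_left _ _) (min_le_left _ _))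
    have ht2 : t < δ₂ / 4 := lt_of_lt_of_le hh (le_trans (min_le_left _ _) (min_le_right _ _))
    have ht3 : t ≤ 1 / 8 := le_of_lt (lt_of_lt_of_le hh (le_trans (min_le_right _ _) (min_le_left _ _)))
    have ht4 : t ≤ C / 100 := le_of_lt (lt_of_lt_of_le hh (le_trans (min_le_right _ _) (min_le_right _ _)))
    -- norms of w₀ ± h
    set np : ℝ := ‖w₀ + h‖ with hnp
    set nm : ℝ := ‖w₀ - h‖ with hnm
    have hnp_ub : np ≤ 1 + t := by
      rw [hnp, htdef, ← hw₀]; exact norm_add_le _ _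
    have hnp_lb : 1 - t ≤ np := by
      have h1 := norm_sub_norm_le w₀ (-h)
      rw [sub_neg_eq_add, norm_neg, ← htdef, hw₀, ← hnp] at h1
      linarith
    have hnm_ub : nm ≤ 1 + t := by
      rw [hnm, htdef, ← hw₀]; exact norm_sub_le _ _
    have hnm_lb : 1 - t ≤ nm := by
      have h1 := norm_sub_norm_le w₀ h
      rw [← htdef, hw₀, ← hnm] at h1
      linarith
    have hnppos : (3:ℝ)/4 ≤ np := by linarith
    have hnmpos : (3:ℝ)/4 ≤ nm := by linarith
    have hnpne : np ≠ 0 := by intro hz; rw [hz] at hnppos; norm_num at hnppos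
    have hnmne : nm ≠ 0 := by intro hz; rw [hz] at hnmpos; norm_num at hnmpos
    have hnpinv : np⁻¹ ≤ 4/3 := by
      rw [show (4:ℝ)/3 = ((3:ℝ)/4)⁻¹ by norm_num]
      exact inv_anti₀ (by norm_num) hnppos
    have hnminv : nm⁻¹ ≤ 4/3 := by
      rw [show (4:ℝ)/3 = ((3:ℝ)/4)⁻¹ by norm_num]
      exact inv_anti₀ (by norm_num) hnmpos
    -- normalized points p, q on the Y-sphere
    set p : Y := np⁻¹ • (w₀ + h) with hpdef
    set q : Y := nm⁻¹ • (h - w₀) with hqdef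
    have hp1 : ‖p‖ = 1 := by
      rw [hpdef, norm_smul, Real.norm_eq_abs, abs_of_pos (inv_pos.mpr (by linarith)), ← hnp,
        inv_mul_cancel₀ hnpne]
    have hq1 : ‖q‖ = 1 := by
      rw [hqdef, norm_smul, Real.norm_eq_abs, abs_of_pos (inv_pos.mpr (by linarith)),
        norm_sub_rev, ← hnm, inv_mul_cancel₀ hnmne]
    obtain ⟨a, ha1, hτa⟩ := hsurj p hp1
    obtain ⟨d, hd1, hτd⟩ := hsurj q hq1
    -- p is 3t-close to w₀, q is 3t-close to -w₀
    have habs_np : |1 - np| ≤ t := abs_le.mpr ⟨by linarith, by linarith⟩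
    have habs_nm : |nm - 1| ≤ t := abs_le.mpr ⟨by linarith, by linarith⟩
    have hpw : ‖p - w₀‖ ≤ 3 * t := by
      have hid : p - w₀ = np⁻¹ • (h + (1 - np) • w₀) := by
        rw [hpdef]; match_scalars <;> (field_simp; try ring)
      rw [hid, norm_smul, Real.norm_eq_abs, abs_of_pos (inv_pos.mpr (by linarith))]
      have hb1 : ‖h + (1 - np) • w₀‖ ≤ t + |1 - np| := by
        have := norm_add_le h ((1 - np) • w₀)
        rw [norm_smul, Real.norm_eq_abs, hw₀, mul_one, ← htdef] at this
        exact this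
      have hb2 : ‖h + (1 - np) • w₀‖ ≤ 2 * t := by linarith
      calc np⁻¹ * ‖h + (1 - np) • w₀‖ ≤ (4/3) * (2 * t) := by
            apply mul_le_mul hnpinv hb2 (norm_nonneg _) (by norm_num)
        _ ≤ 3 * t := by linarith
    have hqw : ‖q - (-w₀)‖ ≤ 3 * t := by
      have hid : q - (-w₀) = nm⁻¹ • (h + (nm - 1) • w₀) := by
        rw [hqdef]; match_scalars <;> (field_simp; try ring)
      rw [hid, norm_smul, Real.norm_eq_abs, abs_of_pos (inv_pos.mpr (by linarith))]
      have hb1 : ‖h + (nm - 1) • w₀‖ ≤ t + |nm - 1| := by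
        have := norm_add_le h ((nm - 1) • w₀)
        rw [norm_smul, Real.norm_eq_abs, hw₀, mul_one, ← htdef] at this
        exact this
      have hb2 : ‖h + (nm - 1) • w₀‖ ≤ 2 * t := by linarith
      calc nm⁻¹ * ‖h + (nm - 1) • w₀‖ ≤ (4/3) * (2 * t) := by
            apply mul_le_mul hnminv hb2 (norm_nonneg _) (by norm_num)
        _ ≤ 3 * t := by linarith
    -- transfer through the isometry
    have hax : ‖a - x₀‖ = ‖p - w₀‖ := by
      rw [← hiso a x₀ ha1 hx₀, hτa, hτx₀]
    have hdx : ‖d - x₁‖ = ‖q - (-w₀)‖ := by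
      rw [← hiso d x₁ hd1 hx₁, hτd, hτx₁]
    have hax3 : ‖a - x₀‖ ≤ 3 * t := by rw [hax]; exact hpw
    have hdx3 : ‖d - x₁‖ ≤ 3 * t := by rw [hdx]; exact hqw
    -- χ a ≥ 1 - 3εt
    have hχa : 1 - 3 * (ε * t) ≤ χ a := by
      have hsmall : dist (a - x₀) (0:X) < δ₁ := by
        rw [dist_zero_right]; calc ‖a - x₀‖ ≤ 3 * t := hax3
          _ < δ₁ := by linarith
      have hk := H₁ hsmall
      rw [show x₀ + (a - x₀) = a by abel, ha1, hx₀] at hk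
      have habs : |χ (a - x₀)| ≤ ε * (3 * t) := by
        have h1 : ‖(1:ℝ) - 1 - χ (a - x₀)‖ = |χ (a - x₀)| := by
          rw [Real.norm_eq_abs, show (1:ℝ) - 1 - χ (a - x₀) = -(χ (a - x₀)) by ring, abs_neg]
        rw [h1] at hk
        calc |χ (a - x₀)| ≤ ε * ‖a - x₀‖ := hk
          _ ≤ ε * (3 * t) := by
            apply mul_le_mul_of_nonneg_left hax3 (le_of_lt hεpos)
      have h2 : χ (a - x₀) = χ a - 1 := by rw [map_sub, hχx₀]
      have h3 := (abs_le.mp habs).1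
      rw [h2] at h3
      linarith
    -- χ d ≤ -1 + 3εt
    have hχd : χ d ≤ -1 + 3 * (ε * t) := by
      have hx1d : ‖x₁ - d‖ ≤ 3 * t := by rw [norm_sub_rev]; exact hdx3
      have hsmall : dist (x₁ - d) (0:X) < δ₂ := by
        rw [dist_zero_right]; calc ‖x₁ - d‖ ≤ 3 * t := hx1d
          _ < δ₂ := by linarith
      have hk := H₂ hsmall
      rw [show -x₁ + (x₁ - d) = -d by abel, norm_neg, norm_neg, hd1, hx₁] at hk
      have habs : |1 + χ d| ≤ ε * (3 * t) := by
        have h1 : ‖(1:ℝ) - 1 - χ (x₁ - d)‖ = |1 + χ d| := by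
          rw [Real.norm_eq_abs, map_sub, hχx₁,
            show (1:ℝ) - 1 - (-1 - χ d) = 1 + χ d by ring]
        rw [h1] at hk
        calc |1 + χ d| ≤ ε * ‖x₁ - d‖ := hk
          _ ≤ ε * (3 * t) := by
            apply mul_le_mul_of_nonneg_left hx1d (le_of_lt hεpos)
      have h3 := (abs_le.mp habs).2
      linarith
    -- lower bound on ‖p - q‖
    have hpq : ‖p - q‖ = ‖a - d‖ := by
      rw [← hiso a d ha1 hd1, hτa, hτd]
    have hlow : 2 - 6 * (ε * t) ≤ ‖p - q‖ := by
      have hineq : χ (a - d) ≤ ‖a - d‖ := hbχ _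
      rw [map_sub] at hineq
      rw [hpq]
      linarith
    -- the quantity A = np⁻¹ + nm⁻¹
    set A : ℝ := np⁻¹ + nm⁻¹ with hA
    have hApos : 0 < A := by
      have h1 : 0 < np⁻¹ := inv_pos.mpr (by linarith)
      have h2 : 0 < nm⁻¹ := inv_pos.mpr (by linarith)
      rw [hA]; linarith
    have hidA : A • w₀ = (p - q) - (np⁻¹ - nm⁻¹) • h := by
      rw [hpdef, hqdef, hA]; module
    have hAnorm : ‖A • w₀‖ = A := by
      rw [norm_smul, Real.norm_eq_abs, abs_of_pos hApos, hw₀, mul_one]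
    have hd2t : |nm - np| ≤ 2 * t := by
      have h1 := abs_norm_sub_norm_le (w₀ - h) (w₀ + h)
      have hcalc : (w₀ - h) - (w₀ + h) = -(h + h) := by abel
      rw [hcalc, norm_neg, ← hnp, ← hnm] at h1
      have h2 : ‖h + h‖ ≤ 2 * t := by
        have := norm_add_le h h; rw [← htdef] at this; linarith
      linarith [h1, h2]
    have h3 : (9:ℝ)/16 ≤ np * nm := by
      have := mul_le_mul hnppos hnmpos (by norm_num) (by linarith)
      linarith
    have h3pos : (0:ℝ) < np * nm := by linarith
    have hdiffbound : ‖(np⁻¹ - nm⁻¹) • h‖ ≤ 4 * t ^ 2 := by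
      rw [norm_smul, Real.norm_eq_abs, ← htdef]
      have h1 : np⁻¹ - nm⁻¹ = (nm - np) / (np * nm) := by field_simp
      have h4 : |np⁻¹ - nm⁻¹| ≤ 4 * t := by
        rw [h1, abs_div, abs_of_pos h3pos]
        rw [div_le_iff₀ h3pos]
        have h5 : 4 * t * (9/16) ≤ 4 * t * (np * nm) :=
          mul_le_mul_of_nonneg_left h3 (by linarith)
        calc |nm - np| ≤ 2 * t := hd2t
          _ ≤ 4 * t * (9/16) := by linarith
          _ ≤ 4 * t * (np * nm) := h5
      calc |np⁻¹ - nm⁻¹| * t ≤ (4 * t) * t := by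
            apply mul_le_mul_of_nonneg_right h4 (le_of_lt htpos)
        _ = 4 * t ^ 2 := by ring
    have hAlow : 2 - 6 * (ε * t) - 4 * t ^ 2 ≤ A := by
      have h5 := norm_sub_norm_le (p - q) ((np⁻¹ - nm⁻¹) • h)
      rw [← hidA, hAnorm] at h5
      have h6 : 2 - 6 * (ε * t) - 4 * t ^ 2 ≤ ‖p - q‖ - ‖(np⁻¹ - nm⁻¹) • h‖ := by
        linarith only [hlow, hdiffbound]
      exact le_trans h6 h5
    -- σ = np + nm - 2
    set σ : ℝ := np + nm - 2 with hσ
    have hσ0 : 0 ≤ σ := by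
      have h1 : ‖(w₀ + h) + (w₀ - h)‖ ≤ np + nm := by
        rw [hnp, hnm]; exact norm_add_le _ _
      have hcalc : (w₀ + h) + (w₀ - h) = (2:ℝ) • w₀ := by module
      rw [hcalc, norm_smul, Real.norm_eq_abs, hw₀, mul_one] at h1
      have : |(2:ℝ)| = 2 := by norm_num
      rw [this] at h1
      rw [hσ]; linarith
    have hσ2t : σ ≤ 2 * t := by rw [hσ]; linarith
    have hAn : A * (np * nm) = 2 + σ := by
      rw [hA, hσ]; field_simp; ring
    have hsq : (nm - np) ^ 2 ≤ 4 * t ^ 2 := by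
      have h6 := sq_le_sq' (by linarith [(abs_le.mp hd2t).1]) (abs_le.mp hd2t).2
      calc (nm - np) ^ 2 ≤ (2 * t) ^ 2 := h6
        _ = 4 * t ^ 2 := by ring
    have hquad : (2 + σ) ^ 2 - 4 * t ^ 2 ≤ 4 * (np * nm) := by
      have hiden : (np + nm) ^ 2 - (nm - np) ^ 2 = 4 * (np * nm) := by ring
      have h7 : (2 + σ) ^ 2 = (np + nm) ^ 2 := by rw [hσ]; ring_nf
      rw [h7]
      linarith
    -- the key algebraic bound : σ ≤ 48εt + 32t²
    have hσbound : σ ≤ 48 * (ε * t) + 32 * t ^ 2 := by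
      set K : ℝ := 6 * (ε * t) + 4 * t ^ 2 with hKdef
      have hεt0 : 0 ≤ ε * t := by positivity
      have hεt8 : ε * t ≤ 1 * t := mul_le_mul_of_nonneg_right hε1 htpos.le
      have ht64 : t ^ 2 ≤ t * (1/8) := by
        calc t ^ 2 = t * t := sq t
          _ ≤ t * (1/8) := mul_le_mul_of_nonneg_left ht3 htpos.le
      have hK2 : K ≤ 7/4 := by rw [hKdef]; linarith
      have e1 : (2 - K) * (np * nm) ≤ 2 + σ := by
        rw [← hAn]
        apply mul_le_mul_of_nonneg_right _ (by linarith : (0:ℝ) ≤ np * nm)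
        rw [hKdef]; linarith [hAlow]
      have e2 : (2 - K) * ((2 + σ) ^ 2 - 4 * t ^ 2) ≤ 4 * (2 + σ) := by
        calc (2 - K) * ((2 + σ) ^ 2 - 4 * t ^ 2) ≤ (2 - K) * (4 * (np * nm)) := by
              apply mul_le_mul_of_nonneg_left hquad (by linarith)
          _ = 4 * ((2 - K) * (np * nm)) := by ring
          _ ≤ 4 * (2 + σ) := by linarith
      exact sigma_le hσ0 hσ2t htpos ht3 hεpos hε1 hKdef e2
    -- conclude
    have hE0 : 0 ≤ np - 1 - f h := by
      have h1 := hbf (w₀ + h)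
      rw [map_add, hfv', ← hnp] at h1
      linarith
    have hEσ : np - 1 - f h ≤ σ := by
      have h1 := hbf (w₀ - h)
      rw [map_sub, hfv', ← hnm] at h1
      rw [hσ]; linarith
    have hfinal : |np - 1 - f h| ≤ σ := by
      rw [abs_of_nonneg hE0]; exact hEσ
    rw [Real.norm_eq_abs, hw₀]
    have b1 : ε * t ≤ C / 100 * t := mul_le_mul_of_nonneg_right hεC htpos.le
    have b2 : t ^ 2 ≤ C / 100 * t := by
      calc t ^ 2 = t * t := sq t
        _ ≤ C / 100 * t := mul_le_mul_of_nonneg_right ht4 htpos.le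
    have b3 : 0 ≤ C * t := by positivity
    calc |np - 1 - f h| ≤ σ := hfinal
      _ ≤ 48 * (ε * t) + 32 * t ^ 2 := hσbound
      _ ≤ C * t := by linarith
  exact final.differentiableAt


end Stmt2Aux

/-- Let `X`, `Y` be finite-dimensional real normed spaces admitting a
surjective isometry `τ` between their unit spheres. Then the norm of `Y` is
differentiable at every nonzero point iff the norm of `X` is differentiable at every
nonzero point. -/
theorem stmt2 {X Y : Type*} [NormedAddCommGroup X] [NormedSpace ℝ X]
    [NormedAddCommGroup Y] [NormedSpace ℝ Y]
    [FiniteDimensional ℝ X] [FiniteDimensional ℝ Y]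
    (τ : X → Y)
    (hmap : ∀ u : X, ‖u‖ = 1 → ‖τ u‖ = 1)
    (hsurj : ∀ w : Y, ‖w‖ = 1 → ∃ u : X, ‖u‖ = 1 ∧ τ u = w)
    (hiso : ∀ u v : X, ‖u‖ = 1 → ‖v‖ = 1 → ‖τ u - τ v‖ = ‖u - v‖) :
    (∀ w : Y, w ≠ 0 → DifferentiableAt ℝ (fun z : Y => ‖z‖) w) ↔
      (∀ u : X, u ≠ 0 → DifferentiableAt ℝ (fun z : X => ‖z‖) u) := by
  classical
  constructor
  · -- Y smooth → X smooth, via the inverse sphere map υ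
    intro hY
    let υ : Y → X := fun w => if h : ‖w‖ = 1 then (hsurj w h).choose else 0
    have hυmap : ∀ w : Y, ‖w‖ = 1 → ‖υ w‖ = 1 := by
      intro w h
      simp only [υ, dif_pos h]
      exact (hsurj w h).choose_spec.1
    have hυτ : ∀ w : Y, ∀ h : ‖w‖ = 1, τ (υ w) = w := by
      intro w h
      simp only [υ, dif_pos h]
      exact (hsurj w h).choose_spec.2
    have hυsurj : ∀ u : X, ‖u‖ = 1 → ∃ w : Y, ‖w‖ = 1 ∧ υ w = u := by
      intro u hu
      have h1 : ‖τ u‖ = 1 := hmap u hu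
      refine ⟨τ u, h1, ?_⟩
      have h2 : τ (υ (τ u)) = τ u := hυτ _ h1
      have h3 := hiso (υ (τ u)) u (hυmap _ h1) hu
      rw [h2, sub_self, norm_zero] at h3
      have h4 : υ (τ u) - u = 0 := norm_eq_zero.mp h3.symm
      exact sub_eq_zero.mp h4
    have hυiso : ∀ w w' : Y, ‖w‖ = 1 → ‖w'‖ = 1 → ‖υ w - υ w'‖ = ‖w - w'‖ := by
      intro w w' h h'
      have := hiso (υ w) (υ w') (hυmap w h) (hυmap w' h')
      rw [hυτ w h, hυτ w' h'] at this
      exact this.symm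
    exact Stmt2Aux.key υ hυsurj hυiso hY
  · -- X smooth → Y smooth
    intro hXd
    exact Stmt2Aux.key τ hsurj hiso hXd
end

section
/- On ℝ² with the hexagonal norm ‖(a,b)‖ = max{|a|,|b|} if ab ≥ 0 and ‖(a,b)‖ = |a| + |b| if ab < 0, the norm is not differentiable at x = (0,1), yet with y = (1, 1/3) and z = (1, 2/3) one has ‖γ_z(t) − y‖ = 1/3 + t for all t ∈ [−1/3, 1/3]; in particular t ↦ ‖γ_z(t) − y‖ is differentiable at t = 0. -/
/-- The hexagonal norm on `ℝ²`: `‖(a,b)‖ = max |a| |b|` if `a*b ≥ 0` and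
`|a| + |b|` if `a*b < 0`. -/
noncomputable def hexNorm (p : ℝ × ℝ) : ℝ :=
  if 0 ≤ p.1 * p.2 then max |p.1| |p.2| else |p.1| + |p.2|

/-- Remark: strict convexity cannot be dropped. For the hexagonal
norm on `ℝ²`, the norm is not differentiable at `x = (0,1)`; nevertheless, with
`y = (1, 1/3)` and `z = (1, 2/3)`, the natural parameterization of the unit sphere near
`z` is `t ↦ (1, 2/3 + t)` for `t ∈ [-1/3, 1/3]` (these points lie on the unit sphere and
the parameterization is arc-length), and along it `‖γ_z t - y‖ = 1/3 + t`; in particular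
`t ↦ ‖γ_z t - y‖` is differentiable at `t = 0`. -/
theorem stmt5 :
    (¬ DifferentiableAt ℝ hexNorm ((0:ℝ), (1:ℝ))) ∧
    (∀ t ∈ Set.Icc (-(1/3) : ℝ) (1/3), hexNorm (1, 2/3 + t) = 1) ∧
    (∀ s ∈ Set.Icc (-(1/3) : ℝ) (1/3), ∀ t ∈ Set.Icc (-(1/3) : ℝ) (1/3),
      hexNorm ((1, 2/3 + s) - (1, 2/3 + t)) = |s - t|) ∧
    (∀ t ∈ Set.Icc (-(1/3) : ℝ) (1/3),
      hexNorm ((1, 2/3 + t) - (1, 1/3)) = 1/3 + t) ∧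
    DifferentiableAt ℝ (fun t : ℝ => hexNorm ((1, 2/3 + t) - (1, 1/3))) 0 := by
  refine ⟨?_, ?_, ?_, ?_, ?_⟩
  · intro H
    have h1 : DifferentiableAt ℝ (fun h : ℝ => hexNorm (h, 1)) 0 := by
      have hd : DifferentiableAt ℝ (fun h : ℝ => ((h, 1) : ℝ × ℝ)) 0 :=
        (differentiableAt_id.prodMk (differentiableAt_const 1))
      exact H.comp 0 hd
    have h2 : DifferentiableAt ℝ (fun h : ℝ => 2 * (hexNorm (h, 1) - 1) + h) 0 :=
      ((h1.sub_const 1).const_mul 2).add differentiableAt_id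
    have h3 : (fun h : ℝ => 2 * (hexNorm (h, 1) - 1) + h) =ᶠ[nhds (0:ℝ)]
        (fun h => |h|) := by
      filter_upwards [Metric.ball_mem_nhds (0:ℝ) one_pos] with h hh
      simp only [Metric.mem_ball, Real.dist_eq, sub_zero] at hh
      unfold hexNorm
      rcases le_or_gt 0 h with hp | hn
      · rw [if_pos (by simpa using hp), abs_one, abs_of_nonneg hp,
          max_eq_right (by rw [abs_of_nonneg hp] at hh; linarith)]
        ring
      · rw [if_neg (by simpa using hn), abs_one, abs_of_neg hn]
        ring
    exact not_differentiableAt_abs_zero (h2.congr_of_eventuallyEq h3.symm)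
  · rintro t ⟨ht1, ht2⟩
    unfold hexNorm
    rw [if_pos (by simp; linarith)]
    simp only [abs_one]
    rw [abs_of_nonneg (by linarith), max_eq_left (by linarith)]
  · rintro s ⟨hs1, hs2⟩ t ⟨ht1, ht2⟩
    unfold hexNorm
    simp only [Prod.mk_sub_mk, sub_self]
    rw [if_pos (by simp), abs_zero]
    have : 2/3 + s - (2/3 + t) = s - t := by ring
    rw [this, max_eq_right (abs_nonneg _)]
  · rintro t ⟨ht1, ht2⟩
    unfold hexNorm
    simp only [Prod.mk_sub_mk, sub_self]
    rw [if_pos (by simp), abs_zero]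
    have : 2/3 + t - 1/3 = 1/3 + t := by ring
    rw [this, max_eq_right (abs_nonneg _), abs_of_nonneg (by linarith)]
  · have h3 : (fun t : ℝ => hexNorm ((1, 2/3 + t) - (1, 1/3))) =ᶠ[nhds (0:ℝ)]
        (fun t => 1/3 + t) := by
      filter_upwards [Metric.ball_mem_nhds (0:ℝ) (by norm_num : (0:ℝ) < 1/3)] with t ht
      simp only [Metric.mem_ball, Real.dist_eq, sub_zero] at ht
      have ht' := abs_lt.mp ht
      unfold hexNorm
      simp only [Prod.mk_sub_mk, sub_self]
      rw [if_pos (by simp), abs_zero]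
      have : 2/3 + t - 1/3 = 1/3 + t := by ring
      rw [this, max_eq_right (abs_nonneg _), abs_of_nonneg (by linarith [ht'.1])]
    exact (((differentiableAt_const (1/3:ℝ)).add differentiableAt_id).congr_of_eventuallyEq
      h3)
end

section
/- Let C ⊂ ℝ² be a Jordan curve enclosing a convex region whose four extreme points in the coordinate directions are all distinct: there are points c¹, c², c³, c⁴ ∈ C attaining respectively the minimum first coordinate, minimum second coordinate, maximum first coordinate, and maximum second coordinate on C, with these minima/maxima attained strictly (each extremal point strictly beats the other three in its coordinate). Then for every x ∈ ℝ² there exist u, v, w ∈ C and t ≠ 0 such that u − v = t·x, w has the same first coordinate as u, and w has the same second coordinate as v. -/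
open Set

namespace Stmt6Aux

variable {K : Set (ℝ × ℝ)}

noncomputable def bot (K : Set (ℝ × ℝ)) (a : ℝ) : ℝ := sInf {y | (a, y) ∈ K}
noncomputable def top (K : Set (ℝ × ℝ)) (a : ℝ) : ℝ := sSup {y | (a, y) ∈ K}

lemma slice_eq (K : Set (ℝ × ℝ)) (a : ℝ) :
    {y : ℝ | (a, y) ∈ K} = Prod.snd '' (K ∩ {p | p.1 = a}) := by
  ext y
  constructor
  · intro h; exact ⟨(a, y), ⟨h, rfl⟩, rfl⟩
  · rintro ⟨⟨pa, pb⟩, ⟨hp, h1⟩, rfl⟩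
    simp only [mem_setOf_eq] at h1 ⊢
    rw [← h1]; exact hp

lemma slice_compact (hKc : IsCompact K) (a : ℝ) : IsCompact {y | (a, y) ∈ K} := by
  rw [slice_eq]
  exact ((hKc.inter_right (isClosed_eq continuous_fst continuous_const)).image continuous_snd)

lemma bot_mem (hKc : IsCompact K) {a y : ℝ} (h : (a, y) ∈ K) : (a, bot K a) ∈ K :=
  (slice_compact hKc a).sInf_mem ⟨y, h⟩

lemma top_mem (hKc : IsCompact K) {a y : ℝ} (h : (a, y) ∈ K) : (a, top K a) ∈ K :=
  (slice_compact hKc a).sSup_mem ⟨y, h⟩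

lemma bot_le (hKc : IsCompact K) {a y : ℝ} (h : (a, y) ∈ K) : bot K a ≤ y :=
  csInf_le (slice_compact hKc a).bddBelow h

lemma le_top (hKc : IsCompact K) {a y : ℝ} (h : (a, y) ∈ K) : y ≤ top K a :=
  le_csSup (slice_compact hKc a).bddAbove h

lemma mem_frontier (hKc : IsCompact K) {p : ℝ × ℝ} (hp : p ∈ K)
    (h : ∀ ε : ℝ, 0 < ε → ∃ q : ℝ × ℝ, dist q p < ε ∧ q ∉ K) : p ∈ frontier K := by
  rw [hKc.isClosed.frontier_eq]
  refine ⟨hp, fun hint => ?_⟩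
  obtain ⟨ε, hε, hball⟩ := Metric.mem_nhds_iff.1 (mem_interior_iff_mem_nhds.1 hint)
  obtain ⟨q, hq1, hq2⟩ := h ε hε
  exact hq2 (hball hq1)

lemma bot_frontier (hKc : IsCompact K) {a y : ℝ} (h : (a, y) ∈ K) :
    (a, bot K a) ∈ frontier K := by
  refine mem_frontier hKc (bot_mem hKc h) (fun ε hε => ⟨(a, bot K a - ε/2), ?_, ?_⟩)
  · have h1 : dist ((a, bot K a - ε/2) : ℝ × ℝ) (a, bot K a) = ε/2 := by
      rw [Prod.dist_eq]
      simp only [dist_self, Real.dist_eq]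
      rw [show bot K a - ε/2 - bot K a = -(ε/2) by ring, abs_neg, abs_of_pos (by linarith)]
      exact max_eq_right (by positivity)
    rw [h1]; linarith
  · intro hmem
    have := bot_le hKc hmem
    linarith

lemma top_frontier (hKc : IsCompact K) {a y : ℝ} (h : (a, y) ∈ K) :
    (a, top K a) ∈ frontier K := by
  refine mem_frontier hKc (top_mem hKc h) (fun ε hε => ⟨(a, top K a + ε/2), ?_, ?_⟩)
  · have h1 : dist ((a, top K a + ε/2) : ℝ × ℝ) (a, top K a) = ε/2 := by
      rw [Prod.dist_eq]
      simp only [dist_self, Real.dist_eq]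
      rw [show top K a + ε/2 - top K a = ε/2 by ring, abs_of_pos (by linarith)]
      exact max_eq_right (by positivity)
    rw [h1]; linarith
  · intro hmem
    have := le_top hKc hmem
    linarith


lemma bot_continuousOn (hKc : IsCompact K) (hKv : Convex ℝ K) :
    ContinuousOn (bot K) (Prod.fst '' K) := by
  rw [Metric.continuousOn_iff]
  rintro b hb ε hε
  obtain ⟨p₀, hp₀, hb₀⟩ := hb
  have hp₀' : ((b : ℝ), p₀.2) ∈ K := by rw [← hb₀]; exact hp₀
  have hbK : (b, bot K b) ∈ K := bot_mem hKc hp₀'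
  -- lower semicontinuity via closed projection
  have hFc : IsCompact (Prod.fst '' (K ∩ {p : ℝ × ℝ | p.2 ≤ bot K b - ε/2})) :=
    (hKc.inter_right (isClosed_le continuous_snd continuous_const)).image continuous_fst
  have haF : b ∈ (Prod.fst '' (K ∩ {p : ℝ × ℝ | p.2 ≤ bot K b - ε/2}))ᶜ := by
    rintro ⟨q, ⟨hqK, hq2⟩, hq1⟩
    have hq' : ((b : ℝ), q.2) ∈ K := by rw [← hq1]; exact hqK
    have := bot_le hKc hq'
    simp only [mem_setOf_eq] at hq2
    linarith
  obtain ⟨δ₁, hδ₁, hball₁⟩ := Metric.isOpen_iff.1 hFc.isClosed.isOpen_compl b haF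
  -- upper semicontinuity via convexity
  obtain ⟨pM, hpMK, hpM⟩ := hKc.exists_isMaxOn ⟨p₀, hp₀⟩ continuous_fst.continuousOn
  obtain ⟨pm, hpmK, hpm⟩ := hKc.exists_isMinOn ⟨p₀, hp₀⟩ continuous_fst.continuousOn
  have hbM : b ≤ pM.1 := hpM hp₀'
  have hmb : pm.1 ≤ b := hpm hp₀'
  have husc : ∀ P : ℝ × ℝ, P ∈ K → P.1 ≠ b →
      ∃ δR > 0, ∀ a : ℝ, (∃ y, (a, y) ∈ K) → ((b < a ∧ a ≤ P.1) ∨ (P.1 ≤ a ∧ a < b)) →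
        |a - b| < δR → bot K a < bot K b + ε := by
    intro P hPK hPb'
    have hPb : P.1 - b ≠ 0 := sub_ne_zero.2 hPb'
    have hPbpos : 0 < |P.1 - b| := abs_pos.2 hPb
    refine ⟨ε * |P.1 - b| / (2 * (|P.2 - bot K b| + 1)), by positivity, ?_⟩
    intro a ha hrange hda
    set θ : ℝ := (a - b) / (P.1 - b) with hθdef
    have hθ0 : 0 ≤ θ := by
      rcases hrange with ⟨h1, h2⟩ | ⟨h1, h2⟩
      · exact div_nonneg (by linarith) (by linarith)
      · exact div_nonneg_of_nonpos (by linarith) (by linarith)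
    have hθ1 : θ ≤ 1 := by
      rcases hrange with ⟨h1, h2⟩ | ⟨h1, h2⟩
      · rw [hθdef, div_le_one (by linarith)]; linarith
      · rw [hθdef, div_le_one_of_neg (by linarith)]; linarith
    have hz : ((1 - θ) • ((b, bot K b) : ℝ × ℝ) + θ • P) ∈ K :=
      hKv hbK hPK (by linarith) hθ0 (by ring)
    have hz1 : ((1 - θ) • ((b, bot K b) : ℝ × ℝ) + θ • P).1 = a := by
      simp only [Prod.fst_add, Prod.smul_fst, smul_eq_mul]
      rw [hθdef]
      field_simp
      ring
    have hz2 : ((1 - θ) • ((b, bot K b) : ℝ × ℝ) + θ • P).2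
        = bot K b + θ * (P.2 - bot K b) := by
      simp only [Prod.snd_add, Prod.smul_snd, smul_eq_mul]
      ring
    have hle : bot K a ≤ bot K b + θ * (P.2 - bot K b) := by
      apply bot_le hKc (y := bot K b + θ * (P.2 - bot K b))
      rw [← hz2, ← hz1]
      exact hz
    have hθP : θ * |P.1 - b| = |a - b| := by
      rw [← abs_of_nonneg hθ0, hθdef, abs_div, div_mul_cancel₀ _ (ne_of_gt hPbpos)]
    have hk : (0:ℝ) < |P.2 - bot K b| + 1 := by positivity
    have h2k : 2 * (|P.2 - bot K b| + 1) * θ * |P.1 - b|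
        < ε * |P.1 - b| := by
      rw [mul_assoc, hθP]
      calc 2 * (|P.2 - bot K b| + 1) * |a - b|
          < 2 * (|P.2 - bot K b| + 1) * (ε * |P.1 - b| / (2 * (|P.2 - bot K b| + 1))) := by
            apply mul_lt_mul_of_pos_left hda (by positivity)
        _ = ε * |P.1 - b| := by field_simp
    have h2kθ : 2 * (|P.2 - bot K b| + 1) * θ < ε :=
      lt_of_mul_lt_mul_right h2k (abs_nonneg _)
    have hfin : θ * (P.2 - bot K b) < ε := by
      have h1 : θ * (P.2 - bot K b) ≤ θ * (|P.2 - bot K b| + 1) := by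
        apply mul_le_mul_of_nonneg_left _ hθ0
        have := le_abs_self (P.2 - bot K b); linarith
      nlinarith
    linarith
  have hR : ∃ δR > 0, ∀ a : ℝ, (∃ y, (a, y) ∈ K) → (∀ y, (a,y) ∈ K → a ≤ pM.1) → b < a →
      |a - b| < δR → bot K a < bot K b + ε := by
    rcases eq_or_lt_of_le hbM with heq | hlt
    · refine ⟨1, one_pos, fun a ha hle hba _ => absurd (hle _ ha.choose_spec) ?_⟩
      rw [← heq]; exact not_le.2 hba
    · obtain ⟨δR, hδR, hf⟩ := husc pM hpMK (ne_of_gt hlt)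
      exact ⟨δR, hδR, fun a ha hle hba hda =>
        hf a ha (Or.inl ⟨hba, hle _ ha.choose_spec⟩) hda⟩
  have hL : ∃ δL > 0, ∀ a : ℝ, (∃ y, (a, y) ∈ K) → (∀ y, (a,y) ∈ K → pm.1 ≤ a) → a < b →
      |a - b| < δL → bot K a < bot K b + ε := by
    rcases eq_or_lt_of_le hmb with heq | hlt
    · refine ⟨1, one_pos, fun a ha hle hba _ => absurd (hle _ ha.choose_spec) ?_⟩
      rw [heq]; exact not_le.2 hba
    · obtain ⟨δL, hδL, hf⟩ := husc pm hpmK (ne_of_lt hlt)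
      exact ⟨δL, hδL, fun a ha hle hba hda =>
        hf a ha (Or.inr ⟨hle _ ha.choose_spec, hba⟩) hda⟩
  obtain ⟨δR, hδR, hfR⟩ := hR
  obtain ⟨δL, hδL, hfL⟩ := hL
  refine ⟨min δ₁ (min δR δL), by positivity, ?_⟩
  intro a ha hdist
  obtain ⟨q, hqK, hq1⟩ := ha
  have hq' : ((a : ℝ), q.2) ∈ K := by rw [← hq1]; exact hqK
  have hsl : ∃ y, ((a:ℝ), y) ∈ K := ⟨q.2, hq'⟩
  rw [Real.dist_eq] at hdist ⊢
  rw [abs_sub_lt_iff]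
  constructor
  · rcases lt_trichotomy a b with h | h | h
    · have := hfL a hsl (fun y hy => hpm hy) h
        (lt_of_lt_of_le hdist ((min_le_right _ _).trans (min_le_right _ _)))
      linarith
    · rw [h]; linarith
    · have := hfR a hsl (fun y hy => hpM hy) h
        (lt_of_lt_of_le hdist ((min_le_right _ _).trans (min_le_left _ _)))
      linarith
  · have hnotF : a ∉ Prod.fst '' (K ∩ {p : ℝ × ℝ | p.2 ≤ bot K b - ε/2}) :=
      hball₁ (by rw [Metric.mem_ball, Real.dist_eq]; exact lt_of_lt_of_le hdist (min_le_left _ _))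
    have hbotaK : (a, bot K a) ∈ K := bot_mem hKc hq'
    by_contra hcon
    push_neg at hcon
    exact hnotF ⟨(a, bot K a), ⟨hbotaK, by simp only [mem_setOf_eq]; linarith⟩, rfl⟩

/-- the reflection `(x, y) ↦ (x, -y)` -/
def refl2 : (ℝ × ℝ) ≃ₜ (ℝ × ℝ) := (Homeomorph.refl ℝ).prodCongr (Homeomorph.neg ℝ)

lemma refl2_apply (p : ℝ × ℝ) : refl2 p = (p.1, -p.2) := rfl

lemma refl2_compact (hKc : IsCompact K) : IsCompact (refl2 '' K) :=
  hKc.image refl2.continuous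

lemma refl2_convex (hKv : Convex ℝ K) : Convex ℝ (refl2 '' K) := by
  apply hKv.is_linear_image
  constructor
  · intro p q; apply Prod.ext
    · rfl
    · exact neg_add _ _
  · intro c p; apply Prod.ext
    · rfl
    · exact (smul_neg c p.2).symm

lemma refl2_mem {p : ℝ × ℝ} : p ∈ refl2 '' K ↔ ((p.1, -p.2) : ℝ × ℝ) ∈ K := by
  constructor
  · rintro ⟨q, hq, rfl⟩
    simpa [refl2_apply] using hq
  · intro h
    exact ⟨(p.1, -p.2), h, by simp [refl2_apply]⟩

lemma swap_compact (hKc : IsCompact K) : IsCompact (Prod.swap '' K) :=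
  hKc.image continuous_swap

lemma swap_convex (hKv : Convex ℝ K) : Convex ℝ (Prod.swap '' K) :=
  hKv.is_linear_image ⟨fun _ _ => rfl, fun _ _ => rfl⟩

lemma swap_mem {p : ℝ × ℝ} : p ∈ Prod.swap '' K ↔ p.swap ∈ K := by
  rw [Set.image_swap_eq_preimage_swap]; rfl

noncomputable def lef (K : Set (ℝ × ℝ)) (y : ℝ) : ℝ := bot (Prod.swap '' K) y
noncomputable def rig (K : Set (ℝ × ℝ)) (y : ℝ) : ℝ := top (Prod.swap '' K) y

lemma lef_mem (hKc : IsCompact K) {x y : ℝ} (h : (x, y) ∈ K) : (lef K y, y) ∈ K := by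
  have h' : ((y : ℝ), x) ∈ Prod.swap '' K := swap_mem.2 h
  exact swap_mem.1 (bot_mem (swap_compact hKc) h')

lemma rig_mem (hKc : IsCompact K) {x y : ℝ} (h : (x, y) ∈ K) : (rig K y, y) ∈ K := by
  have h' : ((y : ℝ), x) ∈ Prod.swap '' K := swap_mem.2 h
  exact swap_mem.1 (top_mem (swap_compact hKc) h')

lemma lef_le (hKc : IsCompact K) {x y : ℝ} (h : (x, y) ∈ K) : lef K y ≤ x :=
  bot_le (swap_compact hKc) (swap_mem.2 h : ((y : ℝ), x) ∈ _)

lemma le_rig (hKc : IsCompact K) {x y : ℝ} (h : (x, y) ∈ K) : x ≤ rig K y :=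
  le_top (swap_compact hKc) (swap_mem.2 h : ((y : ℝ), x) ∈ _)

lemma lef_frontier (hKc : IsCompact K) {x y : ℝ} (h : (x, y) ∈ K) :
    (lef K y, y) ∈ frontier K := by
  refine mem_frontier hKc (lef_mem hKc h) (fun ε hε => ⟨(lef K y - ε/2, y), ?_, ?_⟩)
  · have h1 : dist ((lef K y - ε/2, y) : ℝ × ℝ) (lef K y, y) = ε/2 := by
      rw [Prod.dist_eq]
      simp only [dist_self, Real.dist_eq]
      rw [show lef K y - ε/2 - lef K y = -(ε/2) by ring, abs_neg, abs_of_pos (by linarith)]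
      exact max_eq_left (by positivity)
    rw [h1]; linarith
  · intro hmem
    have := lef_le hKc hmem
    linarith

lemma rig_frontier (hKc : IsCompact K) {x y : ℝ} (h : (x, y) ∈ K) :
    (rig K y, y) ∈ frontier K := by
  refine mem_frontier hKc (rig_mem hKc h) (fun ε hε => ⟨(rig K y + ε/2, y), ?_, ?_⟩)
  · have h1 : dist ((rig K y + ε/2, y) : ℝ × ℝ) (rig K y, y) = ε/2 := by
      rw [Prod.dist_eq]
      simp only [dist_self, Real.dist_eq]
      rw [show rig K y + ε/2 - rig K y = ε/2 by ring, abs_of_pos (by linarith)]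
      exact max_eq_left (by positivity)
    rw [h1]; linarith
  · intro hmem
    have := le_rig hKc hmem
    linarith

lemma fst_swap_image : Prod.fst '' (Prod.swap '' K) = Prod.snd '' K := by
  rw [← Set.image_comp]; rfl

lemma fst_refl2_image : Prod.fst '' (refl2 '' K) = Prod.fst '' K := by
  rw [← Set.image_comp]; rfl

lemma lef_continuousOn (hKc : IsCompact K) (hKv : Convex ℝ K) :
    ContinuousOn (lef K) (Prod.snd '' K) := by
  have := bot_continuousOn (swap_compact hKc) (swap_convex hKv)
  rwa [fst_swap_image] at this

lemma top_eq_neg_bot (hKc : IsCompact K) (a : ℝ) :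
    top K a = - bot (refl2 '' K) a := by
  have hset : {y | (a, y) ∈ refl2 '' K} = (fun y : ℝ => -y) '' {y | (a, y) ∈ K} := by
    ext y
    simp only [mem_setOf_eq, refl2_mem]
    constructor
    · intro h; exact ⟨-y, h, by ring⟩
    · rintro ⟨z, hz, rfl⟩; simpa using hz
  rw [top, bot, hset]
  rcases eq_empty_or_nonempty {y | (a, y) ∈ K} with h | h
  · rw [h]; simp [Real.sSup_empty, Real.sInf_empty]
  · have hc := slice_compact hKc a
    apply le_antisymm
    · apply csSup_le h
      intro y hy
      have : sInf ((fun y : ℝ => -y) '' {y | (a, y) ∈ K}) ≤ -y :=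
        csInf_le ((hc.image continuous_neg).bddBelow) ⟨y, hy, rfl⟩
      linarith
    · obtain ⟨z, hz, hEq⟩ := (hc.image continuous_neg).sInf_mem (h.image _)
      rw [← hEq]
      simpa using le_csSup hc.bddAbove hz

lemma top_continuousOn (hKc : IsCompact K) (hKv : Convex ℝ K) :
    ContinuousOn (top K) (Prod.fst '' K) := by
  have h := (bot_continuousOn (refl2_compact hKc) (refl2_convex hKv)).neg
  rw [fst_refl2_image] at h
  exact h.congr (fun a _ => top_eq_neg_bot hKc a)

lemma bot_lt_top (hKc : IsCompact K) (hKv : Convex ℝ K) (hKi : (interior K).Nonempty)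
    {a : ℝ} (h₁ : ∃ p ∈ K, p.1 < a) (h₂ : ∃ q ∈ K, a < q.1) : bot K a < top K a := by
  obtain ⟨z, hz⟩ := hKi
  have hz' : ∃ z' ∈ interior K, z'.1 = a := by
    rcases lt_trichotomy z.1 a with h | h | h
    · obtain ⟨q, hqK, hq⟩ := h₂
      set t := (q.1 - a) / (q.1 - z.1) with ht
      have h1 : 0 < t := div_pos (by linarith) (by linarith)
      have h2 : t ≤ 1 := by rw [ht, div_le_one (by linarith)]; linarith
      refine ⟨q + t • (z - q), hKv.add_smul_sub_mem_interior hqK hz ⟨h1, h2⟩, ?_⟩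
      show q.1 + t * (z.1 - q.1) = a
      have hne : q.1 - z.1 ≠ 0 := ne_of_gt (by linarith)
      rw [ht]; field_simp; ring
    · exact ⟨z, hz, h⟩
    · obtain ⟨p, hpK, hp⟩ := h₁
      set t := (a - p.1) / (z.1 - p.1) with ht
      have h1 : 0 < t := div_pos (by linarith) (by linarith)
      have h2 : t ≤ 1 := by rw [ht, div_le_one (by linarith)]; linarith
      refine ⟨p + t • (z - p), hKv.add_smul_sub_mem_interior hpK hz ⟨h1, h2⟩, ?_⟩
      show p.1 + t * (z.1 - p.1) = a
      have hne : z.1 - p.1 ≠ 0 := ne_of_gt (by linarith)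
      rw [ht]; field_simp; ring
  obtain ⟨z', hz', hz'1⟩ := hz'
  obtain ⟨ε, hε, hball⟩ := Metric.mem_nhds_iff.1 (mem_interior_iff_mem_nhds.1 hz')
  have hup : ((a : ℝ), z'.2 + ε/2) ∈ K := by
    apply hball
    rw [Metric.mem_ball, Prod.dist_eq]
    have hd1 : dist (a : ℝ) z'.1 = 0 := by rw [hz'1]; simp
    have hd2 : dist (z'.2 + ε/2) z'.2 = ε/2 := by
      rw [Real.dist_eq, show z'.2 + ε/2 - z'.2 = ε/2 by ring]
      exact abs_of_pos (by linarith)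
    rw [hd1, hd2, max_eq_right (by positivity)]; linarith
  have hdn : ((a : ℝ), z'.2 - ε/2) ∈ K := by
    apply hball
    rw [Metric.mem_ball, Prod.dist_eq]
    have hd1 : dist (a : ℝ) z'.1 = 0 := by rw [hz'1]; simp
    have hd2 : dist (z'.2 - ε/2) z'.2 = ε/2 := by
      rw [Real.dist_eq, show z'.2 - ε/2 - z'.2 = -(ε/2) by ring, abs_neg]
      exact abs_of_pos (by linarith)
    rw [hd1, hd2, max_eq_right (by positivity)]; linarith
  have h1 := bot_le hKc hdn
  have h2 := le_top hKc hup
  linarith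

lemma core (hKc : IsCompact K) (hKv : Convex ℝ K) (hKi : (interior K).Nonempty)
    {c1 c2 c3 c4 : ℝ × ℝ}
    (h1 : c1 ∈ K) (h2 : c2 ∈ K) (h3 : c3 ∈ K) (h4 : c4 ∈ K)
    (hb1 : ∀ p ∈ K, c1.1 ≤ p.1) (hb3 : ∀ p ∈ K, p.1 ≤ c3.1)
    (hb2 : ∀ p ∈ K, c2.2 ≤ p.2) (hb4 : ∀ p ∈ K, p.2 ≤ c4.2)
    (h23 : c2.1 < c3.1) (h43 : c4.1 < c3.1) (h21 : c2.2 < c1.2)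
    {x1 x2 : ℝ} (hx1 : 0 < x1) (hx2 : 0 < x2) :
    ∃ u ∈ frontier K, ∃ v ∈ frontier K, ∃ w ∈ frontier K, ∃ t : ℝ,
      t ≠ 0 ∧ u - v = t • ((x1, x2) : ℝ × ℝ) ∧ w.1 = u.1 ∧ w.2 = v.2 := by
  have h1' : ((c1.1 : ℝ), c1.2) ∈ K := h1
  have h2' : ((c2.1 : ℝ), c2.2) ∈ K := h2
  have h3' : ((c3.1 : ℝ), c3.2) ∈ K := h3
  -- c2.2 < c4.2
  have h24 : c2.2 < c4.2 := by
    obtain ⟨z, hz⟩ := hKi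
    obtain ⟨ε, hε, hball⟩ := Metric.mem_nhds_iff.1 (mem_interior_iff_mem_nhds.1 hz)
    have hup : ((z.1 : ℝ), z.2 + ε/2) ∈ K := by
      apply hball
      rw [Metric.mem_ball, Prod.dist_eq]
      simp only [dist_self, Real.dist_eq]
      rw [show z.2 + ε/2 - z.2 = ε/2 by ring, abs_of_pos (by linarith),
        max_eq_right (by positivity)]
      linarith
    have hdn : ((z.1 : ℝ), z.2 - ε/2) ∈ K := by
      apply hball
      rw [Metric.mem_ball, Prod.dist_eq]
      simp only [dist_self, Real.dist_eq]
      rw [show z.2 - ε/2 - z.2 = -(ε/2) by ring, abs_neg, abs_of_pos (by linarith),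
        max_eq_right (by positivity)]
      linarith
    have := hb2 _ hdn
    have := hb4 _ hup
    simp only at this ⊢
    linarith [hb2 _ hdn, hb4 _ hup]
  -- the starting abscissa
  set a₀ := lef K c2.2 with ha₀def
  have ha₀K : (a₀, c2.2) ∈ K := lef_mem hKc h2'
  have ha₀le : a₀ ≤ c2.1 := lef_le hKc h2'
  have ha₀ge : c1.1 ≤ a₀ := hb1 _ ha₀K
  have hbota₀ : bot K a₀ = c2.2 :=
    le_antisymm (bot_le hKc ha₀K) (hb2 _ (bot_mem hKc ha₀K))
  -- `lef K y < c3.1` for all y in the vertical range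
  have hlef_lt : ∀ y : ℝ, c2.2 ≤ y → y ≤ c4.2 → lef K y < c3.1 := by
    intro y hy1 hy2
    set θ := (y - c2.2) / (c4.2 - c2.2) with hθ
    have hθ0 : 0 ≤ θ := div_nonneg (by linarith) (by linarith)
    have hθ1 : θ ≤ 1 := by rw [hθ, div_le_one (by linarith)]; linarith
    have hq : (1 - θ) • c2 + θ • c4 ∈ K := hKv h2 h4 (by linarith) hθ0 (by ring)
    have hq2 : ((1 - θ) • c2 + θ • c4).2 = y := by
      show (1 - θ) * c2.2 + θ * c4.2 = y
      have hne : c4.2 - c2.2 ≠ 0 := ne_of_gt (by linarith)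
      rw [hθ]; field_simp; ring
    have hq1 : ((1 - θ) • c2 + θ • c4).1 = (1 - θ) * c2.1 + θ * c4.1 := rfl
    have hle : lef K y ≤ (1 - θ) * c2.1 + θ * c4.1 := by
      rw [← hq1]
      apply lef_le hKc (x := ((1 - θ) • c2 + θ • c4).1)
      rw [← hq2]
      exact hq
    have hcomb : (1 - θ) * c2.1 + θ * c4.1 < c3.1 := by
      rcases le_or_gt θ (1/2) with hh | hh
      · nlinarith
      · nlinarith
    linarith
  -- the domain of the sweep
  have hDconv : Convex ℝ (Prod.fst '' K) := hKv.is_linear_image ⟨fun _ _ => rfl, fun _ _ => rfl⟩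
  have hDsub : Icc a₀ c3.1 ⊆ Prod.fst '' K := fun a ha =>
    hDconv.ordConnected.out ⟨(a₀, c2.2), ha₀K, rfl⟩ ⟨c3, h3, rfl⟩ ha
  have hmemD : ∀ a ∈ Icc a₀ c3.1, ∃ y, ((a : ℝ), y) ∈ K := by
    intro a ha
    obtain ⟨p, hp, hp1⟩ := hDsub ha
    exact ⟨p.2, by rw [← hp1]; exact hp⟩
  -- the sweep function
  set G : ℝ → ℝ := fun a => (a - lef K (bot K a)) * x2 - (top K a - bot K a) * x1 with hG
  have hGcont : ContinuousOn G (Icc a₀ c3.1) := by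
    have hbot := (bot_continuousOn hKc hKv).mono hDsub
    have htop := (top_continuousOn hKc hKv).mono hDsub
    have hlef : ContinuousOn (fun a => lef K (bot K a)) (Icc a₀ c3.1) := by
      apply (lef_continuousOn hKc hKv).comp hbot
      intro a ha
      obtain ⟨y, hy⟩ := hmemD a ha
      exact ⟨(a, bot K a), bot_mem hKc hy, rfl⟩
    exact ((continuousOn_id.sub hlef).mul continuousOn_const).sub
      ((htop.sub hbot).mul continuousOn_const)
  have ha₀3 : a₀ ≤ c3.1 := by linarith
  -- value at the left end
  have hGa₀ : G a₀ < 0 := by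
    have htop₀ : c2.2 < top K a₀ := by
      rcases eq_or_lt_of_le ha₀ge with h | h
      · have : c1.2 ≤ top K a₀ := le_top hKc (show ((a₀ : ℝ), c1.2) ∈ K by rw [← h]; exact h1')
        linarith
      · have := bot_lt_top hKc hKv hKi ⟨c1, h1, h⟩ ⟨c3, h3, by linarith⟩
        rw [hbota₀] at this
        exact this
    have hlefb : lef K (bot K a₀) = a₀ := by rw [hbota₀]
    rw [hG]
    simp only
    rw [hlefb, hbota₀]
    have h0 : (a₀ - a₀) * x2 = 0 := by ring
    nlinarith
  rcases le_or_gt 0 (G c3.1) with hGc3 | hGc3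
  · -- first sweep succeeds
    obtain ⟨a, haI, haG⟩ := intermediate_value_Icc ha₀3 hGcont ⟨hGa₀.le, hGc3⟩
    obtain ⟨y₀, hy₀⟩ := hmemD a haI
    have hbotK : ((a : ℝ), bot K a) ∈ K := bot_mem hKc hy₀
    have hbr1 : c2.2 ≤ bot K a := hb2 _ hbotK
    have hbr2 : bot K a ≤ c4.2 := hb4 _ hbotK
    have hlefa : lef K (bot K a) ≤ a := lef_le hKc hbotK
    have hGa : (a - lef K (bot K a)) * x2 = (top K a - bot K a) * x1 := by
      rw [hG] at haG; simp only at haG; linarith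
    have htb : bot K a < top K a := by
      rcases eq_or_lt_of_le haI.2 with hEq | hlt
      · have hlef3 := hlef_lt (bot K a) hbr1 hbr2
        have hpos : 0 < (a - lef K (bot K a)) * x2 := by
          apply mul_pos _ hx2
          linarith
        nlinarith
      · have ha1 : c1.1 < a := by
          rcases eq_or_lt_of_le (le_trans ha₀ge haI.1) with hEq | h
          · exfalso
            have haa : a = a₀ := le_antisymm (by rw [← hEq]; exact ha₀ge) haI.1
            rw [haa] at haG
            linarith
          · exact h
        exact bot_lt_top hKc hKv hKi ⟨c1, h1, ha1⟩ ⟨c3, h3, hlt⟩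
    refine ⟨(a, top K a), top_frontier hKc hy₀,
      (lef K (bot K a), bot K a), lef_frontier hKc hbotK,
      (a, bot K a), bot_frontier hKc hy₀,
      (top K a - bot K a) / x2, ne_of_gt (div_pos (by linarith) hx2), ?_, rfl, rfl⟩
    have hx2' : x2 ≠ 0 := ne_of_gt hx2
    apply Prod.ext
    · show a - lef K (bot K a) = (top K a - bot K a) / x2 * x1
      field_simp
      linarith [hGa]
    · show top K a - bot K a = (top K a - bot K a) / x2 * x2
      field_simp
  · -- second sweep, along the right edge
    set yb := bot K c3.1 with hyb
    set yt := top K c3.1 with hyt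
    have hybK : ((c3.1 : ℝ), yb) ∈ K := bot_mem hKc h3'
    have hytK : ((c3.1 : ℝ), yt) ∈ K := top_mem hKc h3'
    have hyby : yb ≤ yt := bot_le hKc hytK
    have hIccsub : ∀ y ∈ Icc yb yt, ((c3.1 : ℝ), y) ∈ K := by
      intro y hy
      rcases eq_or_lt_of_le hyby with hEq | hlt
      · have : y = yb := le_antisymm (by rw [hEq]; exact hy.2) hy.1
        rw [this]; exact hybK
      · set θ := (y - yb) / (yt - yb) with hθ
        have hθ0 : 0 ≤ θ := div_nonneg (by linarith [hy.1]) (by linarith)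
        have hθ1 : θ ≤ 1 := by rw [hθ, div_le_one (by linarith)]; linarith [hy.2]
        have hmem : (1 - θ) • ((c3.1 : ℝ), yb) + θ • ((c3.1 : ℝ), yt) ∈ K :=
          hKv hybK hytK (by linarith) hθ0 (by ring)
        have : ((1 - θ) • (((c3.1 : ℝ), yb) : ℝ × ℝ) + θ • ((c3.1 : ℝ), yt)) = ((c3.1 : ℝ), y) := by
          apply Prod.ext
          · show (1 - θ) * c3.1 + θ * c3.1 = c3.1
            ring
          · show (1 - θ) * yb + θ * yt = y
            have hne : yt - yb ≠ 0 := ne_of_gt (by linarith)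
            rw [hθ]; field_simp; ring
        rwa [this] at hmem
    set H : ℝ → ℝ := fun y => (c3.1 - lef K y) * x2 - (yt - y) * x1 with hH
    have hHcont : ContinuousOn H (Icc yb yt) := by
      have hsub : Icc yb yt ⊆ Prod.snd '' K := fun y hy => ⟨(c3.1, y), hIccsub y hy, rfl⟩
      have hlef := (lef_continuousOn hKc hKv).mono hsub
      exact ((continuousOn_const.sub hlef).mul continuousOn_const).sub
        (((continuousOn_const.sub continuousOn_id)).mul continuousOn_const)
    have hHyb : H yb = G c3.1 := rfl
    have hHyt : 0 < H yt := by
      have hr1 : c2.2 ≤ yt := hb2 _ hytK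
      have hr2 : yt ≤ c4.2 := hb4 _ hytK
      have := hlef_lt yt hr1 hr2
      rw [hH]; simp only
      nlinarith
    obtain ⟨y', hyI, hyH⟩ := intermediate_value_Icc hyby hHcont
      ⟨by rw [hHyb]; exact hGc3.le, hHyt.le⟩
    have hwK : ((c3.1 : ℝ), y') ∈ K := hIccsub y' hyI
    have hr1 : c2.2 ≤ y' := hb2 _ hwK
    have hr2 : y' ≤ c4.2 := hb4 _ hwK
    have hlefy : lef K y' < c3.1 := hlef_lt y' hr1 hr2
    have hwfr : ((c3.1 : ℝ), y') ∈ frontier K := by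
      refine mem_frontier hKc hwK (fun ε hε => ⟨(c3.1 + ε/2, y'), ?_, ?_⟩)
      · rw [Prod.dist_eq]
        simp only [dist_self, Real.dist_eq]
        rw [show c3.1 + ε/2 - c3.1 = ε/2 by ring, abs_of_pos (by linarith),
          max_eq_left (by positivity)]
        linarith
      · intro hmem
        have := hb3 _ hmem
        simp only at this
        linarith
    have hHy : (c3.1 - lef K y') * x2 = (yt - y') * x1 := by
      rw [hH] at hyH; simp only at hyH; linarith
    refine ⟨(c3.1, yt), top_frontier hKc h3',
      (lef K y', y'), lef_frontier hKc hwK,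
      (c3.1, y'), hwfr,
      (c3.1 - lef K y') / x1, ne_of_gt (div_pos (by linarith) hx1), ?_, rfl, rfl⟩
    have hx1' : x1 ≠ 0 := ne_of_gt hx1
    apply Prod.ext
    · show c3.1 - lef K y' = (c3.1 - lef K y') / x1 * x1
      field_simp
    · show yt - y' = (c3.1 - lef K y') / x1 * x2
      field_simp
      linarith [hHy]

lemma exists_extreme (hKc : IsCompact K) (hne : K.Nonempty) (d : ℝ × ℝ)
    (hd : d.1 ≠ 0 ∨ d.2 ≠ 0) :
    ∃ p ∈ frontier K, ∀ q ∈ K, q.1 * d.1 + q.2 * d.2 ≤ p.1 * d.1 + p.2 * d.2 := by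
  obtain ⟨p, hpK, hp⟩ := hKc.exists_isMaxOn hne
    (((continuous_fst.mul continuous_const).add
      (continuous_snd.mul continuous_const)).continuousOn :
      ContinuousOn (fun q : ℝ × ℝ => q.1 * d.1 + q.2 * d.2) K)
  have hdn : (0:ℝ) < ‖d‖ := by
    rw [norm_pos_iff]
    intro hd0
    rcases hd with h | h
    · exact h (by rw [hd0]; rfl)
    · exact h (by rw [hd0]; rfl)
  have hdsq : (0:ℝ) < d.1 ^ 2 + d.2 ^ 2 := by
    rcases hd with h | h
    · have : 0 < d.1 ^ 2 := by positivity
      nlinarith [sq_nonneg d.2]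
    · have : 0 < d.2 ^ 2 := by positivity
      nlinarith [sq_nonneg d.1]
  refine ⟨p, ?_, fun q hq => hp hq⟩
  refine mem_frontier hKc hpK (fun ε hε => ⟨p + (ε / (2 * ‖d‖)) • d, ?_, ?_⟩)
  · rw [dist_eq_norm, add_sub_cancel_left, norm_smul, Real.norm_eq_abs,
      abs_of_pos (by positivity)]
    rw [div_mul_eq_mul_div, mul_comm]
    rw [show (2 : ℝ) * ‖d‖ = ‖d‖ * 2 by ring]
    rw [mul_div_mul_left _ _ (ne_of_gt hdn)]
    linarith
  · intro hmem
    have h2 : (p + (ε / (2 * ‖d‖)) • d).1 * d.1 + (p + (ε / (2 * ‖d‖)) • d).2 * d.2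
        ≤ p.1 * d.1 + p.2 * d.2 := hp hmem
    have hc : (0:ℝ) < ε / (2 * ‖d‖) := by positivity
    have hval : (p + (ε / (2 * ‖d‖)) • d).1 * d.1 + (p + (ε / (2 * ‖d‖)) • d).2 * d.2
        = p.1 * d.1 + p.2 * d.2 + (ε / (2 * ‖d‖)) * (d.1 ^ 2 + d.2 ^ 2) := by
      show (p.1 + (ε / (2 * ‖d‖)) * d.1) * d.1 + (p.2 + (ε / (2 * ‖d‖)) * d.2) * d.2 = _
      ring
    rw [hval] at h2
    nlinarith
  
lemma main_pos (hKc : IsCompact K) (hKv : Convex ℝ K) (hKi : (interior K).Nonempty)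
    {c1 c2 c3 c4 : ℝ × ℝ}
    (h1 : c1 ∈ K) (h2 : c2 ∈ K) (h3 : c3 ∈ K) (h4 : c4 ∈ K)
    (hb1 : ∀ p ∈ K, c1.1 ≤ p.1) (hb3 : ∀ p ∈ K, p.1 ≤ c3.1)
    (hb2 : ∀ p ∈ K, c2.2 ≤ p.2) (hb4 : ∀ p ∈ K, p.2 ≤ c4.2)
    (h23 : c2.1 < c3.1) (h43 : c4.1 < c3.1) (h21 : c2.2 < c1.2) (h14 : c1.2 < c4.2)
    {X1 X2 : ℝ} (hX1 : 0 < X1) (hX2 : X2 ≠ 0) :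
    ∃ u ∈ frontier K, ∃ v ∈ frontier K, ∃ w ∈ frontier K, ∃ t : ℝ,
      t ≠ 0 ∧ u - v = t • ((X1, X2) : ℝ × ℝ) ∧ w.1 = u.1 ∧ w.2 = v.2 := by
  rcases lt_or_gt_of_ne hX2 with hneg | hpos
  · -- reflect through the horizontal axis
    have hKc' := refl2_compact hKc
    have hKv' := refl2_convex hKv
    have hKi' : (interior (refl2 '' K)).Nonempty := by
      rw [← refl2.image_interior]
      exact hKi.image _
    have hmem : ∀ p ∈ K, refl2 p ∈ refl2 '' K := fun p hp => ⟨p, hp, rfl⟩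
    have hcore := core hKc' hKv' hKi'
      (hmem c1 h1) (hmem c4 h4) (hmem c3 h3) (hmem c2 h2)
      (by rintro p ⟨q, hq, rfl⟩; exact hb1 q hq)
      (by rintro p ⟨q, hq, rfl⟩; exact hb3 q hq)
      (by rintro p ⟨q, hq, rfl⟩
          show -c4.2 ≤ -q.2
          exact neg_le_neg (hb4 q hq))
      (by rintro p ⟨q, hq, rfl⟩
          show -q.2 ≤ -c2.2
          exact neg_le_neg (hb2 q hq))
      (show c4.1 < c3.1 from h43) (show c2.1 < c3.1 from h23)
      (show -c4.2 < -c1.2 from neg_lt_neg h14)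
      hX1 (show (0:ℝ) < -X2 by linarith)
    obtain ⟨u', hu', v', hv', w', hw', t, ht, hEq, hw1, hw2⟩ := hcore
    rw [← refl2.image_frontier] at hu' hv' hw'
    obtain ⟨u, hu, rfl⟩ := hu'
    obtain ⟨v, hv, rfl⟩ := hv'
    obtain ⟨w, hw, rfl⟩ := hw'
    rw [Prod.ext_iff] at hEq
    obtain ⟨hEq1, hEq2⟩ := hEq
    refine ⟨u, hu, v, hv, w, hw, t, ht, ?_, hw1, ?_⟩
    · apply Prod.ext
      · exact hEq1
      · show u.2 - v.2 = t * X2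
        have h2' : -u.2 - -v.2 = t * -X2 := hEq2
        rw [mul_neg] at h2'
        linarith
    · show w.2 = v.2
      have : -w.2 = -v.2 := hw2
      linarith
  · exact core hKc hKv hKi h1 h2 h3 h4 hb1 hb3 hb2 hb4 h23 h43 h21 hX1 hpos

end Stmt6Aux

open Stmt6Aux in
/-- Lemma `distintos`. Let `C ⊂ ℝ²` be a Jordan curve enclosing a
convex region (the frontier of a compact convex body) whose four coordinate extreme
points `c¹, c², c³, c⁴` (leftmost, lowest, rightmost, highest) are all distinct, each
being a strict extreme in its direction compared with the other three. Then for every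
`x ∈ ℝ²` there are `u, v, w ∈ C` and `t ≠ 0` with `u - v = t • x`, `w` sharing its first
coordinate with `u` and its second coordinate with `v`. -/
theorem stmt6 (C : Set (ℝ × ℝ))
    (hJordan : ∃ K : Set (ℝ × ℝ), IsCompact K ∧ Convex ℝ K ∧
      (interior K).Nonempty ∧ C = frontier K)
    (c1 c2 c3 c4 : ℝ × ℝ)
    (hc1 : c1 ∈ C) (hc2 : c2 ∈ C) (hc3 : c3 ∈ C) (hc4 : c4 ∈ C)
    (hmin1 : ∀ p ∈ C, c1.1 ≤ p.1) (hmin2 : ∀ p ∈ C, c2.2 ≤ p.2)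
    (hmax1 : ∀ p ∈ C, p.1 ≤ c3.1) (hmax2 : ∀ p ∈ C, p.2 ≤ c4.2)
    (hs1 : c1.1 < c2.1 ∧ c1.1 < c3.1 ∧ c1.1 < c4.1)
    (hs2 : c2.2 < c1.2 ∧ c2.2 < c3.2 ∧ c2.2 < c4.2)
    (hs3 : c3.1 > c1.1 ∧ c3.1 > c2.1 ∧ c3.1 > c4.1)
    (hs4 : c4.2 > c1.2 ∧ c4.2 > c2.2 ∧ c4.2 > c3.2) :
    ∀ x : ℝ × ℝ, ∃ u ∈ C, ∃ v ∈ C, ∃ w ∈ C, ∃ t : ℝ, t ≠ 0 ∧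
      u - v = t • x ∧ w.1 = u.1 ∧ w.2 = v.2 := by
  obtain ⟨K, hKc, hKv, hKi, rfl⟩ := hJordan
  have hfr : frontier K ⊆ K := hKc.isClosed.frontier_subset
  have hne : K.Nonempty := ⟨c1, hfr hc1⟩
  have hK1 : ∀ q ∈ K, c1.1 ≤ q.1 := by
    obtain ⟨p, hpf, hp⟩ := exists_extreme hKc hne (-1, 0) (Or.inl (by norm_num))
    intro q hq
    have ha := hp q hq
    have hb := hmin1 p hpf
    simp only at ha
    linarith
  have hK3 : ∀ q ∈ K, q.1 ≤ c3.1 := by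
    obtain ⟨p, hpf, hp⟩ := exists_extreme hKc hne (1, 0) (Or.inl (by norm_num))
    intro q hq
    have ha := hp q hq
    have hb := hmax1 p hpf
    simp only at ha
    linarith
  have hK2 : ∀ q ∈ K, c2.2 ≤ q.2 := by
    obtain ⟨p, hpf, hp⟩ := exists_extreme hKc hne (0, -1) (Or.inr (by norm_num))
    intro q hq
    have ha := hp q hq
    have hb := hmin2 p hpf
    simp only at ha
    linarith
  have hK4 : ∀ q ∈ K, q.2 ≤ c4.2 := by
    obtain ⟨p, hpf, hp⟩ := exists_extreme hKc hne (0, 1) (Or.inr (by norm_num))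
    intro q hq
    have ha := hp q hq
    have hb := hmax2 p hpf
    simp only at ha
    linarith
  rintro ⟨X1, X2⟩
  rcases eq_or_ne X1 0 with hX1 | hX1
  · rcases eq_or_ne X2 0 with hX2 | hX2
    · subst hX1; subst hX2
      exact ⟨c1, hc1, c1, hc1, c1, hc1, 1, one_ne_zero, by simp; rfl, rfl, rfl⟩
    · -- vertical direction
      subst hX1
      have h2K : ((c2.1 : ℝ), c2.2) ∈ K := hfr hc2
      have htv : bot K c2.1 < top K c2.1 :=
        bot_lt_top hKc hKv hKi ⟨c1, hfr hc1, hs1.1⟩ ⟨c3, hfr hc3, hs3.2.1⟩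
      have hbotv : bot K c2.1 = c2.2 :=
        le_antisymm (bot_le hKc h2K) (hK2 _ (bot_mem hKc h2K))
      have htv2 : c2.2 < top K c2.1 := by rw [← hbotv]; exact htv
      refine ⟨(c2.1, top K c2.1), top_frontier hKc h2K, c2, hc2, c2, hc2,
        (top K c2.1 - c2.2) / X2, div_ne_zero (ne_of_gt (by linarith)) hX2, ?_, rfl, rfl⟩
      apply Prod.ext
      · show c2.1 - c2.1 = (top K c2.1 - c2.2) / X2 * 0
        ring
      · show top K c2.1 - c2.2 = (top K c2.1 - c2.2) / X2 * X2
        field_simp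
  · rcases eq_or_ne X2 0 with hX2 | hX2
    · -- horizontal direction
      subst hX2
      have h1K : ((c1.1 : ℝ), c1.2) ∈ K := hfr hc1
      have hswi : (interior (Prod.swap '' K)).Nonempty := by
        have h := (Homeomorph.prodComm ℝ ℝ).image_interior K
        rw [Homeomorph.coe_prodComm] at h
        rw [← h]
        exact hKi.image _
      have hlr : bot (Prod.swap '' K) c1.2 < top (Prod.swap '' K) c1.2 := by
        apply bot_lt_top (swap_compact hKc) (swap_convex hKv) hswi
        · exact ⟨(c2.2, c2.1), swap_mem.2 (hfr hc2), hs2.1⟩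
        · exact ⟨(c4.2, c4.1), swap_mem.2 (hfr hc4), hs4.1⟩
      have hlr' : lef K c1.2 < rig K c1.2 := hlr
      have hlef1 : lef K c1.2 = c1.1 :=
        le_antisymm (lef_le hKc h1K) (hK1 _ (lef_mem hKc h1K))
      refine ⟨(rig K c1.2, c1.2), rig_frontier hKc h1K, c1, hc1,
        (rig K c1.2, c1.2), rig_frontier hKc h1K,
        (rig K c1.2 - c1.1) / X1, div_ne_zero (ne_of_gt (by linarith)) hX1, ?_, rfl, rfl⟩
      apply Prod.ext
      · show rig K c1.2 - c1.1 = (rig K c1.2 - c1.1) / X1 * X1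
        field_simp
      · show c1.2 - c1.2 = (rig K c1.2 - c1.1) / X1 * 0
        ring
    · -- slanted direction
      rcases lt_or_gt_of_ne hX1 with hneg | hpos
      · obtain ⟨u, hu, v, hv, w, hw, t, ht, hEq, hw1, hw2⟩ :=
          main_pos hKc hKv hKi (hfr hc1) (hfr hc2) (hfr hc3) (hfr hc4)
            hK1 hK3 hK2 hK4 hs3.2.1 hs3.2.2 hs2.1 hs4.1
            (X1 := -X1) (X2 := -X2) (by linarith) (neg_ne_zero.2 hX2)
        refine ⟨u, hu, v, hv, w, hw, -t, neg_ne_zero.2 ht, ?_, hw1, hw2⟩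
        rw [hEq]
        apply Prod.ext
        · show t * -X1 = -t * X1
          ring
        · show t * -X2 = -t * X2
          ring
      · exact main_pos hKc hKv hKi (hfr hc1) (hfr hc2) (hfr hc3) (hfr hc4)
          hK1 hK3 hK2 hK4 hs3.2.1 hs3.2.2 hs2.1 hs4.1 hpos hX2
end

section
/- Let C ⊂ ℝ² be a convex Jordan curve having a point c that is extreme in two of the four coordinate directions (e.g., c simultaneously attains the maximum first coordinate and maximum second coordinate on C). For a ∈ C define a₁ = a and, for n ≥ 1, let a_{n+1} be the point of C closest to c sharing a coordinate with a_n (choosing the point in the same vertical line in case of ambiguity). Then the sequence (a_n) converges to c, unless a is the strict extreme point of C in the two remaining directions, in which case a_n = a for all n. -/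
open Filter Topology

private lemma absle {x y : ℝ} (h : x ≤ y) : |x - y| = y - x := by
  rw [abs_sub_comm, abs_of_nonneg (by linarith)]

private lemma topPoint {K : Set (ℝ × ℝ)} (hK : IsCompact K) {p : ℝ × ℝ} (hp : p ∈ K) :
    ∃ t : ℝ × ℝ, t ∈ frontier K ∧ t.1 = p.1 ∧ ∀ y : ℝ, (p.1, y) ∈ K → y ≤ t.2 := by
  have hcl : IsClosed {q : ℝ × ℝ | q.1 = p.1} := isClosed_eq continuous_fst continuous_const
  have hslice : IsCompact (Prod.snd '' (K ∩ {q : ℝ × ℝ | q.1 = p.1})) :=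
    (hK.inter_right hcl).image continuous_snd
  have hne : (Prod.snd '' (K ∩ {q : ℝ × ℝ | q.1 = p.1})).Nonempty := ⟨p.2, p, ⟨hp, rfl⟩, rfl⟩
  set M := sSup (Prod.snd '' (K ∩ {q : ℝ × ℝ | q.1 = p.1})) with hM
  have hsup : ∀ y : ℝ, (p.1, y) ∈ K → y ≤ M := fun y hy =>
    le_csSup hslice.bddAbove ⟨(p.1, y), ⟨hy, rfl⟩, rfl⟩
  have hmem : M ∈ Prod.snd '' (K ∩ {q : ℝ × ℝ | q.1 = p.1}) := hslice.sSup_mem hne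
  obtain ⟨t, ⟨htK, ht1⟩, ht2⟩ := hmem
  have htp : t = (p.1, M) := Prod.ext ht1 ht2
  have hKmem : ((p.1, M) : ℝ × ℝ) ∈ K := htp ▸ htK
  refine ⟨(p.1, M), ?_, rfl, hsup⟩
  rw [hK.isClosed.frontier_eq]
  refine ⟨hKmem, fun hint => ?_⟩
  obtain ⟨ε, hε, hball⟩ := Metric.isOpen_iff.mp isOpen_interior _ hint
  have hd : dist ((p.1, M + ε/2) : ℝ × ℝ) ((p.1, M) : ℝ × ℝ) = ε/2 := by
    rw [Prod.dist_eq, dist_self, Real.dist_eq, add_sub_cancel_left,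
      abs_of_nonneg (half_pos hε).le, max_eq_right (half_pos hε).le]
  have hmem2 : ((p.1, M + ε/2) : ℝ × ℝ) ∈ K :=
    interior_subset (hball (Metric.mem_ball.mpr (by rw [hd]; linarith)))
  linarith [hsup _ hmem2]

private lemma rightPoint {K : Set (ℝ × ℝ)} (hK : IsCompact K) {p : ℝ × ℝ} (hp : p ∈ K) :
    ∃ t : ℝ × ℝ, t ∈ frontier K ∧ t.2 = p.2 ∧ ∀ x : ℝ, (x, p.2) ∈ K → x ≤ t.1 := by
  have hcl : IsClosed {q : ℝ × ℝ | q.2 = p.2} := isClosed_eq continuous_snd continuous_const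
  have hslice : IsCompact (Prod.fst '' (K ∩ {q : ℝ × ℝ | q.2 = p.2})) :=
    (hK.inter_right hcl).image continuous_fst
  have hne : (Prod.fst '' (K ∩ {q : ℝ × ℝ | q.2 = p.2})).Nonempty := ⟨p.1, p, ⟨hp, rfl⟩, rfl⟩
  set M := sSup (Prod.fst '' (K ∩ {q : ℝ × ℝ | q.2 = p.2})) with hM
  have hsup : ∀ x : ℝ, (x, p.2) ∈ K → x ≤ M := fun x hx =>
    le_csSup hslice.bddAbove ⟨(x, p.2), ⟨hx, rfl⟩, rfl⟩
  have hmem : M ∈ Prod.fst '' (K ∩ {q : ℝ × ℝ | q.2 = p.2}) := hslice.sSup_mem hne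
  obtain ⟨t, ⟨htK, ht2⟩, ht1⟩ := hmem
  have htp : t = (M, p.2) := Prod.ext ht1 ht2
  have hKmem : ((M, p.2) : ℝ × ℝ) ∈ K := htp ▸ htK
  refine ⟨(M, p.2), ?_, rfl, hsup⟩
  rw [hK.isClosed.frontier_eq]
  refine ⟨hKmem, fun hint => ?_⟩
  obtain ⟨ε, hε, hball⟩ := Metric.isOpen_iff.mp isOpen_interior _ hint
  have hd : dist ((M + ε/2, p.2) : ℝ × ℝ) ((M, p.2) : ℝ × ℝ) = ε/2 := by
    rw [Prod.dist_eq, dist_self, Real.dist_eq, add_sub_cancel_left,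
      abs_of_nonneg (half_pos hε).le, max_eq_left (half_pos hε).le]
  have hmem2 : ((M + ε/2, p.2) : ℝ × ℝ) ∈ K :=
    interior_subset (hball (Metric.mem_ball.mpr (by rw [hd]; linarith)))
  linarith [hsup _ hmem2]

private lemma lemA {K : Set (ℝ × ℝ)} (hK : IsCompact K) (hconv : Convex ℝ K)
    (hint : (interior K).Nonempty) {c L : ℝ × ℝ} (hcK : c ∈ K) (hLK : L ∈ frontier K)
    (hL1 : L.1 ≤ c.1) (hL2 : L.2 ≤ c.2) (hLc : L ≠ c)
    (hnm : ∃ p ∈ K, p ≠ L ∧ (p.1 ≤ L.1 ∨ p.2 ≤ L.2)) :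
    (∃ q ∈ K, q.1 = L.1 ∧ L.2 < q.2) ∨ (∃ q ∈ K, q.2 = L.2 ∧ L.1 < q.1) := by
  by_contra hcon
  push_neg at hcon
  obtain ⟨h1, h2⟩ := hcon
  have hLmem : L ∈ K := hK.isClosed.frontier_subset hLK
  have hc1 : L.1 < c.1 := by
    rcases lt_or_eq_of_le hL1 with h | h
    · exact h
    · exact absurd (Prod.ext h (le_antisymm hL2 (h1 c hcK h.symm))) hLc
  have hc2 : L.2 < c.2 := by
    rcases lt_or_eq_of_le hL2 with h | h
    · exact h
    · exact absurd (Prod.ext (le_antisymm hL1 (h2 c hcK h.symm)) h) hLc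
  have hSW1 : ∀ p ∈ K, p.1 < L.1 → p.2 < L.2 := by
    intro p hp hplt
    by_contra hge
    push_neg at hge
    set t := (L.1 - p.1) / (c.1 - p.1) with hts
    have hd : 0 < c.1 - p.1 := by linarith
    have ht0 : 0 < t := div_pos (by linarith) hd
    have ht1' : t < 1 := (div_lt_one hd).mpr (by linarith)
    have hz : (1 - t) • p + t • c ∈ K := hconv hp hcK (by linarith) (by linarith) (by ring)
    have hmul : t * (c.1 - p.1) = L.1 - p.1 := div_mul_cancel₀ _ (ne_of_gt hd)
    have hz1 : ((1 - t) • p + t • c).1 = L.1 := by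
      simp only [Prod.fst_add, Prod.smul_fst, smul_eq_mul]
      linear_combination hmul
    have hz2 : L.2 < ((1 - t) • p + t • c).2 := by
      simp only [Prod.snd_add, Prod.smul_snd, smul_eq_mul]
      nlinarith [mul_le_mul_of_nonneg_left hge (by linarith : (0:ℝ) ≤ 1 - t),
        mul_lt_mul_of_pos_left hc2 ht0]
    exact absurd (h1 _ hz hz1) (not_le.mpr hz2)
  have hSW2 : ∀ p ∈ K, p.2 < L.2 → p.1 < L.1 := by
    intro p hp hplt
    by_contra hge
    push_neg at hge
    set t := (L.2 - p.2) / (c.2 - p.2) with hts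
    have hd : 0 < c.2 - p.2 := by linarith
    have ht0 : 0 < t := div_pos (by linarith) hd
    have ht1' : t < 1 := (div_lt_one hd).mpr (by linarith)
    have hz : (1 - t) • p + t • c ∈ K := hconv hp hcK (by linarith) (by linarith) (by ring)
    have hmul : t * (c.2 - p.2) = L.2 - p.2 := div_mul_cancel₀ _ (ne_of_gt hd)
    have hz2 : ((1 - t) • p + t • c).2 = L.2 := by
      simp only [Prod.snd_add, Prod.smul_snd, smul_eq_mul]
      linear_combination hmul
    have hz1 : L.1 < ((1 - t) • p + t • c).1 := by
      simp only [Prod.fst_add, Prod.smul_fst, smul_eq_mul]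
      nlinarith [mul_le_mul_of_nonneg_left hge (by linarith : (0:ℝ) ≤ 1 - t),
        mul_lt_mul_of_pos_left hc1 ht0]
    exact absurd (h2 _ hz hz2) (not_le.mpr hz1)
  have htri : ∀ p ∈ K, p = L ∨ (p.1 < L.1 ∧ p.2 < L.2) ∨ (L.1 < p.1 ∧ L.2 < p.2) := by
    intro p hp
    rcases lt_trichotomy p.1 L.1 with h | h | h
    · exact Or.inr (Or.inl ⟨h, hSW1 p hp h⟩)
    · left
      rcases lt_or_eq_of_le (h1 p hp h) with h' | h'
      · exact absurd (hSW2 p hp h') (by rw [h]; exact lt_irrefl _)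
      · exact Prod.ext h h'
    · refine Or.inr (Or.inr ⟨h, ?_⟩)
      by_contra hh
      push_neg at hh
      rcases lt_or_eq_of_le hh with h' | h'
      · linarith [hSW2 p hp h']
      · linarith [h2 p hp h']
  have hfix : ∀ p ∈ K, p.1 = L.1 → p = L := by
    intro p hp h
    rcases htri p hp with h' | h' | h'
    · exact h'
    · exact absurd h (ne_of_lt h'.1)
    · exact absurd h.symm (ne_of_lt h'.1)
  have hseg : ∀ u v : ℝ × ℝ, u ∈ K → v ∈ K → u.1 < L.1 → L.1 < v.1 →
      (1 - (L.1 - u.1)/(v.1 - u.1)) * u.2 + ((L.1 - u.1)/(v.1 - u.1)) * v.2 = L.2 := by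
    intro u v hu hv hu1 hv1
    set t := (L.1 - u.1)/(v.1 - u.1) with hts
    have hd : 0 < v.1 - u.1 := by linarith
    have ht0 : 0 < t := div_pos (by linarith) hd
    have ht1' : t < 1 := (div_lt_one hd).mpr (by linarith)
    have hz : (1 - t) • u + t • v ∈ K := hconv hu hv (by linarith) (by linarith) (by ring)
    have hmul : t * (v.1 - u.1) = L.1 - u.1 := div_mul_cancel₀ _ (ne_of_gt hd)
    have hz1 : ((1 - t) • u + t • v).1 = L.1 := by
      simp only [Prod.fst_add, Prod.smul_fst, smul_eq_mul]
      linear_combination hmul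
    have := hfix _ hz hz1
    have h2' : ((1 - t) • u + t • v).2 = L.2 := by rw [this]
    simpa only [Prod.snd_add, Prod.smul_snd, smul_eq_mul] using h2'
  obtain ⟨p₀, hp₀K, hp₀ne, hp₀le⟩ := hnm
  have hp₀SW : p₀.1 < L.1 ∧ p₀.2 < L.2 := by
    rcases htri p₀ hp₀K with h | h | h
    · exact absurd h hp₀ne
    · exact h
    · rcases hp₀le with h' | h' <;> [linarith [h.1]; linarith [h.2]]
  obtain ⟨w, hw⟩ := hint
  obtain ⟨r, hr, hball⟩ := Metric.isOpen_iff.mp isOpen_interior w hw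
  have hwK : w ∈ K := interior_subset hw
  have hwp : ((w.1, w.2 + r/2) : ℝ × ℝ) ∈ K := by
    apply interior_subset (hball _)
    rw [Metric.mem_ball, Prod.dist_eq, dist_self, Real.dist_eq]
    rw [add_sub_cancel_left, abs_of_nonneg (half_pos hr).le, max_eq_right (half_pos hr).le]
    linarith
  have hwne : w ≠ L := by
    intro h
    rw [h] at hw
    exact (hK.isClosed.frontier_eq ▸ hLK).2 hw
  rcases htri w hwK with h | h | h
  · exact hwne h
  · -- w is SW : use segments from w and its perturbation to c
    have e1 := hseg w c hwK hcK h.1 hc1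
    have e2 := hseg (w.1, w.2 + r/2) c hwp hcK (by simpa using h.1) hc1
    simp only at e2
    set t := (L.1 - w.1)/(c.1 - w.1) with hts
    have hd : 0 < c.1 - w.1 := by linarith [h.1]
    have ht1' : t < 1 := (div_lt_one hd).mpr (by linarith [h.1])
    nlinarith [e1, e2, mul_pos (by linarith : (0:ℝ) < 1 - t) (half_pos hr)]
  · -- w is NE : use segments from p₀ to w and its perturbation
    have e1 := hseg p₀ w hp₀K hwK hp₀SW.1 h.1
    have e2 := hseg p₀ (w.1, w.2 + r/2) hp₀K hwp hp₀SW.1 (by simpa using h.1)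
    simp only at e2
    set t := (L.1 - p₀.1)/(w.1 - p₀.1) with hts
    have hd : 0 < w.1 - p₀.1 := by linarith [h.1, hp₀SW.1]
    have ht0 : 0 < t := div_pos (by linarith [hp₀SW.1]) hd
    nlinarith [e1, e2, mul_pos ht0 (half_pos hr)]

/-- Lemma `pincho`. Consider `ℝ²` with the taxicab (ℓ¹) distance and
a convex Jordan curve `C` having a point `c` that is extreme in two coordinate
directions (here: `c` attains both the maximum first and the maximum second coordinate
on `C`). For `a ∈ C` let `(a_n)` be the sequence starting at `a` in which each next term
is a point of `C` closest to `c` (in the ℓ¹ metric) among the points of `C` sharing a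
coordinate with the current term, choosing a point on the same vertical line in case of
ambiguity. Then `(a_n)` converges to `c`, unless `a` is the strict extreme of `C` in the
two remaining directions, in which case the sequence is constantly `a`. -/
theorem stmt7 (C : Set (ℝ × ℝ))
    (hJordan : ∃ K : Set (ℝ × ℝ), IsCompact K ∧ Convex ℝ K ∧
      (interior K).Nonempty ∧ C = frontier K)
    (c : ℝ × ℝ) (hc : c ∈ C)
    (hcorner : (∀ p ∈ C, p.1 ≤ c.1) ∧ (∀ p ∈ C, p.2 ≤ c.2))
    (a : ℕ → ℝ × ℝ) (ha0 : a 0 ∈ C)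
    (hstep : ∀ n : ℕ,
      a (n+1) ∈ C ∧
      ((a (n+1)).1 = (a n).1 ∨ (a (n+1)).2 = (a n).2) ∧
      (∀ q ∈ C, (q.1 = (a n).1 ∨ q.2 = (a n).2) →
        |(a (n+1)).1 - c.1| + |(a (n+1)).2 - c.2| ≤ |q.1 - c.1| + |q.2 - c.2|) ∧
      (∀ q ∈ C, q.1 = (a n).1 →
        |q.1 - c.1| + |q.2 - c.2| = |(a (n+1)).1 - c.1| + |(a (n+1)).2 - c.2| →
        (a (n+1)).1 = (a n).1)) :
    (¬ (∀ p ∈ C, p ≠ a 0 → (a 0).1 < p.1 ∧ (a 0).2 < p.2) →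
        Filter.Tendsto a Filter.atTop (nhds c)) ∧
    ((∀ p ∈ C, p ≠ a 0 → (a 0).1 < p.1 ∧ (a 0).2 < p.2) → ∀ n, a n = a 0) := by
  obtain ⟨K, hKcomp, hKconv, hKint, hCfr⟩ := hJordan
  have haC : ∀ n, a n ∈ C := by
    intro n
    cases n with
    | zero => exact ha0
    | succ m => exact (hstep m).1
  have hCK : C ⊆ K := by rw [hCfr]; exact hKcomp.isClosed.frontier_subset
  have haK : ∀ n, a n ∈ K := fun n => hCK (haC n)
  have hgC : ∀ p ∈ C, |p.1 - c.1| + |p.2 - c.2| = (c.1 - p.1) + (c.2 - p.2) := by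
    intro p hp
    rw [absle (hcorner.1 p hp), absle (hcorner.2 p hp)]
  constructor
  · -- convergence part
    intro hns
    have hmono : ∀ n, (a n).1 ≤ (a (n+1)).1 ∧ (a n).2 ≤ (a (n+1)).2 := by
      intro n
      obtain ⟨hmem, hshare, hmin, -⟩ := hstep n
      have h := hmin (a n) (haC n) (Or.inl rfl)
      rw [hgC _ hmem, hgC _ (haC n)] at h
      rcases hshare with hs | hs
      · exact ⟨le_of_eq hs.symm, by linarith⟩
      · exact ⟨by linarith, le_of_eq hs.symm⟩
    have hm1 : Monotone fun n => (a n).1 := monotone_nat_of_le_succ fun n => (hmono n).1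
    have hm2 : Monotone fun n => (a n).2 := monotone_nat_of_le_succ fun n => (hmono n).2
    have hb1 : BddAbove (Set.range fun n => (a n).1) :=
      ⟨c.1, by rintro x ⟨n, rfl⟩; exact hcorner.1 _ (haC n)⟩
    have hb2 : BddAbove (Set.range fun n => (a n).2) :=
      ⟨c.2, by rintro x ⟨n, rfl⟩; exact hcorner.2 _ (haC n)⟩
    set L1 := ⨆ n, (a n).1 with hL1def
    set L2 := ⨆ n, (a n).2 with hL2def
    have ht1lim : Filter.Tendsto (fun n => (a n).1) Filter.atTop (nhds L1) :=
      tendsto_atTop_ciSup hm1 hb1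
    have ht2lim : Filter.Tendsto (fun n => (a n).2) Filter.atTop (nhds L2) :=
      tendsto_atTop_ciSup hm2 hb2
    have han1 : ∀ n, (a n).1 ≤ L1 := fun n => le_ciSup hb1 n
    have han2 : ∀ n, (a n).2 ≤ L2 := fun n => le_ciSup hb2 n
    have hLten : Filter.Tendsto a Filter.atTop (nhds (L1, L2)) := ht1lim.prodMk_nhds ht2lim
    have hLCmem : ((L1, L2) : ℝ × ℝ) ∈ C :=
      (hCfr ▸ isClosed_frontier : IsClosed C).mem_of_tendsto hLten
        (Filter.Eventually.of_forall haC)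
    suffices hkey : ((L1, L2) : ℝ × ℝ) = c by rw [← hkey]; exact hLten
    by_contra hLc
    have hL1c : L1 ≤ c.1 := hcorner.1 _ hLCmem
    have hL2c : L2 ≤ c.2 := hcorner.2 _ hLCmem
    push_neg at hns
    obtain ⟨p₀, hp₀C, hp₀ne, hp₀le⟩ := hns
    have hp₀le' : p₀.1 ≤ L1 ∨ p₀.2 ≤ L2 := by
      rcases le_or_gt p₀.1 (a 0).1 with h | h
      · exact Or.inl (le_trans h (han1 0))
      · exact Or.inr (le_trans (hp₀le h) (han2 0))
    have hnm : ∃ p ∈ K, p ≠ ((L1, L2) : ℝ × ℝ) ∧ (p.1 ≤ L1 ∨ p.2 ≤ L2) := by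
      by_cases haL : a 0 = ((L1, L2) : ℝ × ℝ)
      · exact ⟨p₀, hCK hp₀C, by rw [← haL]; exact hp₀ne, hp₀le'⟩
      · exact ⟨a 0, haK 0, haL, Or.inl (han1 0)⟩
    have := lemA hKcomp hKconv hKint (hCK hc) (hCfr ▸ hLCmem) hL1c hL2c hLc hnm
    rcases this with ⟨q, hqK, hq1, hq2⟩ | ⟨q, hqK, hq2, hq1⟩
    · -- vertical improving point q : q.1 = L1, L2 < q.2
      rcases eq_or_lt_of_le (han1 0) with heq0 | hlt0
      · -- (a 0).1 = L1 already
        obtain ⟨t, htC', ht1, htsup⟩ := topPoint hKcomp (haK 0)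
        have htC : t ∈ C := by rw [hCfr]; exact htC'
        have hq2t : q.2 ≤ t.2 := by
          apply htsup
          have : ((a 0).1, q.2) = q := Prod.ext (by rw [heq0, hq1]) rfl
          rw [this]; exact hqK
        obtain ⟨h1mem, -, hmin, -⟩ := hstep 0
        have hle := hmin t htC (Or.inl ht1)
        rw [hgC _ h1mem, hgC _ htC] at hle
        have h1 := han1 1
        have h2 := han2 1
        have hteq : t.1 = L1 := by rw [ht1, ← heq0]
        linarith
      · -- (a 0).1 < L1
        have hden : 0 < L1 - (a 0).1 := by linarith
        set τ : ℕ → ℝ := fun n => ((a n).1 - (a 0).1) / (L1 - (a 0).1) with hτdef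
        have hkey : ∀ n, (1 - τ n) * (a 0).2 + τ n * q.2 ≤ L2 + (L1 - (a n).1) := by
          intro n
          have ha0n : (a 0).1 ≤ (a n).1 := hm1 (Nat.zero_le n)
          have hτ0 : 0 ≤ τ n := div_nonneg (by linarith) hden.le
          have hτ1 : τ n ≤ 1 := (div_le_one hden).mpr (by linarith [han1 n])
          have hsK : (1 - τ n) • (a 0) + τ n • q ∈ K :=
            hKconv (haK 0) hqK (by linarith) hτ0 (by ring)
          have hmul : τ n * (L1 - (a 0).1) = (a n).1 - (a 0).1 :=
            div_mul_cancel₀ _ hden.ne'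
          have hs1 : ((1 - τ n) • (a 0) + τ n • q).1 = (a n).1 := by
            simp only [Prod.fst_add, Prod.smul_fst, smul_eq_mul]
            linear_combination hmul + τ n * hq1
          have hs2 : ((1 - τ n) • (a 0) + τ n • q).2 = (1 - τ n) * (a 0).2 + τ n * q.2 := by
            simp only [Prod.snd_add, Prod.smul_snd, smul_eq_mul]
          obtain ⟨t, htC', ht1, htsup⟩ := topPoint hKcomp (haK n)
          have htC : t ∈ C := by rw [hCfr]; exact htC'
          have hst : (1 - τ n) * (a 0).2 + τ n * q.2 ≤ t.2 := by
            apply htsup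
            have heq : ((a n).1, (1 - τ n) * (a 0).2 + τ n * q.2) =
                (1 - τ n) • (a 0) + τ n • q := Prod.ext hs1.symm hs2.symm
            rw [heq]; exact hsK
          obtain ⟨hmemn, -, hmin, -⟩ := hstep n
          have hle := hmin t htC (Or.inl ht1)
          rw [hgC _ hmemn, hgC _ htC] at hle
          have h1 := han1 (n+1)
          have h2 := han2 (n+1)
          linarith
        have hτlim : Filter.Tendsto τ Filter.atTop (nhds 1) := by
          have h := (ht1lim.sub_const (a 0).1).div_const (L1 - (a 0).1)
          rw [div_self hden.ne'] at h
          exact h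
        have hlhs : Filter.Tendsto (fun n => (1 - τ n) * (a 0).2 + τ n * q.2)
            Filter.atTop (nhds q.2) := by
          have h := (((tendsto_const_nhds (x := (1:ℝ))).sub hτlim).mul_const (a 0).2).add
            (hτlim.mul_const q.2)
          have he : (1 - (1:ℝ)) * (a 0).2 + 1 * q.2 = q.2 := by ring
          rw [he] at h
          exact h
        have hrhs : Filter.Tendsto (fun n => L2 + (L1 - (a n).1))
            Filter.atTop (nhds L2) := by
          have h := (tendsto_const_nhds (x := L2)).add
            ((tendsto_const_nhds (x := L1)).sub ht1lim)
          have he : L2 + (L1 - L1) = L2 := by ring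
          rw [he] at h
          exact h
        have := le_of_tendsto_of_tendsto' hlhs hrhs hkey
        linarith
    · -- horizontal improving point q : q.2 = L2, L1 < q.1
      rcases eq_or_lt_of_le (han2 0) with heq0 | hlt0
      · obtain ⟨t, htC', ht2, htsup⟩ := rightPoint hKcomp (haK 0)
        have htC : t ∈ C := by rw [hCfr]; exact htC'
        have hq1t : q.1 ≤ t.1 := by
          apply htsup
          have : (q.1, (a 0).2) = q := Prod.ext rfl (by rw [heq0, hq2])
          rw [this]; exact hqK
        obtain ⟨h1mem, -, hmin, -⟩ := hstep 0
        have hle := hmin t htC (Or.inr ht2)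
        rw [hgC _ h1mem, hgC _ htC] at hle
        have h1 := han1 1
        have h2 := han2 1
        have hteq : t.2 = L2 := by rw [ht2, ← heq0]
        linarith
      · have hden : 0 < L2 - (a 0).2 := by linarith
        set τ : ℕ → ℝ := fun n => ((a n).2 - (a 0).2) / (L2 - (a 0).2) with hτdef
        have hkey : ∀ n, (1 - τ n) * (a 0).1 + τ n * q.1 ≤ L1 + (L2 - (a n).2) := by
          intro n
          have ha0n : (a 0).2 ≤ (a n).2 := hm2 (Nat.zero_le n)
          have hτ0 : 0 ≤ τ n := div_nonneg (by linarith) hden.le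
          have hτ1 : τ n ≤ 1 := (div_le_one hden).mpr (by linarith [han2 n])
          have hsK : (1 - τ n) • (a 0) + τ n • q ∈ K :=
            hKconv (haK 0) hqK (by linarith) hτ0 (by ring)
          have hmul : τ n * (L2 - (a 0).2) = (a n).2 - (a 0).2 :=
            div_mul_cancel₀ _ hden.ne'
          have hs2 : ((1 - τ n) • (a 0) + τ n • q).2 = (a n).2 := by
            simp only [Prod.snd_add, Prod.smul_snd, smul_eq_mul]
            linear_combination hmul + τ n * hq2
          have hs1 : ((1 - τ n) • (a 0) + τ n • q).1 = (1 - τ n) * (a 0).1 + τ n * q.1 := by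
            simp only [Prod.fst_add, Prod.smul_fst, smul_eq_mul]
          obtain ⟨t, htC', ht2, htsup⟩ := rightPoint hKcomp (haK n)
          have htC : t ∈ C := by rw [hCfr]; exact htC'
          have hst : (1 - τ n) * (a 0).1 + τ n * q.1 ≤ t.1 := by
            apply htsup
            have heq : ((1 - τ n) * (a 0).1 + τ n * q.1, (a n).2) =
                (1 - τ n) • (a 0) + τ n • q := Prod.ext hs1.symm hs2.symm
            rw [heq]; exact hsK
          obtain ⟨hmemn, -, hmin, -⟩ := hstep n
          have hle := hmin t htC (Or.inr ht2)
          rw [hgC _ hmemn, hgC _ htC] at hle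
          have h1 := han1 (n+1)
          have h2 := han2 (n+1)
          linarith
        have hτlim : Filter.Tendsto τ Filter.atTop (nhds 1) := by
          have h := (ht2lim.sub_const (a 0).2).div_const (L2 - (a 0).2)
          rw [div_self hden.ne'] at h
          exact h
        have hlhs : Filter.Tendsto (fun n => (1 - τ n) * (a 0).1 + τ n * q.1)
            Filter.atTop (nhds q.1) := by
          have h := (((tendsto_const_nhds (x := (1:ℝ))).sub hτlim).mul_const (a 0).1).add
            (hτlim.mul_const q.1)
          have he : (1 - (1:ℝ)) * (a 0).1 + 1 * q.1 = q.1 := by ring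
          rw [he] at h
          exact h
        have hrhs : Filter.Tendsto (fun n => L1 + (L2 - (a n).2))
            Filter.atTop (nhds L1) := by
          have h := (tendsto_const_nhds (x := L1)).add
            ((tendsto_const_nhds (x := L2)).sub ht2lim)
          have he : L1 + (L2 - L2) = L1 := by ring
          rw [he] at h
          exact h
        have := le_of_tendsto_of_tendsto' hlhs hrhs hkey
        linarith
  · -- constant part
    intro hstrict n
    induction n with
    | zero => rfl
    | succ m ih =>
      obtain ⟨hmem, hshare, -, -⟩ := hstep m
      rw [ih] at hshare
      by_contra hne
      obtain ⟨h1, h2⟩ := hstrict _ hmem hne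
      rcases hshare with h | h <;> linarith
end

section
/- Let X be a strictly convex normed plane whose norm has only finitely many non-differentiability points on S_X, let C_X ⊂ X be a piecewise C¹ Jordan curve enclosing a convex region, and let a ∈ C_X be a point where C_X is differentiable. Define NDif(a) = {b ∈ C_X : t ↦ ‖γ_a(t) − b‖ is not differentiable at t = 0}, where γ_a is the natural parameterization of C_X with γ_a(0) = a. Then NDif(a) consists of at most one line segment (which, if present, has a as an endpoint) together with finitely many isolated points. -/
/-- `γ` is a natural (arc-length) parameterization of the closed curve `C`, with period
`L`, which is piecewise `C¹`: it has one-sided derivatives of norm one everywhere and is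
differentiable except at the points of a finite set `F ⊆ C`. -/
def IsPiecewiseC1NaturalParam {X : Type*} [NormedAddCommGroup X] [NormedSpace ℝ X]
    (C : Set X) (γ : ℝ → X) (L : ℝ) (F : Set X) : Prop :=
  0 < L ∧ Function.Periodic γ L ∧ Set.range γ = C ∧ Set.InjOn γ (Set.Ico 0 L) ∧
    F.Finite ∧ F ⊆ C ∧
    (∀ t : ℝ, ∃ dp dm : X, ‖dp‖ = 1 ∧ ‖dm‖ = 1 ∧
      HasDerivWithinAt γ dp (Set.Ici t) t ∧ HasDerivWithinAt γ dm (Set.Iic t) t) ∧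
    (∀ t : ℝ, γ t ∉ F → DifferentiableAt ℝ γ t)


open Set

private lemma norm_diff_smul {X : Type*} [NormedAddCommGroup X] [NormedSpace ℝ X] {u : X} {r : ℝ}
    (hr : 0 < r) (h : DifferentiableAt ℝ (fun z : X => ‖z‖) u) :
    DifferentiableAt ℝ (fun z : X => ‖z‖) (r • u) := by
  have heq : (fun z : X => ‖z‖) = (fun z : X => r * ‖r⁻¹ • z‖) := by
    funext z
    rw [norm_smul, Real.norm_eq_abs, abs_of_pos (inv_pos.mpr hr)]
    field_simp
  rw [heq]
  have h2 : DifferentiableAt ℝ (fun z : X => r⁻¹ • z) (r • u) :=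
    (differentiableAt_id.const_smul r⁻¹)
  have h3 : DifferentiableAt ℝ (fun z : X => ‖z‖) ((fun z : X => r⁻¹ • z) (r • u)) := by
    simpa [inv_smul_smul₀ hr.ne'] using h
  exact (h3.comp (r • u) h2).const_mul r

private lemma diff_norm_parallel {X : Type*} [NormedAddCommGroup X] [NormedSpace ℝ X]
    {γ : ℝ → X} {d b : X} {c : ℝ} (hγ : HasDerivAt γ d 0) (hc : c ≠ 0)
    (hb : b = γ 0 + c • d) :
    DifferentiableAt ℝ (fun t => ‖γ t - b‖) 0 := by
  have habs : DifferentiableAt ℝ (fun t : ℝ => |t - c| * ‖d‖) 0 := by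
    have h1 : DifferentiableAt ℝ (fun t : ℝ => |t - c|) 0 :=
      (differentiableAt_abs (by simpa using hc)).comp 0 (differentiableAt_id.sub_const c)
    exact h1.mul_const _
  set h : ℝ → ℝ := fun t => |t - c| * ‖d‖ with hh
  set m : ℝ := deriv h 0 with hm
  have hmder : HasDerivAt h m 0 := habs.hasDerivAt
  have hE := hasDerivAt_iff_isLittleO.mp hγ
  have hfirst : (fun t : ℝ => ‖γ t - b‖ - h t) =o[nhds 0] fun t => t - 0 := by
    refine (Asymptotics.isBigO_of_le _ ?_).trans_isLittleO hE
    intro t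
    have h1 : γ t - b = (γ t - γ 0 - (t - 0) • d) + (t - c) • d := by
      rw [hb]; module
    have h2 : h t = ‖(t - c) • d‖ := by rw [norm_smul, Real.norm_eq_abs]
    rw [h2]
    have := abs_norm_sub_norm_le (γ t - b) ((t - c) • d)
    rw [Real.norm_eq_abs]
    calc |‖γ t - b‖ - ‖(t - c) • d‖| ≤ ‖γ t - b - (t - c) • d‖ := abs_norm_sub_norm_le _ _
      _ = ‖γ t - γ 0 - (t - 0) • d‖ := by rw [h1]; congr 1; abel
  have hsecond := hasDerivAt_iff_isLittleO.mp hmder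
  have hsum := hfirst.add hsecond
  have hval : ‖γ 0 - b‖ = h 0 := by
    rw [hb]; simp [hh, norm_smul]
  have : HasDerivAt (fun t => ‖γ t - b‖) m 0 := by
    rw [hasDerivAt_iff_isLittleO]
    have heq : (fun t : ℝ => ‖γ t - b‖ - ‖γ 0 - b‖ - (t - 0) • m) =
        fun t => (‖γ t - b‖ - h t) + (h t - h 0 - (t - 0) • m) := by
      funext t; rw [hval]; ring
    rw [heq]
    exact hsum
  exact this.differentiableAt


private lemma ray_finite {X : Type*} [NormedAddCommGroup X] [NormedSpace ℝ X] {K : Set X}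
    (hK : IsCompact K) (hKc : Convex ℝ K) {a u : X} (hu : ‖u‖ = 1)
    (ha : a ∈ frontier K) (hz : ∃ s₀ : ℝ, a - s₀ • u ∈ interior K) :
    {b : X | ∃ r : ℝ, 0 < r ∧ b = a - r • u ∧ b ∈ frontier K}.Finite := by
  obtain ⟨s₀, hz⟩ := hz
  have hune : u ≠ 0 := by intro h; rw [h] at hu; simp at hu
  set P : ℝ →ᵃ[ℝ] X := AffineMap.lineMap a (a - u) with hP
  have hPap : ∀ r : ℝ, P r = a - r • u := by
    intro r
    simp [hP, AffineMap.lineMap_apply]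
    module
  set R : Set ℝ := (fun r => a - r • u) ⁻¹' frontier K with hR
  have hfrK : frontier K ⊆ K := hK.isClosed.frontier_subset
  have hRclosed : IsClosed R :=
    IsClosed.preimage (by continuity) isClosed_frontier
  obtain ⟨M, hM⟩ := hK.isBounded.exists_norm_le
  have hRsub : R ⊆ Icc (-(‖a‖ + M)) (‖a‖ + M) := by
    intro r hr
    have h1 : ‖a - r • u‖ ≤ M := hM _ (hfrK hr)
    have h2 : ‖r • u‖ ≤ ‖a‖ + M := by
      calc ‖r • u‖ = ‖a - (a - r • u)‖ := by congr 1; abel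
        _ ≤ ‖a‖ + ‖a - r • u‖ := norm_sub_le _ _
        _ ≤ ‖a‖ + M := by linarith
    rw [norm_smul, hu, mul_one, Real.norm_eq_abs] at h2
    exact abs_le.mp h2
  have hRcomp : IsCompact R := isCompact_Icc.of_isClosed_subset hRclosed hRsub
  have h0R : (0 : ℝ) ∈ R := by simp [hR, ha]
  have hRne : R.Nonempty := ⟨0, h0R⟩
  -- no point's parameter is strictly between s₀ and another parameter in R
  have hnint : ∀ x, x ∈ frontier K → x ∉ interior K := by
    intro x hx
    simp only [frontier, Set.mem_diff] at hx
    exact hx.2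
  have key : ∀ r1 r2 : ℝ, r1 ∈ R → r2 ∈ R → r1 ∈ openSegment ℝ s₀ r2 → False := by
    intro r1 r2 h1 h2 hseg
    have hmem : a - r1 • u ∈ openSegment ℝ (a - s₀ • u) (a - r2 • u) := by
      have := image_openSegment ℝ P s₀ r2
      have h3 : P r1 ∈ P '' openSegment ℝ s₀ r2 := mem_image_of_mem _ hseg
      rw [this] at h3
      rwa [hPap r1, hPap s₀, hPap r2] at h3
    have : a - r1 • u ∈ interior K :=
      hKc.openSegment_interior_closure_subset_interior hz (subset_closure (hfrK h2)) hmem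
    exact hnint _ h1 this
  have hs₀ : s₀ ∉ R := fun h => hnint _ h hz
  have hsub2 : R ⊆ {sInf R, sSup R} := by
    intro r hr
    by_contra hne
    rw [mem_insert_iff, mem_singleton_iff] at hne
    push_neg at hne
    have hlt1 : sInf R < r := lt_of_le_of_ne (csInf_le hRcomp.bddBelow hr) (Ne.symm hne.1)
    have hlt2 : r < sSup R := lt_of_le_of_ne (le_csSup hRcomp.bddAbove hr) hne.2
    have hsne : s₀ ≠ r := fun h => hs₀ (h ▸ hr)
    rcases hsne.lt_or_gt with hlt | hlt
    · refine key r (sSup R) hr (hRcomp.sSup_mem hRne) ?_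
      rw [openSegment_eq_Ioo (lt_trans hlt hlt2)]
      exact ⟨hlt, hlt2⟩
    · refine key r (sInf R) hr (hRcomp.sInf_mem hRne) ?_
      rw [openSegment_symm, openSegment_eq_Ioo (lt_trans hlt1 hlt)]
      exact ⟨hlt1, hlt⟩
  have hfin : R.Finite := ((Set.finite_singleton (sSup R)).insert (sInf R)).subset hsub2
  refine (hfin.image (fun r => a - r • u)).subset ?_
  rintro b ⟨r, _, rfl, hbf⟩
  exact mem_image_of_mem _ hbf


section Aux

variable {X : Type*} [NormedAddCommGroup X] [NormedSpace ℝ X]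

-- separating functional for a line through `a` missing the interior of `K`
private lemma sep_line {K : Set X} (hK : IsCompact K) (hKc : Convex ℝ K)
    (hKint : (interior K).Nonempty) {a u : X}
    (ha : a ∈ K) (hcase : ∀ t : ℝ, a + t • u ∉ interior K) :
    ∃ f : X →L[ℝ] ℝ, f u = 0 ∧ (∀ x ∈ K, f x ≤ f a) ∧ (∀ z ∈ interior K, f z < f a) := by
  set Q : ℝ →ᵃ[ℝ] X := AffineMap.lineMap a (a + u) with hQ
  have hQap : ∀ t : ℝ, Q t = a + t • u := by
    intro t; simp [hQ, AffineMap.lineMap_apply]; abel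
  have hline : Convex ℝ (Q '' univ) := (convex_univ).affine_image Q
  have hdisj : Disjoint (interior K) (Q '' univ) := by
    rw [Set.disjoint_left]
    rintro x hx ⟨t, -, rfl⟩
    exact hcase t (by rwa [hQap t] at hx)
  obtain ⟨f, c, hflt, hfge⟩ :=
    geometric_hahn_banach_open (hKc.interior) isOpen_interior hline hdisj
  -- every point of K has f-value ≤ c
  obtain ⟨z₀, hz₀⟩ := hKint
  have hleK : ∀ x ∈ K, f x ≤ c := by
    intro x hx
    have htend : Filter.Tendsto (fun θ : ℝ => (1 - θ) * f x + θ * f z₀)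
        (nhdsWithin 0 (Set.Ioi 0)) (nhds (f x)) := by
      have hcont : Continuous (fun θ : ℝ => (1 - θ) * f x + θ * f z₀) := by continuity
      have h0 := (hcont.tendsto 0).mono_left (nhdsWithin_le_nhds (s := Set.Ioi (0:ℝ)))
      simpa using h0
    refine le_of_tendsto htend ?_
    filter_upwards [Ioo_mem_nhdsGT_of_mem (by constructor <;> norm_num : (0:ℝ) ∈ Set.Ico 0 1)]
      with θ hθ
    have hmem : (1 - θ) • x + θ • z₀ ∈ interior K :=
      hKc.combo_closure_interior_mem_interior (subset_closure hx) hz₀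
        (by linarith [hθ.2]) hθ.1 (by ring)
    have h2 := hflt _ hmem
    have h3 : f ((1 - θ) • x + θ • z₀) = (1 - θ) * f x + θ * f z₀ := by
      simp [map_add, map_smul]
    linarith [h3 ▸ h2]
  have hfa_ge : c ≤ f a := by
    have := hfge (Q 0) (mem_image_of_mem _ (mem_univ 0))
    simpa [hQap 0] using this
  have hfa : f a = c := le_antisymm (hleK a ha) hfa_ge
  have hfu : f u = 0 := by
    have h1 := hfge (Q 1) (mem_image_of_mem _ (mem_univ 1))
    have h2 := hfge (Q (-1)) (mem_image_of_mem _ (mem_univ (-1)))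
    rw [hQap 1] at h1
    rw [hQap (-1)] at h2
    simp [map_add, map_smul] at h1 h2
    linarith [hfa ▸ h1, hfa ▸ h2]
  exact ⟨f, hfu, fun x hx => hfa ▸ hleK x hx, fun z hz => hfa ▸ hflt z hz⟩

-- in a 2-dimensional space, two vectors killed by a nonzero functional are dependent
private lemma dep_of_ker (hdim : Module.finrank ℝ X = 2) (f : X →L[ℝ] ℝ)
    {u d z : X} (hu : f u = 0) (hd : f d = 0) (hd0 : d ≠ 0) (hfz : f z ≠ 0) :
    ∃ cc : ℝ, u = cc • d := by
  by_contra hnd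
  push_neg at hnd
  have hli : LinearIndependent ℝ ![u, d] := by
    rw [linearIndependent_fin2]
    refine ⟨by simpa using hd0, fun cc hcc => hnd cc ?_⟩
    simpa using hcc.symm
  haveI : FiniteDimensional ℝ X := FiniteDimensional.of_finrank_eq_succ hdim
  have hspan : Submodule.span ℝ (Set.range ![u, d]) = ⊤ :=
    hli.span_eq_top_of_card_eq_finrank (by simp [hdim])
  have hker : ∀ x : X, f x = 0 := by
    intro x
    have hx : x ∈ Submodule.span ℝ (Set.range ![u, d]) := hspan ▸ Submodule.mem_top
    induction hx using Submodule.span_induction with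
    | mem y hy =>
      obtain ⟨i, rfl⟩ := hy
      fin_cases i
      · simpa using hu
      · simpa using hd
    | zero => simp
    | add y1 y2 _ _ h1 h2 => simp [map_add, h1, h2]
    | smul c y _ h1 => simp [map_smul, h1]
  exact hfz (hker z)

end Aux


/-- Let `X` be a strictly convex normed plane whose norm has only
finitely many non-differentiability points on the unit sphere, let `C` be a piecewise
`C¹` Jordan curve enclosing a convex region, and let `a ∈ C` be a point where `C` is
differentiable, with natural parameterization `γ`, `γ 0 = a`. Then the set
`NDif a = {b ∈ C : t ↦ ‖γ t - b‖ is not differentiable at 0}` consists of at most one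
line segment (which, if present, has `a` as an endpoint) together with a finite set of
points. -/
theorem stmt12 {X : Type*} [NormedAddCommGroup X] [NormedSpace ℝ X]
    [StrictConvexSpace ℝ X] (hdim : Module.finrank ℝ X = 2)
    (hND : {u : X | ‖u‖ = 1 ∧ ¬ DifferentiableAt ℝ (fun z : X => ‖z‖) u}.Finite)
    (C : Set X)
    (hconv : ∃ K : Set X, IsCompact K ∧ Convex ℝ K ∧
      (interior K).Nonempty ∧ C = frontier K)
    (γ : ℝ → X) (L : ℝ) (F : Set X)
    (hγ : IsPiecewiseC1NaturalParam C γ L F)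
    (a : X) (ha : a ∈ C) (hγ0 : γ 0 = a)
    (hdiffa : DifferentiableAt ℝ γ 0) :
    ∃ I : Set X, I.Finite ∧
      ({b ∈ C | ¬ DifferentiableAt ℝ (fun t : ℝ => ‖γ t - b‖) 0} = I ∨
       ∃ e : X, e ≠ a ∧
        {b ∈ C | ¬ DifferentiableAt ℝ (fun t : ℝ => ‖γ t - b‖) 0} =
          segment ℝ a e ∪ I) := by
  classical
  obtain ⟨K, hKcomp, hKconv, hKint, hCK⟩ := hconv
  have hrange : Set.range γ = C := hγ.2.2.1
  -- the tangent direction d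
  obtain ⟨dp, dm, hdp1, -, hdpd, -⟩ := hγ.2.2.2.2.2.2.1 0
  have hd : HasDerivAt γ (deriv γ 0) 0 := hdiffa.hasDerivAt
  have hdpu : dp = deriv γ 0 := by
    have h1 := hdpd.derivWithin (uniqueDiffOn_Ici 0 0 Set.self_mem_Ici)
    have h2 := (hd.hasDerivWithinAt (s := Set.Ici 0)).derivWithin
      (uniqueDiffOn_Ici 0 0 Set.self_mem_Ici)
    rw [← h1, ← h2]
  set d := deriv γ 0 with hdd
  have hdn : ‖d‖ = 1 := hdpu ▸ hdp1
  have hdne : d ≠ 0 := by intro h; rw [h] at hdn; simp at hdn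
  have haK : a ∈ K := hKcomp.isClosed.frontier_subset (hCK ▸ ha)
  -- the finite cover
  set S' : Set X := {u : X | (‖u‖ = 1 ∧ ¬ DifferentiableAt ℝ (fun z : X => ‖z‖) u) ∧
      ∃ t : ℝ, a + t • u ∈ interior K} with hS'
  set T : X → Set X := fun u => {b : X | ∃ r : ℝ, 0 < r ∧ b = a - r • u ∧ b ∈ frontier K}
    with hT
  have hfin : (insert a (⋃ u ∈ S', T u)).Finite := by
    refine Set.Finite.insert a (Set.Finite.biUnion (hND.subset fun u hu => hu.1) ?_)
    intro u hu
    refine ray_finite hKcomp hKconv hu.1.1 (hCK ▸ ha) ?_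
    obtain ⟨t, ht⟩ := hu.2
    exact ⟨-t, by simpa using ht⟩
  refine ⟨{b ∈ C | ¬ DifferentiableAt ℝ (fun t : ℝ => ‖γ t - b‖) 0}, ?_, Or.inl rfl⟩
  refine hfin.subset ?_
  rintro b ⟨hbC, hbnd⟩
  by_cases hba : b = a
  · exact Set.mem_insert_iff.mpr (Or.inl hba)
  have hab : a - b ≠ 0 := sub_ne_zero.mpr (Ne.symm hba)
  set r : ℝ := ‖a - b‖ with hr'
  have hr : 0 < r := norm_pos_iff.mpr hab
  set u : X := r⁻¹ • (a - b) with hu'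
  have hun : ‖u‖ = 1 := by
    rw [hu', norm_smul, Real.norm_eq_abs, abs_of_pos (inv_pos.mpr hr)]
    field_simp
    exact hr'.symm
  have hune : u ≠ 0 := by intro h; rw [h] at hun; simp at hun
  have hru : r • u = a - b := smul_inv_smul₀ hr.ne' _
  have hbu : b = a - r • u := by rw [hru]; abel
  -- the direction u is a non-differentiability point of the norm
  have hundiff : ¬ DifferentiableAt ℝ (fun z : X => ‖z‖) u := by
    intro hdiff
    apply hbnd
    have h1 : DifferentiableAt ℝ (fun z : X => ‖z‖) ((fun t : ℝ => γ t - b) 0) := by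
      have := norm_diff_smul hr hdiff
      rw [hru] at this
      simpa [hγ0] using this
    have h2 : DifferentiableAt ℝ (fun t : ℝ => γ t - b) 0 := hdiffa.sub_const b
    have h3 := h1.comp 0 h2
    exact h3
  by_cases hcase : ∃ t : ℝ, a + t • u ∈ interior K
  · refine Set.mem_insert_iff.mpr (Or.inr ?_)
    refine Set.mem_biUnion (show u ∈ S' from ⟨⟨hun, hundiff⟩, hcase⟩) ?_
    exact ⟨r, hr, hbu, hCK ▸ hbC⟩
  -- otherwise the line through a in direction u is a supporting line: contradiction
  exfalso
  push_neg at hcase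
  obtain ⟨f, hfu, hfleK, hflt⟩ := sep_line hKcomp hKconv hKint haK hcase
  -- f d = 0 since f ∘ γ has a maximum at 0
  have hmax : IsLocalMax (fun t => f (γ t)) 0 := by
    refine Filter.Eventually.of_forall fun t => ?_
    have hγt : γ t ∈ K := by
      have : γ t ∈ C := hrange ▸ Set.mem_range_self t
      exact hKcomp.isClosed.frontier_subset (hCK ▸ this)
    simpa [hγ0] using hfleK _ hγt
  have hcomp : HasDerivAt (fun t => f (γ t)) (f d) 0 :=
    (f.hasFDerivAt.comp_hasDerivAt 0 hd)
  have hfd : f d = 0 := hmax.hasDerivAt_eq_zero hcomp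
  obtain ⟨z₀, hz₀⟩ := hKint
  have hfz : f z₀ - f a ≠ 0 := by
    have := hflt z₀ hz₀; linarith
  -- u is parallel to d
  obtain ⟨cc, hucc⟩ : ∃ cc : ℝ, u = cc • d := by
    refine dep_of_ker hdim f hfu hfd hdne (z := z₀ - a) ?_
    simpa [map_sub] using hfz
  have hcc : cc ≠ 0 := by
    intro h; rw [h, zero_smul] at hucc; exact hune hucc
  -- then b - a is parallel to d and the norm map is differentiable: contradiction
  apply hbnd
  refine diff_norm_parallel hd (c := -(r * cc)) ?_ ?_
  · simp [hr.ne', hcc]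
  · rw [hγ0, hbu, hucc, smul_smul]
    module
end

section
/- Let X be a strictly convex normed plane, C_X ⊂ X a piecewise C¹ Jordan curve enclosing a convex region, and a ∈ C_X a point where C_X is NOT differentiable. Then for every b ∈ C_X such that (a − b)/‖a − b‖ is a differentiability point of the norm of X, the function t ↦ ‖γ_a(t) − b‖ fails to be differentiable at t = 0. -/
open Set

/-- A segment from a point of a closed set to a point outside it meets the frontier. -/
lemma segment_crosses_frontier {X : Type*} [NormedAddCommGroup X] [NormedSpace ℝ X]
    {K : Set X} (hK : IsClosed K) {x y : X} (hx : x ∈ K) (hy : y ∉ K) :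
    ∃ z ∈ segment ℝ x y, z ∈ frontier K := by
  by_contra h
  push_neg at h
  have hfr : frontier K = K \ interior K := hK.frontier_eq
  have hpre : IsPreconnected (segment ℝ x y) := (convex_segment x y).isPreconnected
  have hsub : segment ℝ x y ⊆ interior K ∪ Kᶜ := by
    intro z hz
    by_cases hzK : z ∈ K
    · by_cases hzi : z ∈ interior K
      · exact Or.inl hzi
      · exact absurd (hfr ▸ ⟨hzK, hzi⟩) (h z hz)
    · exact Or.inr hzK
  have h1 : (segment ℝ x y ∩ interior K).Nonempty := by
    refine ⟨x, left_mem_segment _ _ _, ?_⟩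
    by_contra hxi
    exact h x (left_mem_segment _ _ _) (hfr ▸ ⟨hx, hxi⟩)
  have h2 : (segment ℝ x y ∩ Kᶜ).Nonempty := ⟨y, right_mem_segment _ _ _, hy⟩
  obtain ⟨z, _, hzi, hzc⟩ := hpre _ _ isOpen_interior hK.isOpen_compl hsub h1 h2
  exact hzc (interior_subset hzi)

set_option maxHeartbeats 1000000 in
/-- Let `X` be a strictly convex normed plane, `C` a piecewise `C¹`
Jordan curve enclosing a convex region, and `a ∈ C` a point where `C` is *not*
differentiable (the one-sided derivatives of the natural parameterization `γ`, with
`γ 0 = a`, differ at `0`). Then for every `b ∈ C` such that `(a - b)/‖a - b‖` is a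
differentiability point of the norm, the function `t ↦ ‖γ t - b‖` fails to be
differentiable at `t = 0`. -/
theorem stmt13 {X : Type*} [NormedAddCommGroup X] [NormedSpace ℝ X]
    [StrictConvexSpace ℝ X] (hdim : Module.finrank ℝ X = 2)
    (C : Set X)
    (hconv : ∃ K : Set X, IsCompact K ∧ Convex ℝ K ∧
      (interior K).Nonempty ∧ C = frontier K)
    (γ : ℝ → X) (L : ℝ) (F : Set X)
    (hγ : IsPiecewiseC1NaturalParam C γ L F)
    (a : X) (ha : a ∈ C) (hγ0 : γ 0 = a)
    (hnd : ∀ dp dm : X, HasDerivWithinAt γ dp (Set.Ici 0) 0 →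
      HasDerivWithinAt γ dm (Set.Iic 0) 0 → dp ≠ dm) :
    ∀ b ∈ C, b ≠ a →
      DifferentiableAt ℝ (fun z : X => ‖z‖) (‖a - b‖⁻¹ • (a - b)) →
      ¬ DifferentiableAt ℝ (fun t : ℝ => ‖γ t - b‖) 0 := by
  obtain ⟨K, hKcomp, hKconv, hKint, hCfr⟩ := hconv
  obtain ⟨hL, hper, hrange, hinj, hFfin, hFC, hderivs, hdiff'⟩ := hγ
  intro b hb hba hdn hf
  clear hKint hFfin hFC hdiff'
  obtain ⟨dp, dm, hdp1, hdm1, hdpd, hdmd⟩ := hderivs 0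
  have hne : dp ≠ dm := hnd dp dm hdpd hdmd
  have hKcl : IsClosed K := hKcomp.isClosed
  have hfr : frontier K = K \ interior K := hKcl.frontier_eq
  have hafr : a ∈ frontier K := by rw [← hCfr]; exact ha
  have hbfr : b ∈ frontier K := by rw [← hCfr]; exact hb
  have haK : a ∈ K := by rw [hfr] at hafr; exact hafr.1
  have hanotint : a ∉ interior K := by rw [hfr] at hafr; exact hafr.2
  have hbK : b ∈ K := by rw [hfr] at hbfr; exact hbfr.1
  have hab : a - b ≠ 0 := sub_ne_zero.2 (Ne.symm hba)
  -- continuity of the curve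
  have hγcont : Continuous γ := by
    rw [continuous_iff_continuousAt]
    intro t
    obtain ⟨d1, d2, _, _, h1, h2⟩ := hderivs t
    have h3 : ContinuousWithinAt γ (Set.Iic t ∪ Set.Ici t) t :=
      h2.continuousWithinAt.union h1.continuousWithinAt
    rwa [Set.Iic_union_Ici, continuousWithinAt_univ] at h3
  -- the norm is differentiable at `a - b`, with derivative `φ`
  set R := ‖a - b‖ with hRdef
  have hRpos : 0 < R := norm_pos_iff.2 hab
  set u := R⁻¹ • (a - b) with hu
  have hunorm : ‖u‖ = 1 := by
    rw [hu, norm_smul, norm_inv, norm_norm, ← hRdef, inv_mul_cancel₀ (ne_of_gt hRpos)]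
  have hune : u ≠ 0 := by
    intro h; rw [h, norm_zero] at hunorm; exact zero_ne_one hunorm
  have haburu : a - b = R • u := by
    rw [hu, smul_smul, mul_inv_cancel₀ (ne_of_gt hRpos), one_smul]
  have hNab : DifferentiableAt ℝ (fun z : X => ‖z‖) (a - b) := by
    have hl : DifferentiableAt ℝ (fun z : X => R⁻¹ • z) (a - b) :=
      (differentiable_id.const_smul R⁻¹ : Differentiable ℝ fun z : X => R⁻¹ • z) _
    have h1 : DifferentiableAt ℝ (fun z : X => R * ‖R⁻¹ • z‖) (a - b) :=
      ((hdn.comp (a - b) hl).const_mul R)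
    have heq : (fun z : X => ‖z‖) = fun z : X => R * ‖R⁻¹ • z‖ := by
      funext z
      rw [norm_smul, norm_inv, norm_norm]
      field_simp
      rfl
    rw [heq]
    exact h1
  set φ := fderiv ℝ (fun z : X => ‖z‖) (a - b) with hφdef
  have hNd : HasFDerivAt (fun z : X => ‖z‖) φ (a - b) := hNab.hasFDerivAt
  have hDx : ∀ x : X, HasDerivAt (fun t : ℝ => ‖(a - b) + t • x‖) (φ x) 0 := by
    intro x
    have h1 : HasDerivAt (fun t : ℝ => (a - b) + t • x) x 0 := by
      simpa using ((hasDerivAt_id (0 : ℝ)).smul_const x).const_add (a - b)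
    exact hNd.comp_hasDerivAt_of_eq 0 h1 (by simp)
  have hφle : ∀ x : X, |φ x| ≤ ‖x‖ := by
    intro x
    have hslope := hasDerivAt_iff_tendsto_slope.1 (hDx x)
    refine le_of_tendsto hslope.abs ?_
    filter_upwards [self_mem_nhdsWithin] with t ht
    have ht0 : t ≠ 0 := ht
    rw [slope_def_field, abs_div, div_le_iff₀ (by simpa [abs_pos] using ht0)]
    have h2 : |‖(a - b) + t • x‖ - ‖(a - b) + (0:ℝ) • x‖| ≤ ‖t • x‖ := by
      have := abs_norm_sub_norm_le ((a - b) + t • x) ((a - b) + (0:ℝ) • x)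
      simpa using this
    calc |‖(a - b) + t • x‖ - ‖(a - b) + (0:ℝ) • x‖| ≤ ‖t • x‖ := h2
      _ = ‖x‖ * |t - 0| := by rw [norm_smul, Real.norm_eq_abs, sub_zero, mul_comm]
  have hφab : φ (a - b) = R := by
    have h2 : HasDerivAt (fun t : ℝ => ‖(a - b) + t • (a - b)‖) R 0 := by
      have h3 : HasDerivAt (fun t : ℝ => R + t * R) R 0 := by
        simpa using ((hasDerivAt_id (0 : ℝ)).mul_const R).const_add R
      refine h3.congr_of_eventuallyEq ?_
      filter_upwards [Metric.ball_mem_nhds (0 : ℝ) one_pos] with t ht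
      have ht1 : |t| < 1 := by simpa [Real.dist_eq] using ht
      have he : (a - b) + t • (a - b) = (1 + t) • (a - b) := by module
      rw [he, norm_smul, Real.norm_eq_abs, abs_of_pos (by cases abs_lt.1 ht1; linarith)]
      ring
    exact ((hDx (a - b)).unique h2)
  have hφu : φ u = 1 := by
    rw [hu, map_smul, smul_eq_mul, hφab, inv_mul_cancel₀ (ne_of_gt hRpos)]
  -- one-sided derivatives of the distance function, and their equality
  have hchainp : HasDerivWithinAt (fun t : ℝ => ‖γ t - b‖) (φ dp) (Set.Ici 0) 0 := by
    have h1 : HasDerivWithinAt (fun t : ℝ => γ t - b) dp (Set.Ici 0) 0 := hdpd.sub_const b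
    exact hNd.comp_hasDerivWithinAt_of_eq 0 h1 (by simp [hγ0])
  have hchainm : HasDerivWithinAt (fun t : ℝ => ‖γ t - b‖) (φ dm) (Set.Iic 0) 0 := by
    have h1 : HasDerivWithinAt (fun t : ℝ => γ t - b) dm (Set.Iic 0) 0 := hdmd.sub_const b
    exact hNd.comp_hasDerivWithinAt_of_eq 0 h1 (by simp [hγ0])
  have hUIci : UniqueDiffWithinAt ℝ (Set.Ici (0:ℝ)) 0 := uniqueDiffOn_Ici 0 0 Set.self_mem_Ici
  have hUIic : UniqueDiffWithinAt ℝ (Set.Iic (0:ℝ)) 0 := uniqueDiffOn_Iic 0 0 Set.self_mem_Iic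
  have hc : φ dp = φ dm := by
    have e1 := hchainp.derivWithin hUIci
    have e2 := (hf.hasDerivAt.hasDerivWithinAt (s := Set.Ici 0)).derivWithin hUIci
    have e3 := hchainm.derivWithin hUIic
    have e4 := (hf.hasDerivAt.hasDerivWithinAt (s := Set.Iic 0)).derivWithin hUIic
    rw [← e1, e2, ← e4, e3]
  set c := φ dp with hcdef
  have hcm : φ dm = c := hc.symm
  -- strict convexity: |c| < 1
  have hclt : |c| < 1 := by
    have hsum : ‖dp + dm‖ < 2 := by
      have hnsr : ¬ SameRay ℝ dp dm := fun h => hne (h.eq_of_norm_eq (hdp1.trans hdm1.symm))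
      have := norm_add_lt_of_not_sameRay hnsr
      rw [hdp1, hdm1] at this; linarith
    have h2 : |φ (dp + dm)| = 2 * |c| := by
      rw [map_add, ← hcdef, hcm, show c + c = 2 * c by ring, abs_mul]
      norm_num
    have := hφle (dp + dm)
    rw [h2] at this
    linarith
  -- a dual basis adapted to `u` and `w = dp - dm`
  set w := dp - dm with hwdef
  have hwne : w ≠ 0 := sub_ne_zero.2 hne
  have hφw : φ w = 0 := by rw [hwdef, map_sub, ← hcdef, hcm, sub_self]
  have hFD : FiniteDimensional ℝ X := .of_finrank_pos (by rw [hdim]; norm_num)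
  have hli : LinearIndependent ℝ ![u, w] := by
    rw [linearIndependent_fin2]
    refine ⟨by simpa using hwne, ?_⟩
    intro r hr
    simp only [Matrix.cons_val_one, Matrix.head_cons, Matrix.cons_val_zero] at hr
    have : φ (r • w) = φ u := by rw [hr]
    rw [map_smul, hφw, hφu, smul_eq_mul, mul_zero] at this
    exact zero_ne_one this
  obtain ⟨ω, hωu, hωw, hrep⟩ :
      ∃ ω : X →L[ℝ] ℝ, ω u = 0 ∧ ω w = 1 ∧ ∀ x : X, x = φ x • u + ω x • w := by
    let B : Module.Basis (Fin 2) ℝ X := basisOfLinearIndependentOfCardEqFinrank hli (by simp [hdim])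
    have hB : ⇑B = ![u, w] := coe_basisOfLinearIndependentOfCardEqFinrank hli _
    have hB0 : B 0 = u := by rw [hB]; simp
    have hB1 : B 1 = w := by rw [hB]; simp
    refine ⟨LinearMap.toContinuousLinearMap (B.coord 1), ?_, ?_, ?_⟩
    · rw [show u = B 0 from hB0.symm]
      simp [Module.Basis.coord_apply]
    · rw [show w = B 1 from hB1.symm]
      simp [Module.Basis.coord_apply]
    · intro x
      have e0 : B.coord 0 (B 0) = 1 := by simp [Module.Basis.coord_apply]
      have e1 : B.coord 0 (B 1) = 0 := by simp [Module.Basis.coord_apply]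
      have hcoordeq : (B.coord 0) = (φ : X →ₗ[ℝ] ℝ) := by
        refine B.ext fun i => ?_
        fin_cases i
        · show (B.coord 0) (B 0) = φ (B 0)
          rw [e0, hB0, hφu]
        · show (B.coord 0) (B 1) = φ (B 1)
          rw [e1, hB1, hφw]
      have h := B.sum_repr x
      rw [Fin.sum_univ_two, hB0, hB1] at h
      have h0 : B.repr x 0 = φ x := by
        have := LinearMap.congr_fun hcoordeq x
        simpa [Module.Basis.coord_apply] using this
      have hω : (LinearMap.toContinuousLinearMap (B.coord 1)) x = B.repr x 1 := by
        simp [Module.Basis.coord_apply]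
      rw [hω, ← h0]
      exact h.symm
  have hm : ω dm = ω dp - 1 := by
    have h1 : ω w = ω dp - ω dm := by rw [hwdef, map_sub]
    rw [hωw] at h1
    linarith
  -- the coefficients of `dp` and `dm` along `w` have opposite signs
  have key : ∀ (v x y : X) (t : ℝ), 0 ≤ t → x = c • u + t • v → y = c • u + (t + 1) • v →
      ‖x‖ = 1 → ‖y‖ = 1 → False := by
    intro v x y t ht hx hy hx1 hy1
    have h1t : (0:ℝ) < 1 + t := by linarith
    have hxc : (1 + t) • x = c • u + t • y := by rw [hx, hy]; module
    have hbnd : ‖(1 + t) • x‖ ≤ ‖c • u‖ + ‖t • y‖ := by rw [hxc]; exact norm_add_le _ _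
    have e1 : ‖(1 + t) • x‖ = (1 + t) * 1 := by
      rw [norm_smul, hx1, Real.norm_eq_abs, abs_of_pos h1t]
    have e2 : ‖c • u‖ = |c| := by rw [norm_smul, hunorm, Real.norm_eq_abs, mul_one]
    have e3 : ‖t • y‖ = t * 1 := by
      rw [norm_smul, hy1, Real.norm_eq_abs, abs_of_nonneg ht]
    rw [e1, e2, e3] at hbnd
    simp only [mul_one] at hbnd
    linarith [hclt]
  have hrdp : dp = c • u + ω dp • w := by
    have := hrep dp; rwa [← hcdef] at this
  have hrdm : dm = c • u + ω dm • w := by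
    have := hrep dm; rwa [hcm] at this
  have hmneg : ω dm < 0 := by
    by_contra hcon
    push_neg at hcon
    refine key w dm dp (ω dm) hcon hrdm ?_ hdm1 hdp1
    have hm' : ω dp = ω dm + 1 := by linarith
    rw [← hm']
    exact hrdp
  have hppos : 0 < ω dp := by
    by_contra hcon
    push_neg at hcon
    refine key (-w) dp dm (-(ω dp)) (by linarith) ?_ ?_ hdp1 hdm1
    · have h2 : (-(ω dp)) • (-w) = ω dp • w := by module
      rw [h2]
      exact hrdp
    · have h2 : (-(ω dp) + 1) • (-w) = ω dm • w := by rw [hm]; module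
      rw [h2]
      exact hrdm
  clear_value c
  clear hf hNab hNd hDx hφle hφab hchainp hchainm hUIci hUIic hc hcm hdn hφu hφw hclt hφdef hu hRdef hwdef
  clear_value φ R u w
  -- geometric part: contradiction with convexity
  -- one-sided strict increase of ω ∘ γ away from 0
  have hgp : HasDerivWithinAt (fun t => ω (γ t)) (ω dp) (Set.Ici 0) 0 :=
    ω.hasFDerivAt.comp_hasDerivWithinAt 0 hdpd
  have hgm : HasDerivWithinAt (fun t => ω (γ t)) (ω dm) (Set.Iic 0) 0 :=
    ω.hasFDerivAt.comp_hasDerivWithinAt 0 hdmd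
  have hIoi : Set.Ici (0:ℝ) \ {0} = Set.Ioi 0 := by
    ext t
    simp only [Set.mem_diff, Set.mem_Ici, Set.mem_singleton_iff, Set.mem_Ioi]
    constructor
    · rintro ⟨h1, h2⟩; exact lt_of_le_of_ne h1 (Ne.symm h2)
    · intro h; exact ⟨le_of_lt h, ne_of_gt h⟩
  have hIio : Set.Iic (0:ℝ) \ {0} = Set.Iio 0 := by
    ext t
    simp only [Set.mem_diff, Set.mem_Iic, Set.mem_singleton_iff, Set.mem_Iio]
    constructor
    · rintro ⟨h1, h2⟩; exact lt_of_le_of_ne h1 h2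
    · intro h; exact ⟨le_of_lt h, ne_of_lt h⟩
  have hposR : ∀ᶠ t in nhdsWithin 0 (Set.Ioi 0), ω a < ω (γ t) := by
    have hs := hasDerivWithinAt_iff_tendsto_slope.1 hgp
    rw [hIoi] at hs
    filter_upwards [hs.eventually (eventually_gt_nhds hppos), self_mem_nhdsWithin] with t hsl ht
    rw [slope_def_field, sub_zero] at hsl
    have ht0 : (0:ℝ) < t := ht
    have hnum : 0 < ω (γ t) - ω (γ 0) := by
      rcases div_pos_iff.1 hsl with ⟨h1, _⟩ | ⟨_, h2⟩
      · exact h1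
      · linarith
    rw [hγ0] at hnum; linarith
  have hposL : ∀ᶠ t in nhdsWithin 0 (Set.Iio 0), ω a < ω (γ t) := by
    have hs := hasDerivWithinAt_iff_tendsto_slope.1 hgm
    rw [hIio] at hs
    filter_upwards [hs.eventually (eventually_lt_nhds hmneg), self_mem_nhdsWithin] with t hsl ht
    rw [slope_def_field, sub_zero] at hsl
    have ht0 : t < (0:ℝ) := ht
    have hnum : 0 < ω (γ t) - ω (γ 0) := by
      rcases div_neg_iff.1 hsl with ⟨_, h2⟩ | ⟨h1, _⟩
      · linarith
      · linarith
    rw [hγ0] at hnum; linarith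
  obtain ⟨ε₁, hε₁pos, hε₁⟩ := Metric.mem_nhdsWithin_iff.1 hposR
  obtain ⟨ε₂, hε₂pos, hε₂⟩ := Metric.mem_nhdsWithin_iff.1 hposL
  set ε := min ε₁ ε₂ with hεdef
  have hεpos : 0 < ε := lt_min hε₁pos hε₂pos
  have hε : ∀ t : ℝ, |t| < ε → t ≠ 0 → ω a < ω (γ t) := by
    intro t htε ht0
    rcases ht0.lt_or_gt with h | h
    · exact hε₂ ⟨by simpa [Real.dist_eq] using lt_of_lt_of_le htε (min_le_right _ _), h⟩
    · exact hε₁ ⟨by simpa [Real.dist_eq] using lt_of_lt_of_le htε (min_le_left _ _), h⟩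
  -- local identification of the frontier with the curve near a
  set A : Set ℝ := Set.Icc (-(L/2)) (L/2) ∩ {t | ε ≤ |t|} with hAdef
  have hAcomp : IsCompact A :=
    isCompact_Icc.inter_right ((isClosed_Ici.preimage continuous_abs))
  have haA : a ∉ γ '' A := by
    rintro ⟨t, ⟨⟨ht1, ht2⟩, ht3⟩, ht4⟩
    have htne : t ≠ 0 := by
      intro h; rw [h] at ht3; simp only [Set.mem_setOf_eq, abs_zero] at ht3; linarith
    rcases htne.lt_or_gt with h | h
    · have h5 : γ (t + L) = γ 0 := by rw [hper t, ht4, hγ0]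
      have hmem : t + L ∈ Set.Ico 0 L := ⟨by linarith, by linarith⟩
      have := hinj hmem ⟨le_refl 0, hL⟩ h5
      linarith
    · have h5 : γ t = γ 0 := by rw [ht4, hγ0]
      have hmem : t ∈ Set.Ico 0 L := ⟨le_of_lt h, by linarith⟩
      have := hinj hmem ⟨le_refl 0, hL⟩ h5
      linarith
  obtain ⟨ρ, hρpos, hρ⟩ : ∃ ρ > 0, Metric.ball a ρ ⊆ (γ '' A)ᶜ := by
    have : IsOpen (γ '' A)ᶜ := (hAcomp.image hγcont).isClosed.isOpen_compl
    exact Metric.isOpen_iff.1 this a haA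
  have hstar : ∀ x : X, x ∈ frontier K → dist x a < ρ → x ≠ a → ω a < ω x := by
    intro x hx hd hxa
    have hxC : x ∈ Set.range γ := by rw [hrange, hCfr]; exact hx
    obtain ⟨s, hs⟩ := hxC
    obtain ⟨y, hy, hyx⟩ := hper.exists_mem_Ico hL s (-(L/2))
    have hyy : γ y = x := by rw [← hyx, hs]
    have hyIcc : y ∈ Set.Icc (-(L/2)) (L/2) := ⟨hy.1, by have := hy.2; linarith⟩
    have hyε : |y| < ε := by
      by_contra hcon
      have himg : x ∈ γ '' A := ⟨y, ⟨hyIcc, le_of_not_gt hcon⟩, hyy⟩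
      exact hρ (Metric.mem_ball.2 hd) himg
    have hy0 : y ≠ 0 := by
      intro h; rw [h, hγ0] at hyy; exact hxa hyy.symm
    have := hε y hyε hy0
    rwa [hyy] at this
  -- the segment [b, a] lies in K
  have hbau : b = a - R • u := by rw [← haburu]; abel
  have hsegab : ∀ r : ℝ, 0 ≤ r → r ≤ R → a - r • u ∈ K := by
    intro r h0 hr
    have hc : a - r • u = (1 - r / R) • a + (r / R) • b := by
      rw [hbau]; match_scalars <;> field_simp <;> ring
    rw [hc]
    refine hKconv haK hbK ?_ (by positivity) (by ring)
    rw [sub_nonneg]; exact div_le_one_of_le₀ hr (le_of_lt hRpos)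
  set r₀ := min ρ R / 2 with hr₀def
  have hr₀pos : 0 < r₀ := by have := lt_min hρpos hRpos; positivity
  have hr₀R : r₀ ≤ R := by
    have : min ρ R ≤ R := min_le_right _ _
    have : r₀ ≤ R / 2 := by rw [hr₀def]; linarith
    linarith
  have hr₀ρ : r₀ ≤ ρ / 2 := by
    have : min ρ R ≤ ρ := min_le_left _ _
    rw [hr₀def]; linarith
  have hqK : a - r₀ • u ∈ K := hsegab r₀ (le_of_lt hr₀pos) hr₀R
  have hqne : a - r₀ • u ≠ a := by
    intro h
    have : r₀ • u = 0 := by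
      have := sub_eq_iff_eq_add.1 h
      have h2 : a = a + r₀ • u := by nth_rewrite 1 [← this]; abel
      have := (left_eq_add.1 h2)
      exact this
    exact (smul_ne_zero (ne_of_gt hr₀pos) hune) this
  have hωq : ω (a - r₀ • u) = ω a := by
    rw [map_sub, map_smul, hωu, smul_eq_mul, mul_zero, sub_zero]
  have hdistq : ∀ (σ : ℝ) (v : X), ‖a + σ • u + v - a‖ ≤ |σ| + ‖v‖ := by
    intro σ v
    have h1 : a + σ • u + v - a = σ • u + v := by abel
    rw [h1]
    calc ‖σ • u + v‖ ≤ ‖σ • u‖ + ‖v‖ := norm_add_le _ _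
      _ = |σ| + ‖v‖ := by rw [norm_smul, Real.norm_eq_abs, hunorm, mul_one]
  have hqint : a - r₀ • u ∈ interior K := by
    by_contra h
    have hqfr : a - r₀ • u ∈ frontier K := by rw [hfr]; exact ⟨hqK, h⟩
    have hd : dist (a - r₀ • u) a < ρ := by
      rw [dist_eq_norm]
      have h2 : a - r₀ • u - a = -(r₀ • u) := by abel
      rw [h2, norm_neg, norm_smul, Real.norm_eq_abs, abs_of_pos hr₀pos, hunorm, mul_one]
      linarith
    have := hstar _ hqfr hd hqne
    rw [hωq] at this
    exact lt_irrefl _ this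
  by_cases hyK : a + r₀ • u ∈ K
  · -- a is a strict convex combination of an interior point and a point of K
    have hcombo : a = (1/2 : ℝ) • (a - r₀ • u) + (1/2 : ℝ) • (a + r₀ • u) := by module
    have : a ∈ interior K := by
      have h2 := hKconv.combo_interior_closure_mem_interior hqint
        (subset_closure hyK) one_half_pos (le_of_lt one_half_pos) (by norm_num)
      rwa [← hcombo] at h2
    exact hanotint this
  · obtain ⟨κ₁, hκ₁pos, hκ₁⟩ : ∃ κ > 0, Metric.ball (a - r₀ • u) κ ⊆ K := by
      obtain ⟨κ, hκpos, hκ⟩ := Metric.isOpen_iff.1 isOpen_interior _ hqint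
      exact ⟨κ, hκpos, fun z hz => interior_subset (hκ hz)⟩
    obtain ⟨κ₂, hκ₂pos, hκ₂⟩ : ∃ κ > 0, Metric.ball (a + r₀ • u) κ ⊆ Kᶜ :=
      Metric.isOpen_iff.1 hKcl.isOpen_compl _ hyK
    set s := min (min κ₁ κ₂) (ρ/2) / (2 * (‖w‖ + 1)) with hsdef
    have hnw : (0:ℝ) < ‖w‖ + 1 := by positivity
    have hspos : 0 < s := by
      have h1 : 0 < min (min κ₁ κ₂) (ρ/2) := lt_min (lt_min hκ₁pos hκ₂pos) (by linarith)
      positivity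
    have hsw : s * ‖w‖ < min (min κ₁ κ₂) (ρ/2) := by
      have h1 : 0 < min (min κ₁ κ₂) (ρ/2) := lt_min (lt_min hκ₁pos hκ₂pos) (by linarith)
      rw [hsdef]
      rw [div_mul_eq_mul_div, div_lt_iff₀ (by positivity)]
      nlinarith [norm_nonneg w]
    have hswκ₁ : s * ‖w‖ < κ₁ := lt_of_lt_of_le hsw (le_trans (min_le_left _ _) (min_le_left _ _))
    have hswκ₂ : s * ‖w‖ < κ₂ := lt_of_lt_of_le hsw (le_trans (min_le_left _ _) (min_le_right _ _))
    have hswρ : s * ‖w‖ < ρ/2 := lt_of_lt_of_le hsw (min_le_right _ _)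
    set q' := a - r₀ • u - s • w with hq'def
    set y' := a + r₀ • u - s • w with hy'def
    have hq'K : q' ∈ K := by
      apply hκ₁
      rw [Metric.mem_ball, dist_eq_norm]
      have : q' - (a - r₀ • u) = -(s • w) := by rw [hq'def]; abel
      rw [this, norm_neg, norm_smul, Real.norm_eq_abs, abs_of_pos hspos]
      linarith
    have hy'K : y' ∉ K := by
      intro hcon
      have hmem : y' ∈ Metric.ball (a + r₀ • u) κ₂ := by
        rw [Metric.mem_ball, dist_eq_norm]
        have : y' - (a + r₀ • u) = -(s • w) := by rw [hy'def]; abel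
        rw [this, norm_neg, norm_smul, Real.norm_eq_abs, abs_of_pos hspos]
        linarith
      exact hκ₂ hmem hcon
    obtain ⟨z, hzseg, hzfr⟩ := segment_crosses_frontier hKcl hq'K hy'K
    obtain ⟨α, β, hα, hβ, hαβ, hz⟩ := hzseg
    have hωz : ω z = ω a - s := by
      have h1 : ω q' = ω a - s := by
        rw [hq'def]; rw [map_sub, map_sub, map_smul, map_smul, hωu, hωw]
        simp
      have h2 : ω y' = ω a - s := by
        rw [hy'def]; rw [map_sub, map_add, map_smul, map_smul, hωu, hωw]
        simp
      rw [← hz, map_add, map_smul, map_smul, h1, h2, smul_eq_mul, smul_eq_mul]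
      linear_combination (ω a - s) * hαβ
    have hzd : dist z a < ρ := by
      rw [dist_eq_norm]
      have h3 : z - a = α • (q' - a) + β • (y' - a) := by
        rw [← hz]
        have : α • q' + β • y' - a = α • (q' - a) + β • (y' - a) + ((α + β) - 1) • a := by
          module
        rw [this, hαβ, sub_self, zero_smul, add_zero]
      have h4 : ‖q' - a‖ ≤ r₀ + s * ‖w‖ := by
        have : q' - a = -(r₀ • u) + -(s • w) := by rw [hq'def]; abel
        rw [this]
        calc ‖-(r₀ • u) + -(s • w)‖ ≤ ‖-(r₀ • u)‖ + ‖-(s • w)‖ := norm_add_le _ _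
          _ = r₀ + s * ‖w‖ := by
            rw [norm_neg, norm_neg, norm_smul, norm_smul, Real.norm_eq_abs, Real.norm_eq_abs,
              abs_of_pos hr₀pos, abs_of_pos hspos, hunorm, mul_one]
      have h5 : ‖y' - a‖ ≤ r₀ + s * ‖w‖ := by
        have : y' - a = r₀ • u + -(s • w) := by rw [hy'def]; abel
        rw [this]
        calc ‖r₀ • u + -(s • w)‖ ≤ ‖r₀ • u‖ + ‖-(s • w)‖ := norm_add_le _ _
          _ = r₀ + s * ‖w‖ := by
            rw [norm_neg, norm_smul, norm_smul, Real.norm_eq_abs, Real.norm_eq_abs,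
              abs_of_pos hr₀pos, abs_of_pos hspos, hunorm, mul_one]
      calc ‖z - a‖ = ‖α • (q' - a) + β • (y' - a)‖ := by rw [h3]
        _ ≤ ‖α • (q' - a)‖ + ‖β • (y' - a)‖ := norm_add_le _ _
        _ = α * ‖q' - a‖ + β * ‖y' - a‖ := by
            rw [norm_smul, norm_smul, Real.norm_eq_abs, Real.norm_eq_abs,
              abs_of_nonneg hα, abs_of_nonneg hβ]
        _ ≤ α * (r₀ + s * ‖w‖) + β * (r₀ + s * ‖w‖) := by
            have := mul_le_mul_of_nonneg_left h4 hα
            have := mul_le_mul_of_nonneg_left h5 hβ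
            linarith
        _ = r₀ + s * ‖w‖ := by rw [← add_mul, hαβ, one_mul]
        _ < ρ := by linarith
    have hzne : z ≠ a := by
      intro h
      rw [h] at hωz
      linarith
    have := hstar z hzfr hzd hzne
    rw [hωz] at this
    linarith
end
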